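/- arXiv:2008.10260 — 11 statements merged into one kernel-verified Lean document; each statement's English description precedes it below -/
import Mathlib

section
/- Let X be a graph and κ an infinite cardinal. Then col(X) ≤ κ if and only if there is a function f : V(X) → [V(X)]^{<κ} such that whenever x and y are adjacent, either x ∈ f(y) or y ∈ f(x). -/
open Cardinal

/-- A good coloring of a graph: adjacent vertices get distinct colors. -/
def IsGoodColoring {V : Type} {C : Type} (G : SimpleGraph V) (f : V → C) : Prop :=
  ∀ ⦃x y : V⦄, G.Adj x y → f x ≠ f y

/-- `G` is `κ`-list-colorable: every assignment of lists of size `κ`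
admits a good coloring choosing from the lists. -/
def ListColorable {V : Type} (G : SimpleGraph V) (κ : Cardinal) : Prop :=
  ∀ (C : Type) (F : V → Set C), (∀ x, #(F x) = κ) →
    ∃ f : V → C, IsGoodColoring G f ∧ ∀ x, f x ∈ F x

/-- The list-chromatic number of `G`: the least cardinal `κ` such that every
`κ`-assignment admits a good coloring from the lists. -/
noncomputable def listChromatic {V : Type} (G : SimpleGraph V) : Cardinal :=
  sInf {κ : Cardinal | ListColorable G κ}

/-- The coloring number of `G`: the least cardinal `κ` such that there is a
well-ordering of the vertices in which every vertex has fewer than `κ`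
neighbors preceding it. -/
noncomputable def colNum {V : Type} (G : SimpleGraph V) : Cardinal :=
  sInf {κ : Cardinal | ∃ r : V → V → Prop, IsWellOrder V r ∧
    ∀ x : V, #{y : V | G.Adj x y ∧ r y x} < κ}



private def EHg {V : Type} (f : V → Set V) (S : Set V) : Set V := S ∪ ⋃ y ∈ S, f y

private def EHC {V : Type} (f : V → Set V) (v : V) : Set V := ⋃ n, (EHg f)^[n] {v}

private theorem mem_EHC_self {V : Type} (f : V → Set V) (v : V) : v ∈ EHC f v :=
  Set.mem_iUnion.mpr ⟨0, rfl⟩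

private theorem EHC_closed {V : Type} (f : V → Set V) (v : V) {y : V} (hy : y ∈ EHC f v) :
    f y ⊆ EHC f v := by
  obtain ⟨n, hn⟩ := Set.mem_iUnion.mp hy
  intro z hz
  exact Set.mem_iUnion.mpr ⟨n + 1, by
    rw [Function.iterate_succ_apply']
    exact Or.inr (Set.mem_iUnion.mpr ⟨y, Set.mem_iUnion.mpr ⟨hn, hz⟩⟩)⟩

private theorem EHC_card {V : Type} (f : V → Set V) {κ : Cardinal} (hκ : ℵ₀ ≤ κ)
    (hf : ∀ x, #(f x) ≤ κ) (v : V) : #(EHC f v) ≤ κ := by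
  have hstep : ∀ S : Set V, #S ≤ κ → #(EHg f S) ≤ κ := by
    intro S hS
    have h1 : #(⋃ y ∈ S, f y) ≤ #S * ⨆ y : S, #(f y) := Cardinal.mk_biUnion_le f S
    have h2 : (⨆ y : S, #(f y)) ≤ κ := ciSup_le' fun y => hf y
    calc #(EHg f S) ≤ #S + #(⋃ y ∈ S, f y) := Cardinal.mk_union_le _ _
      _ ≤ κ + κ * κ := add_le_add hS (h1.trans (mul_le_mul' hS h2))
      _ = κ := by rw [Cardinal.mul_eq_self hκ, Cardinal.add_eq_self hκ]
  have hiter : ∀ n, #((EHg f)^[n] {v} : Set V) ≤ κ := by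
    intro n
    induction n with
    | zero => simpa using (Cardinal.one_le_aleph0.trans hκ)
    | succ n ih => rw [Function.iterate_succ_apply']; exact hstep _ ih
  calc #(EHC f v) ≤ #ℕ * ⨆ n, #((EHg f)^[n] {v} : Set V) := Cardinal.mk_iUnion_le _
    _ ≤ κ * κ := mul_le_mul' (by simpa using hκ) (ciSup_le' hiter)
    _ = κ := Cardinal.mul_eq_self hκ

private theorem EH_main {V : Type} (G : SimpleGraph V) (κ : Cardinal) (hκ : ℵ₀ ≤ κ)
    (f : V → Set V) (hcard : ∀ x, #(f x) < κ)
    (hcov : ∀ x y, G.Adj x y → x ∈ f y ∨ y ∈ f x) :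
    ∃ r : V → V → Prop, IsWellOrder V r ∧ ∀ x : V, #{y : V | G.Adj x y ∧ r y x} < κ := by
  classical
  set wo : V → V → Prop := WellOrderingRel with hwo
  have wwf : WellFounded wo := (WellOrderingRel.isWellOrder (α := V)).toIsWellFounded.wf
  -- the minimal generator of x
  have hne : ∀ x : V, {v : V | x ∈ EHC f v}.Nonempty := fun x => ⟨x, mem_EHC_self f x⟩
  set w : V → V := fun x => wwf.min {v : V | x ∈ EHC f v} (hne x) with hwdef
  have hw : ∀ x, x ∈ EHC f (w x) := fun x => wwf.min_mem _ (hne x)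
  have hwmin : ∀ x u, x ∈ EHC f u → ¬ wo u (w x) := fun x u hu => wwf.not_lt_min {v : V | x ∈ EHC f v} hu
  -- the type K of size κ
  have hKcard : #(κ.ord.ToType) = κ := mk_ord_toType κ
  have hKne : Nonempty κ.ord.ToType := Cardinal.mk_ne_zero_iff.mp (by rw [hKcard]; exact (aleph0_pos.trans_le hκ).ne')
  -- injections of the closure sets into K
  have hemb : ∀ v : V, ∃ g : V → κ.ord.ToType, Set.InjOn g (EHC f v) := by
    intro v
    have h1 : #(EHC f v) ≤ #(κ.ord.ToType) := by
      rw [hKcard]; exact EHC_card f hκ (fun x => (hcard x).le) v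
    obtain ⟨e⟩ := Cardinal.le_def _ _ |>.mp h1
    refine ⟨fun x => if h : x ∈ EHC f v then e ⟨x, h⟩ else Classical.arbitrary κ.ord.ToType, ?_⟩
    intro a ha b hb hab
    simp only [dif_pos ha, dif_pos hb] at hab
    exact congrArg Subtype.val (e.injective hab)
  choose emb hembInj using hemb
  set ι : V → κ.ord.ToType := fun x => emb (w x) x with hι
  have hιinj : ∀ x y, w x = w y → ι x = ι y → x = y := by
    intro x y hwe hie
    have hie' : emb (w x) x = emb (w y) y := hie
    refine hembInj (w x) (hw x) (by rw [hwe]; exact hw y) ?_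
    rw [hwe] at hie' ⊢
    exact hie'
  -- the ordinal encoding
  set θ : V → Ordinal := fun x =>
    κ.ord * Ordinal.typein wo (w x) + @Ordinal.typein κ.ord.ToType (· < ·) isWellOrder_lt (ι x) with hθ
  have hι_lt : ∀ x, @Ordinal.typein κ.ord.ToType (· < ·) isWellOrder_lt (ι x) < κ.ord :=
    fun x => Ordinal.typein_lt_self (ι x)
  have hcomp : ∀ x y : V, wo (w x) (w y) → θ x < θ y := by
    intro x y h
    calc θ x < κ.ord * Ordinal.typein wo (w x) + κ.ord := add_lt_add_right (hι_lt x) _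
      _ = κ.ord * Order.succ (Ordinal.typein wo (w x)) := (Ordinal.mul_succ _ _).symm
      _ ≤ κ.ord * Ordinal.typein wo (w y) :=
          mul_le_mul_right (Order.succ_le_iff.mpr ((Ordinal.typein_lt_typein wo).mpr h)) _
      _ ≤ θ y := le_self_add
  have key : ∀ x y : V, θ y < θ x → wo (w y) (w x) ∨ (w y = w x ∧ ι y < ι x) := by
    intro x y hlt
    rcases trichotomous_of wo (w y) (w x) with h | h | h
    · exact Or.inl h
    · refine Or.inr ⟨h, ?_⟩
      rw [hθ] at hlt
      simp only [h] at hlt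
      exact (@Ordinal.typein_lt_typein κ.ord.ToType (· < ·) isWellOrder_lt _ _).mp (lt_of_add_lt_add_left hlt)
    · exact absurd hlt (hcomp x y h).asymm
  have θinj : Function.Injective θ := by
    intro x y h
    rcases trichotomous_of wo (w x) (w y) with hr | hr | hr
    · exact absurd h (hcomp x y hr).ne
    · refine hιinj x y hr ?_
      rw [hθ] at h
      simp only [hr] at h
      have h2 : @Ordinal.typein κ.ord.ToType (· < ·) isWellOrder_lt (ι x)
          = @Ordinal.typein κ.ord.ToType (· < ·) isWellOrder_lt (ι y) :=
        (add_right_inj _).mp h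
      exact (@Ordinal.typein_inj κ.ord.ToType (· < ·) isWellOrder_lt _ _).mp h2
    · exact absurd h.symm (hcomp y x hr).ne
  refine ⟨fun x y => θ x < θ y,
    { trichotomous := fun a b => by
        rcases lt_trichotomy (θ a) (θ b) with h | h | h
        exacts [fun h1 _ => absurd h h1, fun _ _ => θinj h, fun _ h2 => absurd h h2]
      wf := InvImage.wf θ Ordinal.lt_wf }, ?_⟩
  · intro x
    have hsub : {y : V | G.Adj x y ∧ θ y < θ x} ⊆
        f x ∪ {y : V | w y = w x ∧ ι y < ι x} := by
      rintro y ⟨hadj, hlt⟩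
      rcases key x y hlt with h | h
      · left
        rcases hcov x y hadj with hx | hy
        · exact absurd (hwmin x (w y) (EHC_closed f (w y) (hw y) hx)) (not_not.mpr h)
        · exact hy
      · exact Or.inr h
    have hT : #{y : V | w y = w x ∧ ι y < ι x} < κ := by
      have hinj2 : Function.Injective
          (fun y : {y : V | w y = w x ∧ ι y < ι x} => (⟨ι y.1, y.2.2⟩ : Set.Iio (ι x))) := by
        rintro ⟨a, ha⟩ ⟨b, hb⟩ hab
        have : ι a = ι b := congrArg Subtype.val hab
        exact Subtype.ext (hιinj a b (ha.1.trans hb.1.symm) this)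
      calc #{y : V | w y = w x ∧ ι y < ι x} ≤ #(Set.Iio (ι x)) := Cardinal.mk_le_of_injective hinj2
        _ < κ := Cardinal.mk_Iio_ord_toType (ι x)
    calc #{y : V | G.Adj x y ∧ θ y < θ x} ≤ #(f x ∪ {y : V | w y = w x ∧ ι y < ι x} : Set V) :=
          Cardinal.mk_le_mk_of_subset hsub
      _ ≤ #(f x) + #{y : V | w y = w x ∧ ι y < ι x} := Cardinal.mk_union_le _ _
      _ < κ := Cardinal.add_lt_of_lt hκ (hcard x) hT


/-- Erdős–Hajnal criterion: `col(X) ≤ κ` iff there is `f : V → [V]^{<κ}` such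
that adjacent `x, y` satisfy `x ∈ f y` or `y ∈ f x`. -/
theorem colNum_le_iff {V : Type} (G : SimpleGraph V) (κ : Cardinal) (hκ : ℵ₀ ≤ κ) :
    colNum G ≤ κ ↔
      ∃ f : V → Set V, (∀ x, #(f x) < κ) ∧
        ∀ x y, G.Adj x y → x ∈ f y ∨ y ∈ f x := by

  constructor
  · intro hcol
    have hne : {κ' : Cardinal | ∃ r : V → V → Prop, IsWellOrder V r ∧
        ∀ x : V, #{y : V | G.Adj x y ∧ r y x} < κ'}.Nonempty := by
      refine ⟨Order.succ #V, WellOrderingRel, inferInstance, fun x => ?_⟩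
      exact lt_of_le_of_lt (Cardinal.mk_set_le _) (Order.lt_succ _)
    have hmem : colNum G ∈ {κ' : Cardinal | ∃ r : V → V → Prop, IsWellOrder V r ∧
        ∀ x : V, #{y : V | G.Adj x y ∧ r y x} < κ'} := csInf_mem hne
    obtain ⟨r, hr, hb⟩ := hmem
    refine ⟨fun x => {y | G.Adj x y ∧ r y x}, fun x => lt_of_lt_of_le (hb x) hcol, ?_⟩
    intro x y hadj
    rcases trichotomous_of r x y with h | h | h
    · exact Or.inl ⟨hadj.symm, h⟩
    · exact absurd h hadj.ne
    · exact Or.inr ⟨hadj, h⟩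
  · rintro ⟨f, hcard, hcov⟩
    exact csInf_le' (EH_main G κ hκ f hcard hcov)
end

section
/- The complete bipartite graph K_{ω, 2^ω} (bipartition classes of sizes ℵ₀ and 2^{ℵ₀}) has uncountable list-chromatic number. -/
open Cardinal

/-- `K_{A,B}` with `A` countable is list-colorable from lists of size `ℵ₀⁺`. -/
lemma aux_colorable_succ {A B : Type} (hA : #A = ℵ₀) :
    ListColorable (completeBipartiteGraph A B) (Order.succ ℵ₀) := by
  intro C F hF
  have hne : ∀ x, (F x).Nonempty := by
    intro x
    refine Set.nonempty_coe_sort.1 (Cardinal.mk_ne_zero_iff.1 ?_)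
    rw [hF x]
    exact ne_of_gt (lt_of_le_of_lt zero_le (Order.lt_succ ℵ₀))
  choose g hg using fun a : A => hne (Sum.inl a)
  have hS : ∀ b : B, ∃ c, c ∈ F (Sum.inr b) ∧ c ∉ Set.range g := by
    intro b
    by_contra hcon
    push_neg at hcon
    have hsub : F (Sum.inr b) ⊆ Set.range g := fun c hc => hcon c hc
    have h1 : #(F (Sum.inr b)) ≤ #(Set.range g) := Cardinal.mk_le_mk_of_subset hsub
    have h2 : #(Set.range g) ≤ ℵ₀ := Cardinal.mk_range_le.trans (le_of_eq hA)
    rw [hF] at h1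
    exact absurd (h1.trans h2) (not_le.2 (Order.lt_succ ℵ₀))
  choose g' hg'mem hg'not using hS
  refine ⟨Sum.elim g g', ?_, ?_⟩
  · intro x y hxy
    cases x with
    | inl a =>
      cases y with
      | inl a' => simp at hxy
      | inr b => intro h; exact hg'not b ⟨a, h⟩
    | inr b =>
      cases y with
      | inl a => intro h; exact hg'not b ⟨a, h.symm⟩
      | inr b' => simp at hxy
  · intro x
    cases x with
    | inl a => exact hg a
    | inr b => exact hg'mem b

/-- `K_{ω, 2^ω}` is not list-colorable from lists of any size `κ ≤ ℵ₀`. -/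
lemma aux_not_listColorable {A B : Type} (hA : #A = ℵ₀) (hB : #B = 2 ^ ℵ₀)
    {κ : Cardinal} (hκ : κ ≤ ℵ₀) :
    ¬ ListColorable (completeBipartiteGraph A B) κ := by
  intro hcol
  obtain ⟨T, hT⟩ : ∃ T : Set ℕ, #T = κ :=
    Cardinal.le_mk_iff_exists_set.1 (by rw [Cardinal.mk_nat]; exact hκ)
  have eA : A ≃ ℕ := Classical.choice (Cardinal.eq.1 (hA.trans Cardinal.mk_nat.symm))
  have hfun : #(T → T) ≤ #B := by
    rw [hB, Cardinal.mk_arrow, Cardinal.lift_id, hT]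
    rcases eq_or_ne κ 0 with h0 | h0
    · rw [h0, Cardinal.power_zero]
      exact Cardinal.one_le_iff_ne_zero.2 (Cardinal.power_ne_zero _ two_ne_zero)
    · calc κ ^ κ ≤ κ ^ ℵ₀ := Cardinal.power_le_power_left h0 hκ
        _ ≤ ℵ₀ ^ ℵ₀ := Cardinal.power_le_power_right hκ
        _ = 2 ^ ℵ₀ := Cardinal.power_self_eq le_rfl
  obtain ⟨φ⟩ : Nonempty ((T → T) ↪ B) := Cardinal.le_def _ _ |>.1 hfun
  haveI : Nonempty (T → T) := ⟨id⟩
  set σ : B → (T → T) := Function.invFun φ with hσdef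
  have hσ : Function.Surjective σ := Function.invFun_surjective φ.injective
  set F : A ⊕ B → Set (ℕ × ℕ) :=
    Sum.elim (fun a => Set.range fun s : T => ((eA a : ℕ), (s : ℕ)))
             (fun b => Set.range fun t : T => ((t : ℕ), (σ b t : ℕ))) with hFdef
  have hcard : ∀ x, #(F x) = κ := by
    intro x
    cases x with
    | inl a =>
      rw [hFdef, Sum.elim_inl, Cardinal.mk_range_eq, hT]
      intro s1 s2 h
      exact Subtype.ext (congrArg Prod.snd h)
    | inr b =>
      rw [hFdef, Sum.elim_inr, Cardinal.mk_range_eq, hT]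
      intro t1 t2 h
      exact Subtype.ext (congrArg Prod.fst h)
  obtain ⟨f, hgood, hmem⟩ := hcol (ℕ × ℕ) F hcard
  have key : ∀ t : T, ∃ s : T, f (Sum.inl (eA.symm t)) = ((t : ℕ), (s : ℕ)) := by
    intro t
    have := hmem (Sum.inl (eA.symm t))
    rw [hFdef, Sum.elim_inl] at this
    obtain ⟨s, hs⟩ := this
    refine ⟨s, ?_⟩
    rw [← hs, Equiv.apply_symm_apply]
  choose h hh using key
  obtain ⟨b, hb⟩ := hσ h
  have hmb := hmem (Sum.inr b)
  rw [hFdef, Sum.elim_inr] at hmb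
  obtain ⟨t, ht⟩ := hmb
  have hadj : (completeBipartiteGraph A B).Adj (Sum.inl (eA.symm t)) (Sum.inr b) := by simp
  exact hgood hadj (by rw [hh t, ← ht, hb])

/-- The complete bipartite graph `K_{ω, 2^ω}` has uncountable list-chromatic
number. -/
theorem listChromatic_completeBipartite_uncountable (A B : Type)
    (hA : #A = ℵ₀) (hB : #B = 2 ^ ℵ₀) :
    ℵ₀ < listChromatic (completeBipartiteGraph A B) := by
  have h1 : Order.succ ℵ₀ ∈ {κ | ListColorable (completeBipartiteGraph A B) κ} :=
    aux_colorable_succ hA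
  have h2 : Order.succ ℵ₀ ≤ listChromatic (completeBipartiteGraph A B) := by
    refine le_csInf ⟨_, h1⟩ ?_
    intro κ hκ
    exact Order.succ_le_of_lt (not_le.1 fun hle => aux_not_listColorable hA hB hle hκ)
  exact lt_of_lt_of_le (Order.lt_succ ℵ₀) h2
end

section
/- If λ < 2^ω, then the complete bipartite graph K_{ω, λ} has countable list-chromatic number. -/
open Cardinal

theorem exists_injective_transversal {C : Type} (S : ℕ → Set C) (h : ∀ n, (S n).Infinite) :
    ∃ e : ℕ → C, Function.Injective e ∧ ∀ n, e n ∈ S n := by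
  classical
  let pick : List C → ℕ → C := fun l n => ((h n).diff l.finite_toSet).nonempty.choose
  have pickSpec : ∀ l n, pick l n ∈ S n \ {x | x ∈ l} := fun l n =>
    ((h n).diff l.finite_toSet).nonempty.choose_spec
  let L : ℕ → List C := fun n => Nat.rec [] (fun k ih => pick ih k :: ih) n
  have hL : ∀ n, L (n + 1) = pick (L n) n :: L n := fun n => rfl
  let e : ℕ → C := fun n => pick (L n) n
  have hmem : ∀ m n, m < n → e m ∈ L n := by
    intro m n hmn
    induction n with
    | zero => omega
    | succ k ih =>
      rw [hL]
      rcases Nat.lt_succ_iff_lt_or_eq.mp hmn with h' | h'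
      · exact List.mem_cons_of_mem _ (ih h')
      · subst h'; exact List.mem_cons_self
  have hnot : ∀ n, e n ∉ L n := fun n => (pickSpec (L n) n).2
  refine ⟨e, ?_, fun n => (pickSpec (L n) n).1⟩
  intro m n hmn
  by_contra hne
  rcases lt_or_gt_of_ne hne with h' | h'
  · exact hnot n (hmn ▸ hmem m n h')
  · exact hnot m (hmn ▸ hmem n m h')


/-- If `λ < 2^ω`, then the complete bipartite graph `K_{ω, λ}` has countable
list-chromatic number. -/
theorem listChromatic_completeBipartite_countable (lam : Cardinal)
    (hlam : lam < 2 ^ ℵ₀) (A B : Type) (hA : #A = ℵ₀) (hB : #B = lam) :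
    listChromatic (completeBipartiteGraph A B) ≤ ℵ₀ := by
  classical
  have hmem : ListColorable (completeBipartiteGraph A B) ℵ₀ := by
    intro C F hF
    -- A ≃ ℕ
    obtain ⟨eA⟩ := Cardinal.eq.mp (hA.trans Cardinal.mk_nat.symm)
    -- enumeration of Σ n, Fin n → Bool
    have hσcard : #(Σ n : ℕ, (Fin n → Bool)) = ℵ₀ := by
      apply le_antisymm (Cardinal.mk_le_aleph0)
      rw [← Cardinal.mk_nat]
      exact Cardinal.mk_le_of_injective (f := fun n => (⟨n, fun _ => true⟩ : Σ n : ℕ, (Fin n → Bool)))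
        (fun a b hab => congrArg Sigma.fst hab)
    obtain ⟨τ⟩ := Cardinal.eq.mp (show #ℕ = #(Σ n : ℕ, (Fin n → Bool)) from Cardinal.mk_nat.trans hσcard.symm)
    -- τ : ℕ ≃ Σ n, Fin n → Bool
    have hinf : ∀ x, (F x).Infinite := by
      intro x
      rw [← Set.infinite_coe_iff]
      exact Cardinal.infinite_iff.mpr (le_of_eq (hF x).symm)
    obtain ⟨e, einj, espec⟩ := exists_injective_transversal
      (fun k => F (Sum.inl (eA.symm (τ k).1))) (fun k => hinf _)
    set E : (Σ n : ℕ, (Fin n → Bool)) → C := fun p => e (τ.symm p) with hE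
    have Einj : Function.Injective E := einj.comp τ.symm.injective
    have Espec : ∀ p : Σ n : ℕ, (Fin n → Bool), E p ∈ F (Sum.inl (eA.symm p.1)) := by
      intro p
      have := espec (τ.symm p)
      rwa [τ.apply_symm_apply] at this
    set R : (ℕ → Bool) → Set C := fun r => Set.range (fun n : ℕ => E ⟨n, fun i => r i⟩) with hR
    -- almost disjointness
    have hAD : ∀ r r' : ℕ → Bool, r ≠ r' → (R r ∩ R r').Finite := by
      intro r r' hne
      obtain ⟨N, hN⟩ := Function.ne_iff.mp hne
      apply Set.Finite.subset ((Set.finite_Iic N).image (fun n : ℕ => E ⟨n, fun i => r i⟩))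
      rintro x ⟨⟨n, hn⟩, ⟨m, hm⟩⟩
      have hsig : (⟨n, fun i => r i⟩ : Σ n : ℕ, (Fin n → Bool)) = ⟨m, fun i => r' i⟩ :=
        Einj (hn.trans hm.symm)
      rw [Sigma.mk.inj_iff] at hsig
      obtain ⟨hnm, hfun⟩ := hsig
      subst hnm
      have hfun' := heq_iff_eq.mp hfun
      have hle : n ≤ N := by
        by_contra hgt
        exact hN (congrFun hfun' ⟨N, by omega⟩)
      exact ⟨n, hle, hn⟩
    -- bad sets
    set Bad : B → Set (ℕ → Bool) := fun b => {r | F (Sum.inr b) ⊆ R r} with hBad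
    have hBadSub : ∀ b, (Bad b).Subsingleton := by
      intro b r hr r' hr'
      by_contra hne
      have hFin : (F (Sum.inr b)).Finite :=
        Set.Finite.subset (hAD r r' hne) (Set.subset_inter hr hr')
      exact (hinf (Sum.inr b)) hFin
    -- there is a good r
    have hgood : ∃ r : ℕ → Bool, ∀ b : B, ¬ (F (Sum.inr b) ⊆ R r) := by
      by_contra hno
      push_neg at hno
      have huniv : (⋃ b, Bad b) = Set.univ := by
        apply Set.eq_univ_of_forall
        intro r
        obtain ⟨b, hb⟩ := hno r
        exact Set.mem_iUnion.mpr ⟨b, hb⟩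
      have h1 : #(⋃ b, Bad b : Set (ℕ → Bool)) = 2 ^ ℵ₀ := by
        rw [huniv, Cardinal.mk_univ, Cardinal.mk_arrow, Cardinal.mk_bool, Cardinal.mk_nat,
          Cardinal.lift_id, Cardinal.lift_id]
      have h2 : #(⋃ b, Bad b : Set (ℕ → Bool)) ≤ lam := by
        refine le_trans (Cardinal.mk_iUnion_le_sum_mk) ?_
        refine le_trans (Cardinal.sum_le_sum _ (fun _ => 1) ?_) ?_
        · intro b
          exact Cardinal.mk_le_one_iff_set_subsingleton.mpr (hBadSub b)
        · rw [Cardinal.sum_const', mul_one, hB]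
      rw [h1] at h2
      exact absurd (lt_of_lt_of_le hlam h2) (lt_irrefl _)
    obtain ⟨r, hr⟩ := hgood
    have hchoice : ∀ b : B, ∃ c, c ∈ F (Sum.inr b) ∧ c ∉ R r := fun b =>
      Set.not_subset.mp (hr b)
    choose fB hfB1 hfB2 using hchoice
    set f : A ⊕ B → C := Sum.elim (fun a => E ⟨eA a, fun i => r i⟩) fB with hf
    refine ⟨f, ?_, ?_⟩
    · intro x y hadj
      rcases x with a | b <;> rcases y with a' | b' <;>
        simp only [completeBipartiteGraph, Sum.isLeft, Sum.isRight] at hadj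
      · simp at hadj
      · intro hEq
        have hEq' : E ⟨eA a, fun i => r i⟩ = fB b' := hEq
        exact hfB2 b' (hEq' ▸ ⟨eA a, rfl⟩)
      · intro hEq
        have hEq' : fB b = E ⟨eA a', fun i => r i⟩ := hEq
        exact hfB2 b (hEq' ▸ ⟨eA a', rfl⟩)
      · simp at hadj
    · intro x
      rcases x with a | b
      · have := Espec ⟨eA a, fun i => r i⟩
        simpa [hf] using this
      · exact hfB1 b
  rw [listChromatic]
  exact csInf_le' hmem
end

section
/- Let X = (κ, E) be a graph on a regular uncountable cardinal κ and λ < κ an infinite cardinal such that every subgraph of X of size < κ has coloring number ≤ λ. If the set T = {α < κ : there exists β ≥ α with |E^β ∩ α| ≥ λ} is non-stationary in κ, then col(X) ≤ λ. -/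
open Cardinal

/-- A club (closed unbounded) subset of a (well-)ordered type. -/
def IsClubSet {V : Type*} [LinearOrder V] (C : Set V) : Prop :=
  (∀ a : V, ∃ b ∈ C, a < b) ∧
  ∀ a : V, (∃ b, b < a) → (∀ b < a, ∃ c ∈ C, b < c ∧ c < a) → a ∈ C

/-- A stationary subset: one meeting every club subset. -/
def IsStatSet {V : Type*} [LinearOrder V] (S : Set V) : Prop :=
  ∀ C : Set V, IsClubSet C → (S ∩ C).Nonempty

/-- The cofinality of the initial segment below `a`: the least cardinality of a
subset of `Set.Iio a` which is cofinal below `a`. -/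
noncomputable def segCof {V : Type} [LinearOrder V] (a : V) : Cardinal :=
  sInf {c : Cardinal | ∃ s : Set V, s ⊆ Set.Iio a ∧ (∀ b < a, ∃ x ∈ s, b ≤ x) ∧ #s = c}

/-- The diamond principle `◇(S)` on a well-ordered type. -/
def HasDiamond {V : Type} [LinearOrder V] (S : Set V) : Prop :=
  ∃ d : V → Set V, (∀ a ∈ S, d a ⊆ Set.Iio a) ∧
    ∀ A : Set V, IsStatSet {a | a ∈ S ∧ d a = A ∩ Set.Iio a}

lemma exists_wellOrder_of_colNum_le {W : Type} (G' : SimpleGraph W) {lam : Cardinal}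
    (h : colNum G' ≤ lam) :
    ∃ r : W → W → Prop, IsWellOrder W r ∧ ∀ x : W, #{y : W | G'.Adj x y ∧ r y x} < lam := by
  have hne : {κ : Cardinal | ∃ r : W → W → Prop, IsWellOrder W r ∧
      ∀ x : W, #{y : W | G'.Adj x y ∧ r y x} < κ}.Nonempty := by
    refine ⟨Order.succ (#W), WellOrderingRel, WellOrderingRel.isWellOrder, fun x => ?_⟩
    exact (Cardinal.mk_set_le _).trans_lt (Order.lt_succ _)
  obtain ⟨r, hwo, hc⟩ := csInf_mem hne
  exact ⟨r, hwo, fun x => lt_of_lt_of_le (hc x) h⟩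


/-- Let `X` be a graph on a regular uncountable cardinal `κ` (vertices: a
well-ordered type of order type `κ`), `λ < κ` infinite, with every subgraph of
size `< κ` of coloring number `≤ λ`.  If `T = {α : ∃ β ≥ α, |E^β ∩ α| ≥ λ}` is
non-stationary, then `col(X) ≤ λ`. -/
theorem colNum_le_of_not_stationary {V : Type} [LinearOrder V] [WellFoundedLT V]
    (κ lam : Cardinal) (hreg : κ.IsRegular) (hunc : ℵ₀ < κ)
    (hcard : #V = κ) (hseg : ∀ a : V, #{b : V | b < a} < κ)
    (hlam : ℵ₀ ≤ lam) (hlamκ : lam < κ)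
    (G : SimpleGraph V)
    (hsmall : ∀ H : G.Subgraph, #H.verts < κ → colNum H.coe ≤ lam)
    (hT : ¬ IsStatSet {a : V | ∃ b : V, a ≤ b ∧ lam ≤ #{c : V | G.Adj b c ∧ c < a}}) :
    colNum G ≤ lam := by
  classical
  rw [IsStatSet] at hT
  push_neg at hT
  obtain ⟨C, hclub, hdisj⟩ := hT
  have hCnotT : ∀ c ∈ C, ∀ b : V, c ≤ b → #{y : V | G.Adj b y ∧ y < c} < lam := by
    intro c hc b hcb
    by_contra h
    push_neg at h
    have : c ∈ ({a : V | ∃ b : V, a ≤ b ∧ lam ≤ #{c : V | G.Adj b c ∧ c < a}} ∩ C) :=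
      ⟨⟨b, hcb, h⟩, hc⟩
    rw [hdisj] at this
    exact this
  have wf : WellFounded ((· < ·) : V → V → Prop) := wellFounded_lt
  set m : V → V := fun x => wf.min {z | ∀ c ∈ C, c ≤ x → c ≤ z} ⟨x, fun c _ h => h⟩ with hm
  have hmS : ∀ x : V, ∀ c ∈ C, c ≤ x → c ≤ m x := fun x => by
    have := wf.min_mem {z | ∀ c ∈ C, c ≤ x → c ≤ z} ⟨x, fun c _ h => h⟩
    exact this
  have hmin : ∀ x z : V, (∀ c ∈ C, c ≤ x → c ≤ z) → m x ≤ z :=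
    fun x z hz => not_lt.1 (fun hlt => wf.not_lt_min {z | ∀ c ∈ C, c ≤ x → c ≤ z} hz hlt)
  have hmle : ∀ x : V, m x ≤ x := fun x => hmin x x (fun c _ h => h)
  have hmC : ∀ x : V, (∃ c ∈ C, c ≤ x) → m x ∈ C := by
    rintro x ⟨c0, hc0C, hc0x⟩
    by_cases hmx : m x ∈ C
    · exact hmx
    exfalso
    apply hmx
    refine hclub.2 (m x) ?_ ?_
    · have h1 : c0 ≤ m x := hmS x c0 hc0C hc0x
      exact ⟨c0, lt_of_le_of_ne h1 (fun he => hmx (he ▸ hc0C))⟩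
    · intro b hb
      have hbS : ¬ ∀ c ∈ C, c ≤ x → c ≤ b := fun hbm => absurd hb (not_lt.2 (hmin x b hbm))
      push_neg at hbS
      obtain ⟨c, hcC, hcx, hcb⟩ := hbS
      have h1 : c ≤ m x := hmS x c hcC hcx
      exact ⟨c, hcC, hcb, lt_of_le_of_ne h1 (fun he => hmx (he ▸ hcC))⟩
  -- blocks
  set Hm : V → G.Subgraph := fun mv => (⊤ : G.Subgraph).induce {y : V | m y = mv} with hHm
  have hblock : ∀ mv : V, #(Hm mv).verts < κ := by
    intro mv
    obtain ⟨cn, hcnC, hcn⟩ := hclub.1 mv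
    refine lt_of_le_of_lt (Cardinal.mk_le_mk_of_subset ?_) (hseg cn)
    intro y hy
    have hy' : m y = mv := hy
    show y < cn
    by_contra hge
    have h2 : cn ≤ m y := hmS y cn hcnC (not_lt.1 hge)
    rw [hy'] at h2
    exact absurd hcn (not_lt.2 h2)
  choose r' hwo' hcnt using fun mv : V =>
    exists_wellOrder_of_colNum_le (Hm mv).coe (hsmall (Hm mv) (hblock mv))
  have hxmem : ∀ x : V, x ∈ (Hm (m x)).verts := fun x => rfl
  set p : V → Ordinal × Ordinal := fun x =>
    (Ordinal.typein ((· < ·) : V → V → Prop) (m x),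
     Ordinal.typein (r' (m x)) ⟨x, hxmem x⟩) with hp
  set f : V → Lex (Ordinal × Ordinal) := fun x => toLex (p x) with hf
  set R : V → V → Prop := fun y x => f y < f x with hR
  have hcast : ∀ {a b : V} (h : a = b) (z : V) (hz : z ∈ (Hm a).verts),
      Ordinal.typein (r' a) ⟨z, hz⟩ =
        Ordinal.typein (r' b) ⟨z, show m z = b from (show m z = a from hz).trans h⟩ := by
    rintro a b rfl z hz; rfl
  have hfinj : Function.Injective f := by
    intro x y hxy
    have hpq : p x = p y := toLex.injective hxy
    have h1 : m x = m y := Ordinal.typein_injective _ (congrArg Prod.fst hpq)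
    have h2 := congrArg Prod.snd hpq
    simp only [p] at h2
    rw [hcast h1 x (hxmem x)] at h2
    have := Ordinal.typein_injective (r' (m y)) h2
    exact congrArg Subtype.val this
  have hRwo : IsWellOrder V R :=
    { trichotomous := fun x y => by
        rcases lt_trichotomy (f x) (f y) with h | h | h
        · exact fun h1 _ => absurd h h1
        · exact fun _ _ => hfinj h
        · exact fun _ h2 => absurd h h2
      wf := InvImage.wf f (wellFounded_lt) }
  have hcount : ∀ x : V, #{y : V | G.Adj x y ∧ R y x} < lam := by
    intro x
    set A := {y : V | G.Adj x y ∧ y < m x} with hA'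
    set B := {y : V | ∃ h : m y = m x,
      (Hm (m x)).coe.Adj ⟨x, hxmem x⟩ ⟨y, h⟩ ∧ r' (m x) ⟨y, h⟩ ⟨x, hxmem x⟩} with hB'
    have hsub : {y : V | G.Adj x y ∧ R y x} ⊆ A ∪ B := by
      rintro y ⟨hadj, hr⟩
      have hr' : (p y).1 < (p x).1 ∨ (p y).1 = (p x).1 ∧ (p y).2 < (p x).2 := by
        exact Prod.Lex.lt_iff.1 hr
      rcases hr' with h1 | ⟨h1, h2⟩
      · left
        refine ⟨hadj, ?_⟩
        have hmm : m y < m x := by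
          simp only [hp] at h1
          exact (Ordinal.typein_lt_typein _).1 h1
        by_contra hge
        have hxy : m x ≤ y := not_lt.1 hge
        rcases Classical.em (∃ c ∈ C, c ≤ x) with hD | hD
        · exact absurd hmm (not_lt.2 (hmS y (m x) (hmC x hD) hxy))
        · push_neg at hD
          exact absurd hmm (not_lt.2 (hmin x (m y) (fun c hc hcx => absurd hcx (not_le.2 (hD c hc)))))
      · right
        have hmm : m y = m x := by
          simp only [hp] at h1
          exact Ordinal.typein_injective _ h1
        have hadjcoe : (Hm (m x)).coe.Adj ⟨x, hxmem x⟩ ⟨y, hmm⟩ := by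
          simp only [hHm, SimpleGraph.Subgraph.coe_adj, SimpleGraph.Subgraph.induce_adj,
            SimpleGraph.Subgraph.top_adj, Set.mem_setOf_eq]
          exact ⟨trivial, hmm, hadj⟩
        simp only [hp] at h2
        rw [hcast hmm y (hxmem y)] at h2
        exact ⟨hmm, hadjcoe, (Ordinal.typein_lt_typein _).1 h2⟩
    have hAlt : #A < lam := by
      rcases Classical.em (∃ c ∈ C, c ≤ x) with hD | hD
      · exact hCnotT (m x) (hmC x hD) x (hmle x)
      · have hAe : A = ∅ := by
          ext y
          simp only [hA', Set.mem_setOf_eq, Set.mem_empty_iff_false, iff_false, not_and]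
          intro _ hy
          push_neg at hD
          exact absurd hy (not_lt.2 (hmin x y (fun c hc hcx => absurd hcx (not_le.2 (hD c hc)))))
        rw [hAe]
        simpa using lt_of_lt_of_le aleph0_pos hlam
    have hBlt : #B < lam := by
      refine lt_of_le_of_lt (Cardinal.mk_le_of_injective
        (f := fun y : B => (⟨⟨y.1, y.2.choose⟩, y.2.choose_spec⟩ :
          {z : ↥(Hm (m x)).verts | (Hm (m x)).coe.Adj ⟨x, hxmem x⟩ z ∧ r' (m x) z ⟨x, hxmem x⟩}))
        ?_) (hcnt (m x) ⟨x, hxmem x⟩)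
      intro a b hab
      apply Subtype.ext
      exact congrArg (fun z => ((z : {z : ↥(Hm (m x)).verts // _}).1 : ↥(Hm (m x)).verts).1) hab
    calc #{y : V | G.Adj x y ∧ R y x} ≤ #(A ∪ B : Set V) := Cardinal.mk_le_mk_of_subset hsub
      _ ≤ #A + #B := Cardinal.mk_union_le A B
      _ < lam := Cardinal.add_lt_of_lt hlam hAlt hBlt
  exact csInf_le' ⟨R, hRwo, hcount⟩
end

section
/- Let X = (κ, E) be a graph on a regular uncountable cardinal κ and λ < κ an infinite cardinal such that every subgraph of X of size < κ has coloring number ≤ λ. If the set T = {α < κ : there exists β ≥ α with |E^β ∩ α| ≥ λ} is stationary in κ, then col(X) > λ. -/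
open Cardinal

section Helpers
variable {V : Type} [LinearOrder V] [WellFoundedLT V]
variable {κ : Cardinal}

set_option linter.unusedSectionVars false

/-- Any set of size `< κ` is strictly bounded. -/
lemma my_bounded (hreg : κ.IsRegular) (hcard : #V = κ)
    (hseg : ∀ a : V, #{b : V | b < a} < κ) (s : Set V) (hs : #s < κ) :
    ∃ u : V, ∀ x ∈ s, x < u := by
  by_contra h
  push_neg at h
  have hcov : (Set.univ : Set V) ⊆ ⋃ x : s, Set.Iic (x : V) := by
    intro v _
    obtain ⟨x, hx, hvx⟩ := h v
    exact Set.mem_iUnion.2 ⟨⟨x, hx⟩, hvx⟩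
  have h1 : #V ≤ Cardinal.sum fun x : s => #(Set.Iic (x : V)) := by
    calc #V = #(Set.univ : Set V) := Cardinal.mk_univ.symm
    _ ≤ #(⋃ x : s, Set.Iic (x : V)) := Cardinal.mk_le_mk_of_subset hcov
    _ ≤ _ := Cardinal.mk_iUnion_le_sum_mk
  have h2 : Cardinal.sum (fun x : s => #(Set.Iic (x : V))) < κ := by
    apply Cardinal.sum_lt_of_isRegular hreg hs
    intro x
    have : (Set.Iic (x : V)) = insert (x : V) {b : V | b < x} := by
      ext y; simp [le_iff_lt_or_eq, or_comm]
    rw [this]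
    calc #(insert (x:V) {b : V | b < x} : Set V) ≤ #{b : V | b < x} + 1 :=
      Cardinal.mk_insert_le
    _ < κ := Cardinal.add_lt_of_lt hreg.aleph0_le (hseg x)
      (one_lt_aleph0.trans_le hreg.aleph0_le)
  exact absurd (hcard ▸ h1) (not_le.2 h2)

lemma my_main {lam : Cardinal} (hreg : κ.IsRegular) (hunc : ℵ₀ < κ)
    (hcard : #V = κ) (hseg : ∀ a : V, #{b : V | b < a} < κ)
    (hlam : ℵ₀ ≤ lam) (hlamκ : lam < κ)
    (G : SimpleGraph V)
    (hT : IsStatSet {a : V | ∃ b : V, a ≤ b ∧ lam ≤ #{c : V | G.Adj b c ∧ c < a}})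
    (r : V → V → Prop) (hwo : IsWellOrder V r)
    (hback : ∀ x : V, #{y : V | G.Adj x y ∧ r y x} < lam) : False := by
  set f : V → Set V := fun x => {y : V | G.Adj x y ∧ r y x} with hf
  -- closure function g
  have hIic : ∀ x : V, #(Set.Iic x) < κ := by
    intro x
    have : (Set.Iic x) = insert x {b : V | b < x} := by
      ext y; simp [le_iff_lt_or_eq, or_comm]
    rw [this]
    calc #(insert x {b : V | b < x} : Set V) ≤ #{b : V | b < x} + 1 :=
      Cardinal.mk_insert_le
    _ < κ := Cardinal.add_lt_of_lt hreg.aleph0_le (hseg x)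
      (one_lt_aleph0.trans_le hreg.aleph0_le)
  have hUnion : ∀ x : V, #(⋃ b ∈ Set.Iic x, f b) < κ := by
    intro x
    have h1 : #(⋃ b ∈ Set.Iic x, f b) ≤ Cardinal.sum fun b : Set.Iic x => #(f (b : V)) := by
      rw [Set.biUnion_eq_iUnion]
      exact Cardinal.mk_iUnion_le_sum_mk
    refine h1.trans_lt (Cardinal.sum_lt_of_isRegular hreg (hIic x) fun b => ?_)
    exact (hback _).trans hlamκ
  have hg : ∀ x : V, ∃ u : V, ∀ y ∈ insert x (⋃ b ∈ Set.Iic x, f b), y < u := by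
    intro x
    apply my_bounded hreg hcard hseg
    calc #(insert x (⋃ b ∈ Set.Iic x, f b) : Set V) ≤ #(⋃ b ∈ Set.Iic x, f b) + 1 :=
      Cardinal.mk_insert_le
    _ < κ := Cardinal.add_lt_of_lt hreg.aleph0_le (hUnion x)
      (one_lt_aleph0.trans_le hreg.aleph0_le)
  choose g hg' using hg
  have hgx : ∀ x : V, x < g x := fun x => hg' x x (Set.mem_insert _ _)
  have hgf : ∀ x b : V, b ≤ x → ∀ y ∈ f b, y < g x := by
    intro x b hb y hy
    exact hg' x y (Set.mem_insert_of_mem _ (Set.mem_biUnion hb hy))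
  -- the club of closure points
  set C : Set V := {a : V | ∀ b < a, ∀ y ∈ f b, y < a} with hC
  have hclub : IsClubSet C := by
    constructor
    · -- unbounded
      intro a
      set c : ℕ → V := fun n => g^[n+1] a with hc
      have hmono : ∀ n, c n < c (n + 1) := by
        intro n
        simp only [hc, Function.iterate_succ_apply']
        exact hgx _
      have hbd : ∃ u : V, ∀ x ∈ Set.range c, x < u := by
        apply my_bounded hreg hcard hseg
        exact (Cardinal.mk_range_le.trans (by simp)).trans_lt (hunc.trans_le le_rfl)
      have hne : {u : V | ∀ n, c n < u}.Nonempty := by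
        obtain ⟨u, hu⟩ := hbd
        exact ⟨u, fun n => hu _ (Set.mem_range_self n)⟩
      set b := wellFounded_lt.min _ hne with hb
      have hbub : ∀ n, c n < b := wellFounded_lt.min_mem _ hne
      refine ⟨b, ?_, lt_trans (hgx a) (hbub 0)⟩
      -- b ∈ C
      intro x hx y hy
      -- x is not a strict upper bound of c, since x < b = least such
      have : ¬ ∀ n, c n < x := fun hx' => wellFounded_lt.not_lt_min {u : V | ∀ n, c n < u} hx' hx
      push_neg at this
      obtain ⟨n, hn⟩ := this
      have hxn : x ≤ c n := hn
      have : y < c (n + 1) := by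
        have h2 := hgf (c n) x hxn y hy
        simpa [hc, Function.iterate_succ_apply'] using h2
      exact this.trans (hbub (n + 1))
    · -- closed
      intro a _ hacc
      intro x hx y hy
      obtain ⟨d, hdC, hxd, hda⟩ := hacc x hx
      exact (hdC x hxd y hy).trans hda
  obtain ⟨a, haT, haC⟩ := hT C hclub
  obtain ⟨b, hab, hbig⟩ := haT
  -- every neighbor c of b with c < a is in f b
  have hsub : {c : V | G.Adj b c ∧ c < a} ⊆ f b := by
    rintro c ⟨hadj, hca⟩
    rcases trichotomous_of r c b with h | h | h
    · exact ⟨hadj, h⟩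
    · exact absurd (h ▸ hadj) (G.loopless.irrefl b)
    · -- then b ∈ f c, so b < a since c < a and a ∈ C; contradiction with a ≤ b
      have : b ∈ f c := ⟨hadj.symm, h⟩
      have := haC c hca b this
      exact absurd hab (not_le.2 this)
  have : lam ≤ #(f b) := hbig.trans (Cardinal.mk_le_mk_of_subset hsub)
  exact absurd this (not_le.2 (hback b))

end Helpers

/-- Let `X` be a graph on a regular uncountable cardinal `κ`, `λ < κ` infinite,
with every subgraph of size `< κ` of coloring number `≤ λ`.  If
`T = {α : ∃ β ≥ α, |E^β ∩ α| ≥ λ}` is stationary, then `col(X) > λ`. -/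
theorem lt_colNum_of_stationary {V : Type} [LinearOrder V] [WellFoundedLT V]
    (κ lam : Cardinal) (hreg : κ.IsRegular) (hunc : ℵ₀ < κ)
    (hcard : #V = κ) (hseg : ∀ a : V, #{b : V | b < a} < κ)
    (hlam : ℵ₀ ≤ lam) (hlamκ : lam < κ)
    (G : SimpleGraph V)
    (hsmall : ∀ H : G.Subgraph, #H.verts < κ → colNum H.coe ≤ lam)
    (hT : IsStatSet {a : V | ∃ b : V, a ≤ b ∧ lam ≤ #{c : V | G.Adj b c ∧ c < a}}) :
    lam < colNum G := by
  have hne : {κ' : Cardinal | ∃ r : V → V → Prop, IsWellOrder V r ∧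
      ∀ x : V, #{y : V | G.Adj x y ∧ r y x} < κ'}.Nonempty := by
    refine ⟨Order.succ (#V), (· < ·), inferInstance, fun x => ?_⟩
    exact (Cardinal.mk_set_le _).trans_lt (Order.lt_succ _)
  have hall : ∀ μ ∈ {κ' : Cardinal | ∃ r : V → V → Prop, IsWellOrder V r ∧
      ∀ x : V, #{y : V | G.Adj x y ∧ r y x} < κ'}, lam < μ := by
    rintro μ ⟨r, hwo, hback⟩
    by_contra hle
    push_neg at hle
    exact my_main hreg hunc hcard hseg hlam hlamκ G hT r hwo
      (fun x => (hback x).trans_le hle)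
  exact hall _ (csInf_mem hne)
end

section
/- Let κ be regular uncountable, λ < κ infinite, X = (κ, E) a graph with every subgraph of size < κ having coloring number ≤ λ. If S = {α ∈ κ ∩ Cof(cf(λ)) : ∃β ≥ α, |E^β ∩ α| ≥ λ} is non-stationary, then T = {α < κ : ∃β ≥ α, |E^β ∩ α| ≥ λ} is non-stationary. -/
open Cardinal Set

section
variable {V : Type} [LinearOrder V] [WellFoundedLT V]

/-- least upper bound exists for bounded sets -/
lemma exists_lub_aux (s : Set V) (h : ∃ b, ∀ x ∈ s, x ≤ b) :
    ∃ a : V, (∀ x ∈ s, x ≤ a) ∧ ∀ b, (∀ x ∈ s, x ≤ b) → a ≤ b := by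
  classical
  set U : Set V := {b | ∀ x ∈ s, x ≤ b} with hU
  have hne : U.Nonempty := h
  refine ⟨(wellFounded_lt (α := V)).min U hne, (wellFounded_lt (α := V)).min_mem U hne, ?_⟩
  intro b hb
  exact not_lt.1 ((wellFounded_lt (α := V)).not_lt_min U hb)

variable {κ : Cardinal} (hreg : κ.IsRegular) (hunc : ℵ₀ < κ) (hcard : #V = κ)
  (hseg : ∀ a : V, #{b : V | b < a} < κ)

include hreg hcard hseg in
lemma exists_strict_bound (s : Set V) (hs : #s < κ) : ∃ b : V, ∀ x ∈ s, x < b := by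
  classical
  have hIic : ∀ x : V, #(Set.Iic x) < κ := by
    intro x
    have h1 : (Set.Iic x) ⊆ insert x {b : V | b < x} := by
      intro y hy
      rcases eq_or_lt_of_le (hy : y ≤ x) with h | h
      · exact Or.inl h
      · exact Or.inr h
    calc #(Set.Iic x) ≤ #(insert x {b : V | b < x} : Set V) := mk_le_mk_of_subset h1
      _ ≤ #({b : V | b < x}) + 1 := mk_insert_le
      _ < κ := add_lt_of_lt hreg.aleph0_le (hseg x) (one_lt_aleph0.trans_le hreg.aleph0_le)
  have hU : #(⋃ x ∈ s, Set.Iic x) < κ := by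
    refine lt_of_le_of_lt (mk_biUnion_le _ s) ?_
    exact mul_lt_of_lt hreg.aleph0_le hs
      (iSup_lt_of_isRegular hreg hs fun x => hIic x)
  have : (⋃ x ∈ s, Set.Iic x) ≠ Set.univ := by
    intro h
    rw [h] at hU
    simp only [mk_univ, hcard] at hU
    exact lt_irrefl _ hU
  obtain ⟨b, hb⟩ := (Set.ne_univ_iff_exists_notMem _).1 this
  refine ⟨b, fun x hx => ?_⟩
  by_contra hbx
  exact hb (Set.mem_biUnion hx (not_lt.1 hbx))

include hreg hcard hseg hunc in
lemma club_inter {C D : Set V} (hC : IsClubSet C) (hD : IsClubSet D) :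
    IsClubSet (C ∩ D) := by
  classical
  have hCD : ∀ p : V, ∃ q : V × V, p < q.1 ∧ q.1 ∈ C ∧ q.1 < q.2 ∧ q.2 ∈ D := by
    intro p
    obtain ⟨c, hc, hpc⟩ := hC.1 p
    obtain ⟨d, hd, hcd⟩ := hD.1 c
    exact ⟨(c, d), hpc, hc, hcd, hd⟩
  choose F hF1 hF2 hF3 hF4 using hCD
  constructor
  · intro a
    set z : ℕ → V × V := fun n => Nat.rec (F a) (fun _ q => F q.2) n with hz
    have hzsucc : ∀ n, z (n + 1) = F (z n).2 := fun _ => rfl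
    have hz0 : z 0 = F a := rfl
    have hkey : ∀ n, (z n).1 ∈ C ∧ (z n).1 < (z n).2 ∧ (z n).2 ∈ D := by
      intro n
      cases n with
      | zero => exact ⟨hF2 a, hF3 a, hF4 a⟩
      | succ m => rw [hzsucc]; exact ⟨hF2 _, hF3 _, hF4 _⟩
    have hstep : ∀ n, (z n).2 < (z (n + 1)).1 := by
      intro n; rw [hzsucc]; exact hF1 _
    have hb : ∃ b : V, ∀ x ∈ (Set.range fun n => (z n).2), x < b := by
      apply exists_strict_bound hreg hcard hseg
      exact lt_of_le_of_lt mk_range_le (by simpa using hunc)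
    obtain ⟨b, hb⟩ := hb
    obtain ⟨α, hub, hlub⟩ := exists_lub_aux (Set.range fun n => (z n).2)
      ⟨b, fun x hx => (hb x hx).le⟩
    have hz2le : ∀ n, (z n).2 ≤ α := fun n => hub _ ⟨n, rfl⟩
    have hz1lt : ∀ n, (z n).1 < α := fun n => lt_of_lt_of_le (hkey n).2.1 (hz2le n)
    have hz2lt : ∀ n, (z n).2 < α := fun n => lt_of_lt_of_le (hstep n) (hz1lt (n+1)).le
    have hcof : ∀ c < α, ∃ n, c < (z n).2 := by
      intro c hc
      by_contra hcon
      push_neg at hcon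
      exact absurd (hlub c fun x ⟨n, hn⟩ => hn ▸ hcon n) (not_le.2 hc)
    have haC : α ∈ C := by
      refine hC.2 α ⟨(z 0).1, hz1lt 0⟩ fun c hc => ?_
      obtain ⟨n, hn⟩ := hcof c hc
      exact ⟨(z (n+1)).1, (hkey (n+1)).1, lt_trans hn (hstep n), hz1lt (n+1)⟩
    have haD : α ∈ D := by
      refine hD.2 α ⟨(z 0).1, hz1lt 0⟩ fun c hc => ?_
      obtain ⟨n, hn⟩ := hcof c hc
      exact ⟨(z (n+1)).2, (hkey (n+1)).2.2,
        lt_trans hn (lt_trans (hstep n) (hkey (n+1)).2.1), hz2lt (n+1)⟩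
    have haa : a < α := by
      have : a < (z 0).1 := hz0 ▸ hF1 a
      exact this.trans (hz1lt 0)
    exact ⟨α, ⟨haC, haD⟩, haa⟩
  · intro a ha h
    exact ⟨hC.2 a ha (fun b hb => by
        obtain ⟨c, hc, h1, h2⟩ := h b hb; exact ⟨c, hc.1, h1, h2⟩),
      hD.2 a ha (fun b hb => by
        obtain ⟨c, hc, h1, h2⟩ := h b hb; exact ⟨c, hc.2, h1, h2⟩)⟩

include hreg hcard hseg hunc in
lemma unbounded_fiber {A : Set V} (hA : IsStatSet A) (g : V → V)
    (hg : ∀ a ∈ A, g a < a) : ∃ γ : V, ∀ b : V, ∃ a ∈ A, g a = γ ∧ b ≤ a := by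
  classical
  by_contra hcon
  push_neg at hcon
  -- for each γ, a bound h γ for the fiber
  have hcon' : ∀ γ : V, ∃ b : V, ∀ a ∈ A, g a = γ → a < b := by
    intro γ
    obtain ⟨b, hb⟩ := hcon γ
    exact ⟨b, hb⟩
  choose h hh using hcon'
  -- closure points club
  set C : Set V := {α | (∃ b, b < α) ∧ ∀ γ < α, h γ < α} with hCdef
  have hclub : IsClubSet C := by
    constructor
    · intro a
      have hstep : ∀ p : V, ∃ q : V, p < q ∧ ∀ γ ≤ p, h γ < q := by
        intro p
        have hsmall : #(insert p (h '' Set.Iic p) : Set V) < κ := by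
          refine lt_of_le_of_lt mk_insert_le ?_
          refine add_lt_of_lt hreg.aleph0_le ?_ (one_lt_aleph0.trans_le hreg.aleph0_le)
          refine lt_of_le_of_lt mk_image_le ?_
          have h1 : (Set.Iic p) ⊆ insert p {b : V | b < p} := by
            intro y hy
            rcases eq_or_lt_of_le (hy : y ≤ p) with h | h
            · exact Or.inl h
            · exact Or.inr h
          calc #(Set.Iic p) ≤ #(insert p {b : V | b < p} : Set V) := mk_le_mk_of_subset h1
            _ ≤ #({b : V | b < p}) + 1 := mk_insert_le
            _ < κ := add_lt_of_lt hreg.aleph0_le (hseg p)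
                (one_lt_aleph0.trans_le hreg.aleph0_le)
        obtain ⟨q, hq⟩ := exists_strict_bound hreg hcard hseg _ hsmall
        exact ⟨q, hq p (Set.mem_insert _ _),
          fun γ hγ => hq _ (Set.mem_insert_of_mem _ ⟨γ, hγ, rfl⟩)⟩
      choose F hF1 hF2 using hstep
      set x : ℕ → V := fun n => Nat.rec (F a) (fun _ p => F p) n with hx
      have hx0 : x 0 = F a := rfl
      have hxsucc : ∀ n, x (n + 1) = F (x n) := fun _ => rfl
      have hxmono : ∀ n, x n < x (n + 1) := by intro n; rw [hxsucc]; exact hF1 _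
      have hb : ∃ b : V, ∀ y ∈ Set.range x, y < b := by
        apply exists_strict_bound hreg hcard hseg
        exact lt_of_le_of_lt mk_range_le (by simpa using hunc)
      obtain ⟨b, hb⟩ := hb
      obtain ⟨α, hub, hlub⟩ := exists_lub_aux (Set.range x) ⟨b, fun y hy => (hb y hy).le⟩
      have hxle : ∀ n, x n ≤ α := fun n => hub _ ⟨n, rfl⟩
      have hxlt : ∀ n, x n < α := fun n => lt_of_lt_of_le (hxmono n) (hxle (n + 1))
      have hcof : ∀ c < α, ∃ n, c < x n := by
        intro c hc
        by_contra hcon2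
        push_neg at hcon2
        exact absurd (hlub c fun y ⟨n, hn⟩ => hn ▸ hcon2 n) (not_le.2 hc)
      refine ⟨α, ⟨⟨x 0, hxlt 0⟩, fun γ hγ => ?_⟩, ?_⟩
      · obtain ⟨n, hn⟩ := hcof γ hγ
        have : h γ < x (n + 1) := by rw [hxsucc]; exact hF2 _ _ hn.le
        exact this.trans_le (hxle (n + 1))
      · exact (hF1 a).trans_le ((hx0 ▸ hxle 0))
    · intro a ha hcl
      refine ⟨ha, fun γ hγ => ?_⟩
      obtain ⟨c, hc, h1, h2⟩ := hcl γ hγ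
      exact (hc.2 γ h1).trans h2
  obtain ⟨a, haA, haC⟩ := hA C hclub
  have h1 : g a < a := hg a haA
  have h2 : h (g a) < a := haC.2 _ h1
  exact absurd (hh (g a) a haA rfl) (not_lt.2 h2.le)

lemma card_le_succ_aux {W : Set V} {σ : Cardinal}
    (h : ∀ c ∈ W, #(W ∩ Set.Iio c : Set V) ≤ σ) : #W ≤ Order.succ σ := by
  classical
  have htype : Ordinal.type ((· < ·) : ↥W → ↥W → Prop) ≤ (Order.succ σ).ord := by
    by_contra hlt
    push_neg at hlt
    obtain ⟨x, hx⟩ := Ordinal.typein_surj ((· < ·) : ↥W → ↥W → Prop) hlt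
    have hcard := Ordinal.card_typein (r := ((· < ·) : ↥W → ↥W → Prop)) x
    rw [hx, Cardinal.card_ord] at hcard
    have hinj : #{y : ↥W | y < x} ≤ #(W ∩ Set.Iio (x : V) : Set V) := by
      refine mk_le_of_injective (f := fun y => ⟨(y : ↥W), (y : ↥W).2, y.2⟩) ?_
      rintro ⟨⟨y, hy⟩, hy2⟩ ⟨⟨z, hz⟩, hz2⟩ hyz
      simp only [Subtype.mk.injEq] at hyz ⊢
      exact congrArg Subtype.val hyz
    have hinj' : #{ y : ↥W // y < x } ≤ #(W ∩ Set.Iio (x : V) : Set V) := hinj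
    rw [← hcard] at hinj'
    exact absurd (hinj'.trans (h x x.2)) (not_le.2 (Order.lt_succ σ))
  calc #W = (Ordinal.type ((· < ·) : ↥W → ↥W → Prop)).card := (Ordinal.card_type _).symm
    _ ≤ ((Order.succ σ).ord).card := Ordinal.card_le_card htype
    _ = Order.succ σ := Cardinal.card_ord _

lemma segCof_eq_of {lam : Cardinal} (hlam : ℵ₀ ≤ lam) {α : V} {W : Set V}
    (hWsub : W ⊆ Set.Iio α) (hWcard : lam ≤ #W)
    (hbd : ∀ γ < α, #(W ∩ Set.Iio γ : Set V) < lam) : segCof α = lam.ord.cof := by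
  classical
  have hone : (1 : Cardinal) < lam := one_lt_aleph0.trans_le hlam
  -- no maximum in W
  have hWmax : ∀ c ∈ W, ∃ c' ∈ W, c < c' := by
    intro c hc
    by_contra hcon
    push_neg at hcon
    have heq : W ∩ Set.Iio c = W \ {c} := by
      ext y
      simp only [Set.mem_inter_iff, Set.mem_Iio, Set.mem_diff, Set.mem_singleton_iff]
      exact ⟨fun ⟨h1, h2⟩ => ⟨h1, h2.ne⟩, fun ⟨h1, h2⟩ => ⟨h1, (hcon y h1).lt_of_ne h2⟩⟩
    have h1 : lam ≤ #(W \ {c} : Set V) + 1 := by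
      have := le_mk_diff_add_mk W {c}
      simpa using hWcard.trans this
    rw [← heq] at h1
    exact absurd h1 (not_le.2 (add_lt_of_lt hlam (hbd c (hWsub hc)) hone))
  -- W is cofinal below α, strictly
  have hWcof : ∀ b < α, ∃ c ∈ W, b < c := by
    intro b hb
    have hle : ∃ c ∈ W, b ≤ c := by
      by_contra hcon
      push_neg at hcon
      have : W ⊆ W ∩ Set.Iio b := fun y hy => ⟨hy, hcon y hy⟩
      exact absurd (hWcard.trans (mk_le_mk_of_subset this)) (not_le.2 (hbd b hb))
    obtain ⟨c, hc, hbc⟩ := hle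
    rcases eq_or_lt_of_le hbc with heq | h
    · subst heq
      obtain ⟨c', hc', hcc'⟩ := hWmax b hc
      exact ⟨c', hc', hcc'⟩
    · exact ⟨c, hc, h⟩
  -- segCof α ≤ lam
  have segle : segCof α ≤ lam := by
    obtain ⟨W₀, hW₀sub, hW₀⟩ := le_mk_iff_exists_subset.1 hWcard
    by_cases hcof : ∀ b < α, ∃ x ∈ W₀, b ≤ x
    · refine le_trans (csInf_le' ?_) hW₀.le
      exact ⟨W₀, fun y hy => hWsub (hW₀sub hy), hcof, rfl⟩
    · push_neg at hcof
      obtain ⟨b, hb, hball⟩ := hcof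
      have : W₀ ⊆ W ∩ Set.Iio b := fun y hy => ⟨hW₀sub hy, hball y hy⟩
      exact absurd (hW₀ ▸ mk_le_mk_of_subset this) (not_le.2 (hbd b hb))
  -- lam.ord.cof ≤ segCof α
  have hle1 : lam.ord.cof ≤ segCof α := by
    have hSne : {c : Cardinal | ∃ s : Set V, s ⊆ Set.Iio α ∧ (∀ b < α, ∃ x ∈ s, b ≤ x) ∧ #s = c}.Nonempty :=
      ⟨#(Set.Iio α), Set.Iio α, subset_rfl, fun b hb => ⟨b, hb, le_rfl⟩, rfl⟩
    obtain ⟨s, hs1, hs2, hs3⟩ := csInf_mem hSne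
    by_contra hcon
    push_neg at hcon
    have hcover : W ⊆ ⋃ x ∈ s, (W ∩ Set.Iic x) := by
      intro c hc
      obtain ⟨x, hx, hcx⟩ := hs2 c (hWsub hc)
      exact Set.mem_biUnion hx ⟨hc, hcx⟩
    have hpiece : ∀ x ∈ s, #(W ∩ Set.Iic x : Set V) < lam := by
      intro x hx
      have hsub : W ∩ Set.Iic x ⊆ insert x (W ∩ Set.Iio x) := by
        rintro y ⟨hy1, hy2⟩
        rcases eq_or_lt_of_le (hy2 : y ≤ x) with h | h
        · exact Or.inl h
        · exact Or.inr ⟨hy1, h⟩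
      calc #(W ∩ Set.Iic x : Set V) ≤ #(insert x (W ∩ Set.Iio x) : Set V) :=
            mk_le_mk_of_subset hsub
        _ ≤ #(W ∩ Set.Iio x : Set V) + 1 := mk_insert_le
        _ < lam := add_lt_of_lt hlam (hbd x (hs1 hx)) hone
    have hsup : (⨆ x : s, #(W ∩ Set.Iic (x : V) : Set V)) < lam := by
      refine Ordinal.iSup_lt ?_ fun x => hpiece x x.2
      rw [hs3]
      exact hcon
    have hslt : #s < lam := hs3 ▸ (hcon.trans_le (Ordinal.cof_ord_le lam))
    have : lam < lam := by
      calc lam ≤ #W := hWcard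
        _ ≤ #(⋃ x ∈ s, (W ∩ Set.Iic x) : Set V) := mk_le_mk_of_subset hcover
        _ ≤ #s * ⨆ x : s, #(W ∩ Set.Iic (x : V) : Set V) := mk_biUnion_le _ s
        _ < lam := mul_lt_of_lt hlam hslt hsup
    exact lt_irrefl _ this
  -- segCof α ≤ lam.ord.cof
  have hle2 : segCof α ≤ lam.ord.cof := by
    by_cases hcase : ∃ σ < lam, ∀ γ < α, #(W ∩ Set.Iio γ : Set V) ≤ σ
    · obtain ⟨σ, hσ, hσbd⟩ := hcase
      have hWle : #W ≤ Order.succ σ :=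
        card_le_succ_aux fun c hc => hσbd c (hWsub hc)
      have hlameq : lam = Order.succ σ :=
        le_antisymm (hWcard.trans hWle) (Order.succ_le_of_lt hσ)
      have hσinf : ℵ₀ ≤ σ := by
        by_contra hfin
        push_neg at hfin
        obtain ⟨n, rfl⟩ := Cardinal.lt_aleph0.1 hfin
        have : lam < ℵ₀ := by
          rw [hlameq, ← Cardinal.nat_succ]
          exact Cardinal.nat_lt_aleph0 _
        exact absurd hlam (not_le.2 this)
      have : lam.ord.cof = lam := by
        rw [hlameq]
        exact (Cardinal.isRegular_succ hσinf).cof_eq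
      rw [this]
      exact segle
    · push_neg at hcase
      obtain ⟨ι, F, hlsub, hι⟩ := Ordinal.exists_lsub_cof lam.ord
      have hFlt : ∀ i : ι, (F i).card < lam := by
        intro i
        have : F i < lam.ord := hlsub ▸ Ordinal.lt_lsub F i
        exact Cardinal.lt_ord.1 this
      choose γ hγ1 hγ2 using fun i : ι => hcase ((F i).card) (hFlt i)
      have hscof : ∀ b < α, ∃ x ∈ Set.range γ, b ≤ x := by
        intro b hb
        have hνb : #(W ∩ Set.Iio b : Set V) < lam := hbd b hb
        have : (#(W ∩ Set.Iio b : Set V)).ord < lam.ord := Cardinal.ord_lt_ord.2 hνb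
        rw [← hlsub, Ordinal.lt_lsub_iff] at this
        obtain ⟨i, hi⟩ := this
        have hcard : #(W ∩ Set.Iio b : Set V) ≤ (F i).card := by
          have := Ordinal.card_le_card hi
          rwa [Cardinal.card_ord] at this
        have hlt : b < γ i := by
          by_contra hcon
          push_neg at hcon
          have : W ∩ Set.Iio (γ i) ⊆ W ∩ Set.Iio b :=
            fun y hy => ⟨hy.1, hy.2.trans_le hcon⟩
          exact absurd ((hγ2 i).trans_le ((mk_le_mk_of_subset this).trans hcard))
            (lt_irrefl _)
        exact ⟨γ i, Set.mem_range_self i, hlt.le⟩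
      have : segCof α ≤ #(Set.range γ) := by
        refine csInf_le' ?_
        exact ⟨Set.range γ, by rintro y ⟨i, rfl⟩; exact hγ1 i, hscof, rfl⟩
      refine this.trans ?_
      rw [← hι]
      exact mk_range_le
  exact le_antisymm hle2 hle1

noncomputable def tpn (o : Ordinal.{0}) (x : o.ToType) : Ordinal :=
  @Ordinal.typein o.ToType (· < ·) isWellOrder_lt x

lemma tpn_lt (o : Ordinal.{0}) (x : o.ToType) : tpn o x < o := by
  have := @Ordinal.typein_lt_type o.ToType (· < ·) isWellOrder_lt x
  rwa [Ordinal.type_toType] at this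

lemma tpn_surj (o : Ordinal.{0}) {j : Ordinal} (hj : j < o) : ∃ x, tpn o x = j := by
  have hj' : j < @Ordinal.type o.ToType (· < ·) isWellOrder_lt := by
    rwa [Ordinal.type_toType]
  exact @Ordinal.typein_surj o.ToType (· < ·) isWellOrder_lt j hj'

open scoped Classical in
noncomputable def chain {V : Type} [LinearOrder V] [WellFoundedLT V] [Nonempty V]
    (C : Set V) (γ₀ : V) : Ordinal.{0} → V :=
  WellFounded.fix (wellFounded_lt (α := Ordinal.{0}))
    (fun i rec =>
      if h : {b : V | b ∈ C ∧ γ₀ < b ∧ ∀ j : Ordinal, ∀ hj : j < i, rec j hj < b}.Nonempty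
      then (wellFounded_lt (α := V)).min _ h
      else Classical.arbitrary V)

open scoped Classical in
lemma chain_eq {V : Type} [LinearOrder V] [WellFoundedLT V] [Nonempty V]
    (C : Set V) (γ₀ : V) (i : Ordinal.{0}) :
    chain C γ₀ i =
      if h : {b : V | b ∈ C ∧ γ₀ < b ∧ ∀ j : Ordinal, ∀ _ : j < i, chain C γ₀ j < b}.Nonempty
      then (wellFounded_lt (α := V)).min _ h
      else Classical.arbitrary V := by
  rw [chain, WellFounded.fix_eq]

include hreg hunc hcard hseg in
lemma exists_cof_point [Nonempty V] {C : Set V} (hC : IsClubSet C) {θ : Cardinal}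
    (hθreg : θ.ord.cof = θ) (hθ0 : ℵ₀ ≤ θ) (hθκ : θ < κ) (γ₀ : V) :
    ∃ α ∈ C, γ₀ < α ∧ segCof α = θ := by
  classical
  set o : Ordinal := θ.ord with ho
  have holim : Order.IsSuccLimit o := Cardinal.isSuccLimit_ord hθ0
  set f : Ordinal → V := chain C γ₀ with hf
  have hGood : ∀ i : Ordinal.{0}, i.card < κ →
      f i ∈ C ∧ γ₀ < f i ∧ ∀ j : Ordinal, j < i → f j < f i := by
    intro i hi
    have hne : {b : V | b ∈ C ∧ γ₀ < b ∧ ∀ j : Ordinal, ∀ _ : j < i, chain C γ₀ j < b}.Nonempty := by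
      set s : Set V := insert γ₀ (Set.range fun x : i.ToType => f (tpn i x)) with hs
      have hsmall : #s < κ := by
        refine lt_of_le_of_lt mk_insert_le ?_
        refine add_lt_of_lt hreg.aleph0_le ?_ (one_lt_aleph0.trans_le hreg.aleph0_le)
        refine lt_of_le_of_lt mk_range_le ?_
        rw [Cardinal.mk_toType]
        exact hi
      obtain ⟨b', hb'⟩ := exists_strict_bound hreg hcard hseg s hsmall
      obtain ⟨b, hbC, hb'b⟩ := hC.1 b'
      refine ⟨b, hbC, ?_, ?_⟩
      · exact (hb' γ₀ (Set.mem_insert _ _)).trans hb'b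
      · intro j hj
        obtain ⟨x, hx⟩ := tpn_surj i hj
        have hmem : f j ∈ s := by
          rw [hs]
          exact Set.mem_insert_of_mem _ ⟨x, congrArg f hx⟩
        exact (hb' _ hmem).trans hb'b
    have heq := chain_eq C γ₀ i
    rw [dif_pos hne] at heq
    have hmm := (wellFounded_lt (α := V)).min_mem _ hne
    rw [← heq] at hmm
    have : f i ∈ {b : V | b ∈ C ∧ γ₀ < b ∧ ∀ j : Ordinal, ∀ _ : j < i, chain C γ₀ j < b} := hmm
    exact ⟨this.1, this.2.1, fun j hj => this.2.2 j hj⟩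
  have hcards : ∀ i : Ordinal, i ≤ o → i.card < κ := by
    intro i hi
    exact lt_of_le_of_lt (Ordinal.card_le_card hi) (by rwa [ho, Cardinal.card_ord])
  have hmono : ∀ j i : Ordinal, j < i → i ≤ o → f j < f i := by
    intro j i hj hi
    exact (hGood i (hcards i hi)).2.2 j hj
  -- the lub of the chain
  set S : Set V := Set.range fun x : o.ToType => f (tpn o x) with hS
  have hSsmall : #S < κ := lt_of_le_of_lt mk_range_le
    (by rw [Cardinal.mk_toType, ho, Cardinal.card_ord]; exact hθκ)
  obtain ⟨b₀, hb₀⟩ := exists_strict_bound hreg hcard hseg S hSsmall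
  obtain ⟨α, hub, hlub⟩ := exists_lub_aux S ⟨b₀, fun x hx => (hb₀ x hx).le⟩
  have hmemS : ∀ j : Ordinal, j < o → f j ∈ S := by
    intro j hj
    obtain ⟨x, hx⟩ := tpn_surj o hj
    exact ⟨x, congrArg f hx⟩
  have hfle : ∀ j : Ordinal, j < o → f j ≤ α := fun j hj => hub _ (hmemS j hj)
  have hflt : ∀ j : Ordinal, j < o → f j < α := by
    intro j hj
    exact lt_of_lt_of_le (hmono j _ (Order.lt_succ j) (holim.succ_lt hj).le)
      (hfle _ (holim.succ_lt hj))
  have hcof : ∀ b < α, ∃ j : Ordinal, j < o ∧ b < f j := by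
    intro b hb
    by_contra hcon
    push_neg at hcon
    refine absurd (hlub b ?_) (not_le.2 hb)
    rintro y ⟨x, rfl⟩
    exact hcon _ (tpn_lt o x)
  have h0o : (0 : Ordinal) < o := holim.pos
  have haC : α ∈ C := by
    refine hC.2 α ⟨f 0, hflt 0 h0o⟩ fun b hb => ?_
    obtain ⟨j, hj, hbj⟩ := hcof b hb
    exact ⟨f j, (hGood j (hcards j hj.le)).1, hbj, hflt j hj⟩
  have hγα : γ₀ < α := lt_of_lt_of_le (hGood 0 (hcards 0 h0o.le)).2.1 (hfle 0 h0o)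
  refine ⟨α, haC, hγα, ?_⟩
  have hle : segCof α ≤ θ := by
    have h1 : segCof α ≤ #S := by
      refine csInf_le' ?_
      refine ⟨S, ?_, ?_, rfl⟩
      · rintro y ⟨x, rfl⟩
        exact hflt _ (tpn_lt o x)
      · intro b hb
        obtain ⟨j, hj, hbj⟩ := hcof b hb
        exact ⟨f j, hmemS j hj, hbj.le⟩
    refine h1.trans ?_
    rw [hS]
    refine le_trans mk_range_le ?_
    rw [Cardinal.mk_toType, ho, Cardinal.card_ord]
  have hge : θ ≤ segCof α := by
    have hSne : {c : Cardinal | ∃ s : Set V, s ⊆ Set.Iio α ∧ (∀ b < α, ∃ x ∈ s, b ≤ x) ∧ #s = c}.Nonempty :=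
      ⟨#(Set.Iio α), Set.Iio α, subset_rfl, fun b hb => ⟨b, hb, le_rfl⟩, rfl⟩
    obtain ⟨s', hs1, hs2, hs3⟩ := csInf_mem hSne
    have hchoice : ∀ y : ↥s', ∃ j : Ordinal, j < o ∧ (y : V) < f j :=
      fun y => hcof y (hs1 y.2)
    choose J hJ1 hJ2 using hchoice
    have hlsub : Ordinal.lsub J = o := by
      refine le_antisymm (Ordinal.lsub_le fun y => hJ1 y) ?_
      refine le_of_forall_lt fun i hi => ?_
      obtain ⟨y, hy, hfy⟩ := hs2 (f i) (hflt i hi)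
      have hiJ : i < J ⟨y, hy⟩ := by
        by_contra hcon
        push_neg at hcon
        have : f (J ⟨y, hy⟩) ≤ f i := by
          rcases eq_or_lt_of_le hcon with heq | hlt
          · rw [heq]
          · exact (hmono _ i hlt hi.le).le
        exact absurd ((hJ2 ⟨y, hy⟩).trans_le this) (not_lt.2 hfy)
      exact hiJ.trans (Ordinal.lt_lsub J _)
    have := Ordinal.cof_lsub_le J
    rw [hlsub, ho, hθreg, hs3] at this
    exact this
  exact le_antisymm hle hge

end

/-- If `S = {α ∈ κ ∩ Cof(cf(λ)) : ∃ β ≥ α, |E^β ∩ α| ≥ λ}` is non-stationary,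
then `T = {α < κ : ∃ β ≥ α, |E^β ∩ α| ≥ λ}` is non-stationary. -/
theorem T_not_stationary_of_S_not_stationary {V : Type} [LinearOrder V] [WellFoundedLT V]
    (κ lam : Cardinal) (hreg : κ.IsRegular) (hunc : ℵ₀ < κ)
    (hcard : #V = κ) (hseg : ∀ a : V, #{b : V | b < a} < κ)
    (hlam : ℵ₀ ≤ lam) (hlamκ : lam < κ)
    (G : SimpleGraph V)
    (hsmall : ∀ H : G.Subgraph, #H.verts < κ → colNum H.coe ≤ lam)
    (hS : ¬ IsStatSet {a : V | segCof a = lam.ord.cof ∧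
      ∃ b : V, a ≤ b ∧ lam ≤ #{c : V | G.Adj b c ∧ c < a}}) :
    ¬ IsStatSet {a : V | ∃ b : V, a ≤ b ∧ lam ≤ #{c : V | G.Adj b c ∧ c < a}} := by
  classical
  intro hT
  have hV : Nonempty V := by
    rw [← mk_ne_zero_iff, hcard]
    exact (aleph0_pos.trans_le hreg.aleph0_le).ne'
  set θ : Cardinal := lam.ord.cof with hθdef
  set Sset : Set V := {a : V | segCof a = lam.ord.cof ∧
      ∃ b : V, a ≤ b ∧ lam ≤ #{c : V | G.Adj b c ∧ c < a}} with hSsetdef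
  set Tset : Set V := {a : V | ∃ b : V, a ≤ b ∧ lam ≤ #{c : V | G.Adj b c ∧ c < a}}
    with hTsetdef
  have hclub : ∃ C : Set V, IsClubSet C ∧ Sset ∩ C = ∅ := by
    by_contra h
    push_neg at h
    exact hS fun C hC => h C hC
  obtain ⟨C, hCclub, hCS⟩ := hclub
  have hA : IsStatSet (Tset ∩ C) := by
    intro D hD
    obtain ⟨a, ha, haCD⟩ := hT (C ∩ D) (club_inter hreg hunc hcard hseg hCclub hD)
    exact ⟨a, ⟨ha, haCD.1⟩, haCD.2⟩
  have hpress : ∀ a ∈ Tset ∩ C,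
      ∃ γ, γ < a ∧ ∃ b, a ≤ b ∧ lam ≤ #{c : V | G.Adj b c ∧ c < γ} := by
    rintro a ⟨haT, haC⟩
    obtain ⟨b, hab, hbcard⟩ := haT
    by_contra hcon
    push_neg at hcon
    set W : Set V := {c : V | G.Adj b c ∧ c < a} with hW
    have hWsub : W ⊆ Set.Iio a := fun c hc => hc.2
    have hbd : ∀ γ < a, #(W ∩ Set.Iio γ : Set V) < lam := by
      intro γ hγ
      have heq : W ∩ Set.Iio γ = {c : V | G.Adj b c ∧ c < γ} := by
        ext c
        constructor
        · rintro ⟨⟨h1, _⟩, h3⟩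
          exact ⟨h1, h3⟩
        · rintro ⟨h1, h2⟩
          exact ⟨⟨h1, h2.trans hγ⟩, h2⟩
      rw [heq]
      exact hcon γ hγ b hab
    have hseq : segCof a = lam.ord.cof := segCof_eq_of hlam hWsub hbcard hbd
    have haS : a ∈ Sset ∩ C := ⟨⟨hseq, b, hab, hbcard⟩, haC⟩
    rw [hCS] at haS
    exact haS
  have hgex : ∀ a : V, ∃ γ : V, a ∈ Tset ∩ C →
      (γ < a ∧ ∃ b, a ≤ b ∧ lam ≤ #{c : V | G.Adj b c ∧ c < γ}) := by
    intro a
    by_cases ha : a ∈ Tset ∩ C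
    · obtain ⟨γ, h⟩ := hpress a ha
      exact ⟨γ, fun _ => h⟩
    · exact ⟨a, fun h => absurd h ha⟩
  choose g hg using hgex
  obtain ⟨γ₀, hγ₀⟩ := unbounded_fiber hreg hunc hcard hseg hA g fun a ha => (hg a ha).1
  have hTail : ∀ a' : V, γ₀ < a' → a' ∈ Tset := by
    intro a' ha'
    obtain ⟨a, haA, hga, ha'a⟩ := hγ₀ a'
    obtain ⟨_, b, hab, hbcard⟩ := hg a haA
    refine ⟨b, ha'a.trans hab, ?_⟩
    rw [hga] at hbcard
    refine hbcard.trans (mk_le_mk_of_subset ?_)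
    rintro c ⟨h1, h2⟩
    exact ⟨h1, h2.trans ha'⟩
  have hθ0 : ℵ₀ ≤ θ := Ordinal.aleph0_le_cof.2 (Cardinal.isSuccLimit_ord hlam)
  have hθreg : θ.ord.cof = θ := Ordinal.cof_cof lam.ord
  have hθκ : θ < κ := lt_of_le_of_lt (Ordinal.cof_ord_le lam) hlamκ
  obtain ⟨α, hαC, hγα, hαcof⟩ :=
    exists_cof_point hreg hunc hcard hseg hCclub hθreg hθ0 hθκ γ₀
  have hfinal : α ∈ Sset ∩ C := ⟨⟨hαcof, hTail α hγα⟩, hαC⟩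
  rw [hCS] at hfinal
  exact hfinal
end

section
/- Let κ be a regular uncountable cardinal and S ⊆ κ ∩ Cof(ω) a non-reflecting stationary set. Then there is a graph X of size κ such that col(X) > ω but every subgraph of X of size < κ has coloring number ≤ ω. (The graph: vertices S ∪ ⋃{c_α : α ∈ S}, where c_α ⊆ α is cofinal of order type ω with c_α ∩ S = ∅, and β is adjacent to α iff α ∈ S and β ∈ c_α.) -/
open Cardinal

section Helpers
variable {V : Type} [LinearOrder V] [WellFoundedLT V] {κ : Cardinal}

/-- small subsets are bounded -/
lemma aux_bounded (hreg : κ.IsRegular) (hunc : ℵ₀ < κ) (hcard : #V = κ)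
    (hseg : ∀ a : V, #{b : V | b < a} < κ) (B : Set V) (hB : #B < κ) :
    ∃ a : V, ∀ b ∈ B, b ≤ a := by
  have hIic : ∀ a : V, #(Set.Iic a) < κ := by
    intro a
    have h1 : (Set.Iic a : Set V) = insert a (Set.Iio a) := (Set.Iio_insert).symm
    rw [h1]
    refine lt_of_le_of_lt Cardinal.mk_insert_le ?_
    exact Cardinal.add_lt_of_lt hreg.aleph0_le (hseg a) (lt_trans one_lt_aleph0 hunc)
  by_contra hcon
  push_neg at hcon
  -- hcon : ∀ a, ∃ b ∈ B, ¬ b ≤ a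
  have hfun : ∀ a : V, ∃ b : B, a ≤ (b : V) := by
    intro a
    obtain ⟨b, hb, hba⟩ := hcon a
    exact ⟨⟨b, hb⟩, le_of_lt hba⟩
  choose f hf using hfun
  have hinj : Function.Injective (fun a : V => (⟨f a, ⟨a, hf a⟩⟩ : Σ b : B, Set.Iic (b : V))) := by
    intro a₁ a₂ h
    have := congrArg (fun p : (Σ b : B, Set.Iic (b : V)) => (p.2 : V)) h
    simpa using this
  have h1 : #V ≤ Cardinal.sum (fun b : B => #(Set.Iic (b : V))) := by
    refine le_trans (Cardinal.mk_le_of_injective hinj) ?_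
    rw [Cardinal.mk_sigma]
  have h2 : Cardinal.sum (fun b : B => #(Set.Iic (b : V))) < κ :=
    Cardinal.sum_lt_of_isRegular hreg hB (fun b => hIic _)
  rw [hcard] at h1
  exact absurd (lt_of_le_of_lt h1 h2) (lt_irrefl κ)

lemma aux_gt (hreg : κ.IsRegular) (hunc : ℵ₀ < κ) (hcard : #V = κ)
    (hseg : ∀ a : V, #{b : V | b < a} < κ) (a : V) : ∃ b : V, a < b := by
  by_contra hcon
  push_neg at hcon
  have h1 : (Set.univ : Set V) ⊆ Set.Iic a := fun x _ => hcon x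
  have h2 : #(Set.Iic a : Set V) < κ := by
    rw [show (Set.Iic a : Set V) = insert a (Set.Iio a) from (Set.Iio_insert).symm]
    refine lt_of_le_of_lt Cardinal.mk_insert_le ?_
    exact Cardinal.add_lt_of_lt hreg.aleph0_le (hseg a) (lt_trans one_lt_aleph0 hunc)
  have h3 : #V ≤ #(Set.Iic a : Set V) := by
    calc #V = #(Set.univ : Set V) := (@Cardinal.mk_univ V).symm
    _ ≤ _ := Cardinal.mk_le_mk_of_subset h1
  rw [hcard] at h3
  exact absurd (lt_of_le_of_lt h3 h2) (lt_irrefl κ)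

/-- least upper bounds of bounded nonempty sets -/
lemma aux_lub (B : Set V) (hne : B.Nonempty) (hbd : ∃ u : V, ∀ b ∈ B, b ≤ u) :
    ∃ m : V, (∀ b ∈ B, b ≤ m) ∧ ∀ u : V, (∀ b ∈ B, b ≤ u) → m ≤ u := by
  have hUne : {u : V | ∀ b ∈ B, b ≤ u}.Nonempty := hbd
  refine ⟨wellFounded_lt.min _ hUne, wellFounded_lt.min_mem _ hUne, ?_⟩
  intro u hu
  exact not_lt.mp (wellFounded_lt.not_lt_min {u : V | ∀ b ∈ B, b ≤ u} hu)

lemma aux_Ioi_club (hreg : κ.IsRegular) (hunc : ℵ₀ < κ) (hcard : #V = κ)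
    (hseg : ∀ a : V, #{b : V | b < a} < κ) (c : V) : IsClubSet (Set.Ioi c) := by
  constructor
  · intro a
    obtain ⟨z, hz⟩ := aux_gt hreg hunc hcard hseg (max a c)
    exact ⟨z, lt_of_le_of_lt (le_max_right a c) hz, lt_of_le_of_lt (le_max_left a c) hz⟩
  · rintro a ⟨b₀, hb₀⟩ hacc
    obtain ⟨d, hd, _, hda⟩ := hacc b₀ hb₀
    exact lt_trans hd hda

lemma aux_club_inter (hreg : κ.IsRegular) (hunc : ℵ₀ < κ) (hcard : #V = κ)
    (hseg : ∀ a : V, #{b : V | b < a} < κ) {ι : Type} (hι : #ι < κ)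
    (Cf : ι → Set V) (hCf : ∀ i, IsClubSet (Cf i)) (x : V) :
    ∃ y : V, x < y ∧ ∀ i, y ∈ Cf i := by
  have hnxt : ∀ (i : ι) (w : V), ∃ z ∈ Cf i, w < z := fun i w => (hCf i).1 w
  choose nxt hnxt1 hnxt2 using hnxt
  have hstep : ∀ w : V, ∃ z : V, w < z ∧ ∀ i, nxt i w ≤ z := by
    intro w
    obtain ⟨w', hw'⟩ := aux_gt hreg hunc hcard hseg w
    set B : Set V := Set.range (fun i => nxt i w) ∪ {w'} with hB
    have hBcard : #B < κ := by
      refine lt_of_le_of_lt (Cardinal.mk_union_le _ _) ?_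
      refine Cardinal.add_lt_of_lt hreg.aleph0_le
        (lt_of_le_of_lt Cardinal.mk_range_le hι) ?_
      rw [Cardinal.mk_singleton]
      exact lt_trans one_lt_aleph0 hunc
    obtain ⟨u, hu⟩ := aux_bounded hreg hunc hcard hseg B hBcard
    refine ⟨u, ?_, ?_⟩
    · exact lt_of_lt_of_le hw' (hu w' (Or.inr rfl))
    · intro i; exact hu _ (Or.inl ⟨i, rfl⟩)
  choose step hstep1 hstep2 using hstep
  set y : ℕ → V := fun n => Nat.rec x (fun _ w => step w) n with hy
  have hy0 : y 0 = x := rfl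
  have hysucc : ∀ n, y (n + 1) = step (y n) := fun n => rfl
  have hmono : StrictMono y := strictMono_nat_of_lt_succ (fun n => hstep1 (y n))
  have hrange : #(Set.range y) < κ :=
    lt_of_le_of_lt (le_trans Cardinal.mk_range_le Cardinal.mk_le_aleph0) hunc
  obtain ⟨m, hub, hlst⟩ := aux_lub (Set.range y) ⟨x, 0, rfl⟩
    (aux_bounded hreg hunc hcard hseg _ hrange)
  have hylt : ∀ n, y n < m := fun n =>
    lt_of_lt_of_le (hmono (Nat.lt_succ_self n)) (hub _ ⟨n + 1, rfl⟩)
  have hfind : ∀ b, b < m → ∃ n, b < y n := by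
    intro b hb
    by_contra hcon
    push_neg at hcon
    have : ∀ v ∈ Set.range y, v ≤ b := by rintro v ⟨n, rfl⟩; exact hcon n
    exact absurd hb (not_lt.mpr (hlst b this))
  refine ⟨m, lt_of_le_of_lt (le_of_eq hy0.symm) (hylt 0), ?_⟩
  intro i
  refine (hCf i).2 m ⟨x, lt_of_le_of_lt (le_of_eq hy0.symm) (hylt 0)⟩ ?_
  intro b hb
  obtain ⟨n, hn⟩ := hfind b hb
  refine ⟨nxt i (y n), hnxt1 i (y n), lt_trans hn (hnxt2 i (y n)), ?_⟩
  calc nxt i (y n) ≤ y (n + 1) := by rw [hysucc]; exact hstep2 (y n) i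
  _ < m := hylt (n + 1)

lemma aux_fodor (hreg : κ.IsRegular) (hunc : ℵ₀ < κ) (hcard : #V = κ)
    (hseg : ∀ a : V, #{b : V | b < a} < κ) (S : Set V) (hstat : IsStatSet S)
    (g : V → V) (hg : ∀ a ∈ S, g a < a)
    (hfib : ∀ b : V, {x | x ∈ S ∧ g x = b}.Finite) : False := by
  have hm : ∀ b : V, ∃ mb : V, ∀ a ∈ {x | x ∈ S ∧ g x = b}, a ≤ mb := by
    intro b
    exact aux_bounded hreg hunc hcard hseg _
      (lt_trans ((hfib b).lt_aleph0) hunc)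
  choose m hm using hm
  set Δ : Set V := {x | ∀ b, b < x → m b < x} with hΔ
  have hIic : ∀ w : V, #(Set.Iic w) < κ := by
    intro w
    rw [show (Set.Iic w : Set V) = insert w (Set.Iio w) from (Set.Iio_insert).symm]
    refine lt_of_le_of_lt Cardinal.mk_insert_le ?_
    exact Cardinal.add_lt_of_lt hreg.aleph0_le (hseg w) (lt_trans one_lt_aleph0 hunc)
  have hclub : IsClubSet Δ := by
    constructor
    · -- unbounded
      intro x₀
      have hstep : ∀ w : V, ∃ z : V, w < z ∧ ∀ b ≤ w, m b < z := by
        intro w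
        obtain ⟨z, hz1, hz2⟩ := aux_club_inter hreg hunc hcard hseg
          (ι := Set.Iic w) (hIic w) (fun i => Set.Ioi (m (i : V)))
          (fun i => aux_Ioi_club hreg hunc hcard hseg _) w
        exact ⟨z, hz1, fun b hb => hz2 ⟨b, hb⟩⟩
      choose step h1 h2 using hstep
      set y : ℕ → V := fun n => Nat.rec x₀ (fun _ w => step w) n with hy
      have hysucc : ∀ n, y (n + 1) = step (y n) := fun n => rfl
      have hmono : StrictMono y := strictMono_nat_of_lt_succ (fun n => h1 (y n))
      have hrange : #(Set.range y) < κ :=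
        lt_of_le_of_lt (le_trans Cardinal.mk_range_le Cardinal.mk_le_aleph0) hunc
      obtain ⟨mI, hub, hlst⟩ := aux_lub (Set.range y) ⟨x₀, 0, rfl⟩
        (aux_bounded hreg hunc hcard hseg _ hrange)
      have hylt : ∀ n, y n < mI := fun n =>
        lt_of_lt_of_le (hmono (Nat.lt_succ_self n)) (hub _ ⟨n + 1, rfl⟩)
      refine ⟨mI, ?_, hylt 0⟩
      intro b hb
      have : ∃ n, b < y n := by
        by_contra hcon
        push_neg at hcon
        have : ∀ v ∈ Set.range y, v ≤ b := by rintro v ⟨n, rfl⟩; exact hcon n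
        exact absurd hb (not_lt.mpr (hlst b this))
      obtain ⟨n, hn⟩ := this
      have : m b < y (n + 1) := by rw [hysucc]; exact h2 (y n) b (le_of_lt hn)
      exact lt_trans this (hylt (n + 1))
    · -- closed
      rintro x hpred hacc b hb
      obtain ⟨d, hd, hbd, hdx⟩ := hacc b hb
      exact lt_trans (hd b hbd) hdx
  obtain ⟨a, haS, haΔ⟩ := hstat Δ hclub
  have h1 : a ≤ m (g a) := hm (g a) a ⟨haS, rfl⟩
  have h2 : m (g a) < a := haΔ (g a) (hg a haS)
  exact absurd h1 (not_le.mpr h2)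

end Helpers

section SegHelpers
variable {V : Type} [LinearOrder V] [WellFoundedLT V]

lemma aux_segCof_le_one {a b : V} (hb : b < a) (hmax : ∀ c, c < a → c ≤ b) :
    segCof a ≤ 1 := by
  refine csInf_le' ?_
  exact ⟨{b}, Set.singleton_subset_iff.mpr hb, fun c hc => ⟨b, rfl, hmax c hc⟩,
    Cardinal.mk_singleton b⟩

lemma aux_segCof_nonempty_set (a : V) :
    {c : Cardinal | ∃ s : Set V, s ⊆ Set.Iio a ∧ (∀ b < a, ∃ x ∈ s, b ≤ x) ∧ #s = c}.Nonempty :=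
  ⟨#(Set.Iio a), Set.Iio a, subset_rfl, fun b hb => ⟨b, hb, le_rfl⟩, rfl⟩

lemma aux_nomax_of_inf {a : V} (ha : ℵ₀ ≤ segCof a) : ∀ b, b < a → ∃ c, b < c ∧ c < a := by
  intro b hb
  by_contra hcon
  push_neg at hcon
  have h1 : segCof a ≤ 1 := aux_segCof_le_one hb (fun c hc => by
    by_contra hle
    exact absurd hc (not_lt.mpr (hcon c (not_le.mp hle))))
  exact absurd (le_trans ha h1) (not_le.mpr Cardinal.one_lt_aleph0)

lemma aux_nonempty_of_inf {a : V} (ha : ℵ₀ ≤ segCof a) : ∃ b, b < a := by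
  by_contra hcon
  push_neg at hcon
  have h0 : segCof a ≤ 0 := by
    refine csInf_le' ?_
    exact ⟨∅, Set.empty_subset _, fun b hb => absurd hb (not_lt.mpr (hcon b)),
      Cardinal.mk_emptyCollection V⟩
  have h1 := le_trans ha h0
  rw [le_zero_iff] at h1
  exact absurd h1 Cardinal.aleph0_ne_zero

lemma aux_ladder {S : Set V} (hScof : ∀ a ∈ S, segCof a = ℵ₀) (a : V)
    (ha : segCof a = ℵ₀) :
    ∃ ℓ : ℕ → V, StrictMono ℓ ∧ (∀ n, ℓ n < a) ∧ (∀ n, ℓ n ∉ S) ∧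
      ∀ b, b < a → ∃ n, b < ℓ n := by
  classical
  have hinf : ℵ₀ ≤ segCof a := le_of_eq ha.symm
  have hnm := aux_nomax_of_inf hinf
  have hmem := csInf_mem (aux_segCof_nonempty_set a)
  rw [show sInf {c : Cardinal | ∃ s : Set V, s ⊆ Set.Iio a ∧ (∀ b < a, ∃ x ∈ s, b ≤ x) ∧ #s = c}
      = segCof a from rfl, ha] at hmem
  obtain ⟨s, hs1, hs2, hs3⟩ := hmem
  have hsequiv : Nonempty (↥s ≃ ℕ) := Cardinal.eq.mp (by rw [hs3, Cardinal.mk_nat])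
  obtain ⟨e⟩ := hsequiv
  set u : ℕ → ↥s := fun n => e.symm n with hu
  -- successor function
  set ms : V → V := fun b => if h : ({c : V | b < c}).Nonempty then wellFounded_lt.min _ h else b
    with hms
  have hms1 : ∀ b : V, b < a → b < ms b := by
    intro b hb
    obtain ⟨c, hc1, hc2⟩ := hnm b hb
    rw [hms]; simp only
    rw [dif_pos ⟨c, hc1⟩]
    exact wellFounded_lt.min_mem _ ⟨c, hc1⟩
  have hms2 : ∀ b c : V, b < a → b < c → ms b ≤ c := by
    intro b c hb hc
    rw [hms]; simp only
    rw [dif_pos ⟨c, hc⟩]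
    exact not_lt.mp (wellFounded_lt.not_lt_min {c : V | b < c} hc)
  have hmslt : ∀ b : V, b < a → ms b < a := by
    intro b hb
    obtain ⟨c, hc1, hc2⟩ := hnm b hb
    exact lt_of_le_of_lt (hms2 b c hb hc1) hc2
  have hmsmax : ∀ b c : V, b < a → c < ms b → c ≤ b := by
    intro b c hb hc
    by_contra hle
    exact absurd hc (not_lt.mpr (hms2 b c hb (not_le.mp hle)))
  -- the increasing sequence
  have hx0 : ((u 0 : V)) < a := hs1 (u 0).2
  have hstepex : ∀ (w : {v : V // v < a}) (n : ℕ), ∃ z : V, (w : V) < z ∧ (u n : V) ≤ z ∧ z < a := by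
    intro w n
    have hb : max (w : V) (u n : V) < a := max_lt w.2 (hs1 (u n).2)
    obtain ⟨c, hc1, hc2⟩ := hnm _ hb
    exact ⟨c, lt_of_le_of_lt (le_max_left _ _) hc1,
      le_of_lt (lt_of_le_of_lt (le_max_right _ _) hc1), hc2⟩
  choose stp p1 p2 p3 using hstepex
  set x : ℕ → {v : V // v < a} :=
    fun n => Nat.rec (⟨(u 0 : V), hx0⟩ : {v : V // v < a}) (fun n w => ⟨stp w n, p3 w n⟩) n with hx
  have hxsucc : ∀ n, (x (n+1) : V) = stp (x n) n := fun n => rfl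
  have hxlt : ∀ n, (x n : V) < (x (n+1) : V) := fun n => by rw [hxsucc]; exact p1 (x n) n
  have hxu : ∀ n, (u n : V) ≤ (x (n+1) : V) := fun n => by rw [hxsucc]; exact p2 (x n) n
  refine ⟨fun n => ms (x n), ?_, ?_, ?_, ?_⟩
  · refine strictMono_nat_of_lt_succ (fun n => ?_)
    exact lt_of_le_of_lt (hms2 _ _ (x n).2 (hxlt n)) (hms1 _ (x (n+1)).2)
  · exact fun n => hmslt _ (x n).2
  · intro n hS
    have h1 : segCof (ms (x n)) = ℵ₀ := hScof _ hS
    have h2 : segCof (ms (x n)) ≤ 1 :=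
      aux_segCof_le_one (hms1 _ (x n).2) (fun c hc => hmsmax _ c (x n).2 hc)
    rw [h1] at h2
    exact absurd h2 (not_le.mpr Cardinal.one_lt_aleph0)
  · intro b hb
    obtain ⟨z, hz, hbz⟩ := hs2 b hb
    refine ⟨(e ⟨z, hz⟩) + 1, ?_⟩
    have : (u (e ⟨z, hz⟩) : V) = z := by rw [hu]; simp
    calc b ≤ z := hbz
    _ = (u (e ⟨z, hz⟩) : V) := this.symm
    _ ≤ (x (e ⟨z, hz⟩ + 1) : V) := hxu _
    _ < ms (x (e ⟨z, hz⟩ + 1)) := hms1 _ (x (e ⟨z, hz⟩ + 1)).2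

end SegHelpers

section CC
variable {V : Type} [LinearOrder V] [WellFoundedLT V]

lemma aux_segCof_inf {a : V} (hne : ∃ b, b < a)
    (hnm : ∀ b, b < a → ∃ c, b < c ∧ c < a) : ℵ₀ ≤ segCof a := by
  refine le_csInf (aux_segCof_nonempty_set a) ?_
  rintro c ⟨s, hs1, hs2, rfl⟩
  have hsinf : s.Infinite := by
    intro hfin
    rcases s.eq_empty_or_nonempty with hemp | hsne
    · obtain ⟨b, hb⟩ := hne
      obtain ⟨z, hz, _⟩ := hs2 b hb
      rw [hemp] at hz
      exact hz
    · obtain ⟨m, hm, hmax⟩ := Set.Finite.exists_maximalFor id s hfin hsne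
      obtain ⟨c, hc1, hc2⟩ := hnm m (hs1 hm)
      obtain ⟨z, hz, hcz⟩ := hs2 c hc2
      have h1 : m ≤ z := le_of_lt (lt_of_lt_of_le hc1 hcz)
      have h2 : m = z := le_antisymm h1 (hmax hz h1)
      rw [← h2] at hcz
      exact absurd hc1 (not_lt.mpr hcz)
  haveI := Set.infinite_coe_iff.mpr hsinf
  exact Cardinal.aleph0_le_mk s

lemma aux_C {S : Set V} (hScof : ∀ a ∈ S, segCof a = ℵ₀)
    (hnonrefl : ∀ a : V, ℵ₀ < segCof a → ¬ IsStatSet {b : Set.Iio a | (b : V) ∈ S})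
    (a : V) (hne : ∃ b, b < a) (hnm : ∀ b, b < a → ∃ c, b < c ∧ c < a) :
    ∃ C : Set V, (∀ c ∈ C, c < a) ∧ (∀ b, b < a → ∃ c ∈ C, b < c) ∧
      (∀ x, x < a → (∃ b, b < x) → (∀ b, b < x → ∃ c ∈ C, b < c ∧ c < x) → x ∈ C) ∧
      ∀ c ∈ C, c ∉ S := by
  have hinf : ℵ₀ ≤ segCof a := aux_segCof_inf hne hnm
  rcases eq_or_lt_of_le hinf with heq | hlt
  · -- countable cofinality: use a ladder
    obtain ⟨ℓ, hmono, hlta, hnotS, hcof⟩ := aux_ladder hScof a heq.symm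
    refine ⟨Set.range ℓ, ?_, ?_, ?_, ?_⟩
    · rintro c ⟨n, rfl⟩; exact hlta n
    · intro b hb
      obtain ⟨n, hn⟩ := hcof b hb
      exact ⟨ℓ n, ⟨n, rfl⟩, hn⟩
    · rintro x hx ⟨b₀, hb₀⟩ hacc
      have hex : ∃ n, ¬ ℓ n < x := by
        obtain ⟨n, hn⟩ := hcof x hx
        exact ⟨n, not_lt.mpr (le_of_lt hn)⟩
      have hjlt : ∀ j : ℕ, ℓ j < x → j < Nat.find hex := by
        intro j hj
        by_contra hle
        have h1 : ℓ (Nat.find hex) ≤ ℓ j := hmono.monotone (not_lt.mp hle)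
        have h2 : ¬ ℓ (Nat.find hex) < x := Nat.find_spec hex
        exact h2 (lt_of_le_of_lt h1 hj)
      rcases Nat.eq_zero_or_pos (Nat.find hex) with h0 | hpos
      · obtain ⟨c, ⟨j, rfl⟩, _, hcx⟩ := hacc b₀ hb₀
        have := hjlt j hcx
        omega
      · have hm1 : ℓ (Nat.find hex - 1) < x := by
          have := Nat.find_min hex (m := Nat.find hex - 1) (by omega)
          exact not_not.mp this
        obtain ⟨c, ⟨j, rfl⟩, hlt2, hcx⟩ := hacc _ hm1
        have hj := hjlt j hcx
        have : ℓ j ≤ ℓ (Nat.find hex - 1) := hmono.monotone (by omega)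
        exact absurd hlt2 (not_lt.mpr this)
    · rintro c ⟨n, rfl⟩; exact hnotS n
  · -- uncountable cofinality: use non-reflection
    have hns := hnonrefl a hlt
    rw [IsStatSet] at hns
    push_neg at hns
    obtain ⟨Cs, hCs, hdisj⟩ := hns
    refine ⟨{v : V | ∃ h : v < a, (⟨v, h⟩ : Set.Iio a) ∈ Cs}, ?_, ?_, ?_, ?_⟩
    · rintro c ⟨h, _⟩; exact h
    · intro b hb
      obtain ⟨q, hq, hlt2⟩ := hCs.1 ⟨b, hb⟩
      exact ⟨(q : V), ⟨q.2, by simpa using hq⟩, hlt2⟩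
    · rintro x hx ⟨b₀, hb₀⟩ hacc
      have hmem : (⟨x, hx⟩ : Set.Iio a) ∈ Cs := by
        refine hCs.2 ⟨x, hx⟩ ⟨⟨b₀, lt_trans hb₀ hx⟩, hb₀⟩ ?_
        rintro ⟨q, hqa⟩ hq
        obtain ⟨c, ⟨hca, hcmem⟩, hqc, hcx⟩ := hacc q hq
        exact ⟨⟨c, hca⟩, hcmem, hqc, hcx⟩
      exact ⟨hx, hmem⟩
    · rintro c ⟨hca, hcmem⟩ hcS
      have : (⟨c, hca⟩ : Set.Iio a) ∈ {b : Set.Iio a | (b : V) ∈ S} ∩ Cs := ⟨hcS, hcmem⟩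
      rw [hdisj] at this
      exact this

lemma aux_normalize {V : Type} [LinearOrder V] (A : V → V → Prop) (a : V)
    {T : Type*} [LinearOrder T] [WellFoundedLT T] (k₀ : V → T)
    (hinj : Set.InjOn k₀ (Set.Iic a))
    (hfin : ∀ x ∈ Set.Iic a, {y | y ∈ Set.Iic a ∧ A x y ∧ k₀ y < k₀ x}.Finite) :
    ∃ k : V → Ordinal.{0}, Set.InjOn k (Set.Iic a) ∧
      ∀ x ∈ Set.Iic a, {y | y ∈ Set.Iic a ∧ A x y ∧ k y < k x}.Finite := by
  classical
  set ρ : ↥(Set.Iic a) → ↥(Set.Iic a) → Prop := fun x y => k₀ (x : V) < k₀ (y : V) with hρ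
  haveI hwo : IsWellOrder ↥(Set.Iic a) ρ :=
    { trichotomous := by
        intro x y
        suffices hs : ρ x y ∨ x = y ∨ ρ y x by
          intro h1 h2; rcases hs with h | h | h
          exacts [absurd h h1, h, absurd h h2]
        rcases lt_trichotomy (k₀ (x : V)) (k₀ (y : V)) with h | h | h
        · exact Or.inl h
        · exact Or.inr (Or.inl (Subtype.ext (hinj x.2 y.2 h)))
        · exact Or.inr (Or.inr h)
      wf := InvImage.wf _ wellFounded_lt }
  refine ⟨fun v => if h : v ∈ Set.Iic a then Ordinal.typein ρ ⟨v, h⟩ else 0, ?_, ?_⟩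
  · intro x hx y hy hxy
    simp only [dif_pos hx, dif_pos hy] at hxy
    have := Ordinal.typein_injective ρ hxy
    exact congrArg Subtype.val this
  · intro x hx
    refine (hfin x hx).subset ?_
    rintro y ⟨hy, hadj, hlt⟩
    refine ⟨hy, hadj, ?_⟩
    simp only [dif_pos hy, dif_pos hx] at hlt
    exact (Ordinal.typein_lt_typein ρ).mp hlt

end CC

section Key
variable {V : Type} [LinearOrder V] [WellFoundedLT V]

lemma aux_goodkey {S : Set V} (hScof : ∀ a ∈ S, segCof a = ℵ₀)
    (hnonrefl : ∀ a : V, ℵ₀ < segCof a → ¬ IsStatSet {b : Set.Iio a | (b : V) ∈ S})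
    (Lad : V → ℕ → V)
    (hLad : ∀ a ∈ S, StrictMono (Lad a) ∧ (∀ n, Lad a n < a) ∧ (∀ n, Lad a n ∉ S) ∧
      ∀ b, b < a → ∃ n, b < Lad a n)
    (A : V → V → Prop)
    (hA : ∀ x y, A x y ↔ ((y ∈ S ∧ x ∈ Set.range (Lad y)) ∨ (x ∈ S ∧ y ∈ Set.range (Lad x))))
    (a : V) :
    ∃ k : V → Ordinal.{0}, Set.InjOn k (Set.Iic a) ∧
      ∀ x ∈ Set.Iic a, {y | y ∈ Set.Iic a ∧ A x y ∧ k y < k x}.Finite := by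
  classical
  induction a using WellFoundedLT.induction with
  | ind a IH =>
  by_cases hne : ∃ b, b < a
  case neg =>
    -- `a` is the minimum
    have hall : ∀ x ∈ Set.Iic a, x = a := fun x hx =>
      le_antisymm hx (not_lt.mp (fun h => hne ⟨x, h⟩))
    refine ⟨fun _ => 0, ?_, ?_⟩
    · intro x hx y hy _
      exact (hall x hx).trans (hall y hy).symm
    · intro x hx
      refine Set.Finite.subset Set.finite_empty ?_
      rintro y ⟨-, -, hlt⟩
      exact absurd hlt (lt_irrefl _)
  case pos =>
  by_cases hmax : ∃ m, m < a ∧ ∀ c, c < a → c ≤ m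
  case pos =>
    -- successor case
    obtain ⟨m, hma, hmx⟩ := hmax
    obtain ⟨km, hkm_inj, hkm_fin⟩ := IH m hma
    have hanotS : a ∉ S := by
      intro haS
      have h1 := hScof a haS
      have h2 := aux_segCof_le_one hma hmx
      rw [h1] at h2
      exact absurd h2 (not_le.mpr Cardinal.one_lt_aleph0)
    have hlem : ∀ c, c ≤ a → c ≠ a → c ≤ m := fun c hc hcne =>
      hmx c (lt_of_le_of_ne hc hcne)
    have hpos : ∀ y : V, (0 : Ordinal) < km y + 1 := fun y =>
      lt_of_lt_of_le zero_lt_one (le_add_self : (1 : Ordinal) ≤ km y + 1)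
    refine ⟨fun x => if x = a then 0 else km x + 1, ?_, ?_⟩
    · intro x hx y hy hxy
      by_cases hxa : x = a <;> by_cases hya : y = a
      · rw [hxa, hya]
      · simp only [if_pos hxa, if_neg hya] at hxy
        exact absurd hxy (ne_of_lt (hpos y))
      · simp only [if_neg hxa, if_pos hya] at hxy
        exact absurd hxy (ne_of_gt (hpos x))
      · simp only [if_neg hxa, if_neg hya] at hxy
        have hkk : km x = km y := by
          by_contra hne2
          rcases lt_or_gt_of_ne hne2 with h | h
          · have := Order.succ_lt_succ (a := km x) (b := km y) h
            rw [← Ordinal.add_one_eq_succ, ← Ordinal.add_one_eq_succ] at this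
            exact absurd hxy (ne_of_lt this)
          · have := Order.succ_lt_succ (a := km y) (b := km x) h
            rw [← Ordinal.add_one_eq_succ, ← Ordinal.add_one_eq_succ] at this
            exact absurd hxy (ne_of_gt this)
        exact hkm_inj (hlem x hx hxa) (hlem y hy hya) hkk
    · intro x hx
      by_cases hxa : x = a
      · refine Set.Finite.subset Set.finite_empty ?_
        rintro y ⟨hy, hadj, hlt⟩
        simp only [if_pos hxa] at hlt
        rcases lt_or_ge (0 : Ordinal) (if y = a then 0 else km y + 1) with h | h
        · exact absurd hlt (not_lt.mpr (le_of_lt h))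
        · exact absurd hlt (not_lt_of_ge zero_le)
      · have hxm : x ≤ m := hlem x hx hxa
        refine Set.Finite.subset (hkm_fin x hxm) ?_
        rintro y ⟨hy, hadj, hlt⟩
        have hya : y ≠ a := by
          rintro rfl
          rcases (hA x y).mp hadj with ⟨hSy, -⟩ | ⟨hxS, n, hn⟩
          · exact hanotS hSy
          · have h1 := (hLad x hxS).2.1 n
            rw [hn] at h1
            exact absurd h1 (not_lt.mpr (le_trans hxm (le_of_lt hma)))
        refine ⟨hlem y hy hya, hadj, ?_⟩
        simp only [if_neg hxa, if_neg hya] at hlt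
        rw [Ordinal.add_one_eq_succ, Ordinal.add_one_eq_succ, Order.succ_lt_succ_iff] at hlt
        exact hlt
  case neg =>
    -- limit case
    push_neg at hmax
    have hnm : ∀ b, b < a → ∃ c, b < c ∧ c < a := by
      intro b hb
      obtain ⟨c, hc1, hc2⟩ := hmax b hb
      exact ⟨c, hc2, hc1⟩
    obtain ⟨C, hCsub, hCunb, hCclosed, hCS⟩ := aux_C hScof hnonrefl a hne hnm
    obtain ⟨b₀, hb₀⟩ := hne
    have hCne : ∀ x, x < a → ({c : V | c ∈ C ∧ x < c}).Nonempty := by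
      intro x hx
      obtain ⟨c, hc1, hc2⟩ := hCunb x hx
      exact ⟨c, hc1, hc2⟩
    set nA : V → V := fun x => if h : ({c : V | c ∈ C ∧ x < c}).Nonempty
      then wellFounded_lt.min _ h else b₀ with hnA
    have hnA1 : ∀ x, x < a → nA x ∈ C ∧ x < nA x := by
      intro x hx
      have h := hCne x hx
      rw [hnA]
      simp only [dif_pos h]
      exact wellFounded_lt.min_mem _ h
    have hnA2 : ∀ x c, x < a → c ∈ C → x < c → nA x ≤ c := by
      intro x c hx hc hxc
      have h := hCne x hx
      rw [hnA]
      simp only [dif_pos h]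
      exact not_lt.mp (wellFounded_lt.not_lt_min {c : V | c ∈ C ∧ x < c} ⟨hc, hxc⟩)
    have hKex : ∀ c : V, ∃ k : V → Ordinal, c < a →
        (Set.InjOn k (Set.Iic c) ∧
          ∀ x ∈ Set.Iic c, {y | y ∈ Set.Iic c ∧ A x y ∧ k y < k x}.Finite) := by
      intro c
      by_cases h : c < a
      · obtain ⟨k, h1, h2⟩ := IH c h
        exact ⟨k, fun _ => ⟨h1, h2⟩⟩
      · exact ⟨fun _ => 0, fun hc => absurd hc h⟩
    choose K hK using hKex
    refine aux_normalize A a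
      (fun x => if x = a then (⊥ : WithBot (Lex (V × Ordinal)))
        else ↑(toLex ((nA x, K (nA x) x) : V × Ordinal))) ?_ ?_
    · -- injectivity
      intro x hx y hy hxy
      by_cases hxa : x = a <;> by_cases hya : y = a
      · rw [hxa, hya]
      · simp only [if_pos hxa, if_neg hya] at hxy
        exact absurd hxy.symm WithBot.coe_ne_bot
      · simp only [if_neg hxa, if_pos hya] at hxy
        exact absurd hxy WithBot.coe_ne_bot
      · simp only [if_neg hxa, if_neg hya] at hxy
        have h2 := WithBot.coe_injective hxy
        have h3 : ((nA x, K (nA x) x) : V × Ordinal) = (nA y, K (nA y) y) :=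
          toLex.injective h2
        have hna : nA x = nA y := congrArg Prod.fst h3
        have hkk : K (nA x) x = K (nA x) y := by
          have h4 := congrArg Prod.snd h3
          simpa [← hna] using h4
        have hxlt : x < a := lt_of_le_of_ne hx hxa
        have hylt : y < a := lt_of_le_of_ne hy hya
        have hcax : nA x < a := hCsub _ (hnA1 x hxlt).1
        refine ((hK (nA x) hcax).1) (le_of_lt (hnA1 x hxlt).2) ?_ hkk
        rw [hna]
        exact le_of_lt (hnA1 y hylt).2
    · -- finiteness
      intro x hx
      by_cases hxa : x = a
      · refine Set.Finite.subset Set.finite_empty ?_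
        rintro y ⟨hy, hadj, hlt⟩
        simp only [if_pos hxa] at hlt
        exact absurd hlt (not_lt_bot)
      · have hxlt : x < a := lt_of_le_of_ne hx hxa
        obtain ⟨hcC, hxc⟩ := hnA1 x hxlt
        have hca : nA x < a := hCsub _ hcC
        have hEfin := (hK (nA x) hca).2 x (le_of_lt hxc)
        have hFfin : {y : V | y < a ∧ A x y ∧ nA y < nA x}.Finite := by
          rcases Set.eq_empty_or_nonempty {y : V | y < a ∧ A x y ∧ nA y < nA x} with
            hemp | ⟨y₁, hy₁⟩
          · rw [hemp]; exact Set.finite_empty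
          have hkey0 : ∀ y, y < a → A x y → nA y < nA x → nA y ≤ x ∧ y < x := by
            intro y hya hyadj hylt
            obtain ⟨hnyC, hyny⟩ := hnA1 y hya
            have h1 : nA y ≤ x := by
              by_contra hcc
              exact absurd (hnA2 x (nA y) hxlt hnyC (not_le.mp hcc)) (not_le.mpr hylt)
            exact ⟨h1, lt_of_lt_of_le hyny h1⟩
          have hxS : x ∈ S := by
            obtain ⟨hya, hyadj, hylt⟩ := hy₁
            have hy1x : y₁ < x := (hkey0 y₁ hya hyadj hylt).2
            rcases (hA x y₁).mp hyadj with ⟨hSy, n, hn⟩ | ⟨hSx, -⟩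
            · have h1 := (hLad y₁ hSy).2.1 n
              rw [hn] at h1
              exact absurd hy1x (asymm h1)
            · exact hSx
          have hLx := hLad x hxS
          have hCnex : ∀ d, d ∈ C → d ≠ x := fun d hd hdx => hCS d hd (hdx ▸ hxS)
          have hDne : ({d : V | d ∈ C ∧ d < x}).Nonempty := by
            obtain ⟨hya, hyadj, hylt⟩ := hy₁
            obtain ⟨hnyC, -⟩ := hnA1 y₁ hya
            exact ⟨nA y₁, hnyC,
              lt_of_le_of_ne (hkey0 y₁ hya hyadj hylt).1 (hCnex _ hnyC)⟩
          obtain ⟨γ, hub, hlst⟩ := aux_lub _ hDne ⟨x, fun d hd => le_of_lt hd.2⟩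
          have hγx : γ < x := by
            rcases lt_or_eq_of_le (hlst x (fun d hd => le_of_lt hd.2)) with h | h
            · exact h
            · exfalso
              have hxC : x ∈ C := by
                obtain ⟨hya, hyadj, hylt⟩ := hy₁
                refine hCclosed x hxlt ⟨y₁, (hkey0 y₁ hya hyadj hylt).2⟩ ?_
                intro b hb
                have hbγ : b < γ := by rw [h]; exact hb
                have hex2 : ∃ d ∈ {d : V | d ∈ C ∧ d < x}, b < d := by
                  by_contra hcc
                  push_neg at hcc
                  exact absurd (hlst b (fun d hd => hcc d hd)) (not_le.mpr hbγ)
                obtain ⟨d, ⟨hdC, hdx⟩, hbd⟩ := hex2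
                exact ⟨d, hdC, hbd, hdx⟩
              exact hCS x hxC hxS
          obtain ⟨M, hM⟩ := hLx.2.2.2 γ hγx
          refine Set.Finite.subset ((Set.finite_Iio M).image (Lad x)) ?_
          rintro y ⟨hya, hyadj, hylt⟩
          have hyx : y < x := (hkey0 y hya hyadj hylt).2
          obtain ⟨j, hj⟩ : y ∈ Set.range (Lad x) := by
            rcases (hA x y).mp hyadj with ⟨hSy, n, hn⟩ | ⟨-, hmem⟩
            · have h1 := (hLad y hSy).2.1 n
              rw [hn] at h1
              exact absurd hyx (asymm h1)
            · exact hmem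
          have hyγ : y < γ := by
            obtain ⟨hnyC, hyny⟩ := hnA1 y hya
            have h2 : nA y < x :=
              lt_of_le_of_ne (hkey0 y hya hyadj hylt).1 (hCnex _ hnyC)
            exact lt_of_lt_of_le hyny (hub _ ⟨hnyC, h2⟩)
          refine ⟨j, ?_, hj⟩
          by_contra hcc
          have h3 : Lad x M ≤ Lad x j := hLx.1.monotone (not_lt.mp hcc)
          rw [hj] at h3
          exact absurd (lt_trans hyγ hM) (not_lt.mpr h3)
        refine Set.Finite.subset (((Set.finite_singleton a).union hEfin).union hFfin) ?_
        rintro y ⟨hy, hadj, hlt⟩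
        by_cases hya : y = a
        · exact Or.inl (Or.inl hya)
        · have hylt : y < a := lt_of_le_of_ne hy hya
          simp only [if_neg hxa, if_neg hya, WithBot.coe_lt_coe] at hlt
          rw [Prod.Lex.lt_iff] at hlt
          rcases hlt with h | ⟨heq, h⟩
          · exact Or.inr ⟨hylt, hadj, h⟩
          · simp only [ofLex_toLex] at heq h
            refine Or.inl (Or.inr ⟨?_, hadj, ?_⟩)
            · have h5 := (hnA1 y hylt).2
              rw [heq] at h5
              exact le_of_lt h5
            · rw [heq] at h
              exact h
  
end Key

/-- If `κ` is regular uncountable and `S ⊆ κ ∩ Cof(ω)` is a non-reflecting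
stationary set, then there is a graph of size `κ` with uncountable coloring
number all of whose subgraphs of size `< κ` have countable coloring number. -/
theorem exists_graph_of_nonreflecting {V : Type} [LinearOrder V] [WellFoundedLT V]
    (κ : Cardinal) (hreg : κ.IsRegular) (hunc : ℵ₀ < κ)
    (hcard : #V = κ) (hseg : ∀ a : V, #{b : V | b < a} < κ)
    (S : Set V) (hScof : ∀ a ∈ S, segCof a = ℵ₀)
    (hstat : IsStatSet S)
    (hnonrefl : ∀ a : V, ℵ₀ < segCof a →
      ¬ IsStatSet {b : Set.Iio a | (b : V) ∈ S}) :
    ∃ (W : Type) (G : SimpleGraph W), #W = κ ∧ ℵ₀ < colNum G ∧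
      ∀ H : G.Subgraph, #H.verts < κ → colNum H.coe ≤ ℵ₀ := by
  classical
  -- choose ladders
  have hlad0 : ∀ a : V, ∃ ℓ : ℕ → V, a ∈ S →
      (StrictMono ℓ ∧ (∀ n, ℓ n < a) ∧ (∀ n, ℓ n ∉ S) ∧ ∀ b, b < a → ∃ n, b < ℓ n) := by
    intro a
    by_cases h : a ∈ S
    · obtain ⟨ℓ, h1, h2, h3, h4⟩ := aux_ladder hScof a (hScof a h)
      exact ⟨ℓ, fun _ => ⟨h1, h2, h3, h4⟩⟩
    · exact ⟨fun _ => a, fun hh => absurd hh h⟩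
  choose Lad hLad using hlad0
  set A : V → V → Prop := fun x y =>
    (y ∈ S ∧ x ∈ Set.range (Lad y)) ∨ (x ∈ S ∧ y ∈ Set.range (Lad x)) with hAdef
  have hA : ∀ x y, A x y ↔
      ((y ∈ S ∧ x ∈ Set.range (Lad y)) ∨ (x ∈ S ∧ y ∈ Set.range (Lad x))) := fun x y => Iff.rfl
  have hAsymm : ∀ x y : V, A x y → A y x := by
    intro x y h
    rcases h with h | h
    · exact Or.inr h
    · exact Or.inl h
  have hAirr : ∀ x : V, ¬ A x x := by
    intro x h
    rcases h with ⟨hS, n, hn⟩ | ⟨hS, n, hn⟩ <;>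
      exact absurd hn (ne_of_lt ((hLad x hS).2.1 n))
  refine ⟨V, ⟨A, ⟨fun x y h => hAsymm x y h⟩, ⟨fun x h => hAirr x h⟩⟩, hcard, ?_, ?_⟩
  · -- ℵ₀ < colNum G
    set G : SimpleGraph V := ⟨A, ⟨fun x y h => hAsymm x y h⟩, ⟨fun x h => hAirr x h⟩⟩ with hGdef
    have hTne : {μ : Cardinal | ∃ r : V → V → Prop, IsWellOrder V r ∧
        ∀ x : V, #{y : V | G.Adj x y ∧ r y x} < μ}.Nonempty := by
      refine ⟨Order.succ (#V), (· < ·), inferInstance, fun x => ?_⟩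
      exact lt_of_le_of_lt (Cardinal.mk_set_le _) (Order.lt_succ _)
    by_contra hcon
    push_neg at hcon
    have hmem : colNum G ∈ {μ : Cardinal | ∃ r : V → V → Prop, IsWellOrder V r ∧
        ∀ x : V, #{y : V | G.Adj x y ∧ r y x} < μ} := csInf_mem hTne
    obtain ⟨r, hwo, hdeg⟩ := hmem
    haveI : IsWellOrder V r := hwo
    have Bfin : ∀ x : V, {y : V | G.Adj x y ∧ r y x}.Finite := fun x =>
      Cardinal.lt_aleph0_iff_set_finite.mp (lt_of_lt_of_le (hdeg x) hcon)
    have hpick : ∀ a : V, ∃ y : V, a ∈ S → (G.Adj a y ∧ r a y ∧ y < a) := by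
      intro a
      by_cases ha : a ∈ S
      · obtain ⟨hmono, hlt, -, -⟩ := hLad a ha
        have hex : ∃ n, Lad a n ∉ {y : V | G.Adj a y ∧ r y a} := by
          by_contra hcc
          push_neg at hcc
          exact (Set.infinite_of_injective_forall_mem hmono.injective hcc) (Bfin a)
        obtain ⟨n, hn⟩ := hex
        have hadj : G.Adj a (Lad a n) := Or.inr ⟨ha, n, rfl⟩
        refine ⟨Lad a n, fun _ => ⟨hadj, ?_, hlt n⟩⟩
        rcases trichotomous (r := r) a (Lad a n) with h | h | h
        · exact h
        · exact absurd h.symm (ne_of_lt (hlt n))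
        · exact absurd (⟨hadj, h⟩ : Lad a n ∈ {y : V | G.Adj a y ∧ r y a}) hn
      · exact ⟨a, fun h => absurd h ha⟩
    choose g hg using hpick
    refine aux_fodor hreg hunc hcard hseg S hstat g (fun a ha => (hg a ha).2.2) ?_
    intro b
    refine (Bfin b).subset ?_
    rintro x ⟨hxS, hgx⟩
    obtain ⟨hadj, hr, -⟩ := hg x hxS
    rw [hgx] at hadj hr
    exact ⟨hadj.symm, hr⟩
  · -- small subgraphs
    intro H hH
    obtain ⟨aB, haB⟩ := aux_bounded hreg hunc hcard hseg H.verts hH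
    obtain ⟨k, hkinj, hkfin⟩ := aux_goodkey hScof hnonrefl Lad hLad A hA aB
    have hwo : IsWellOrder ↥H.verts (fun x y => k (x : V) < k (y : V)) :=
      { trichotomous := by
          intro x y
          suffices hs : k (x : V) < k (y : V) ∨ x = y ∨ k (y : V) < k (x : V) by
            intro h1 h2; rcases hs with h | h | h
            exacts [absurd h h1, h, absurd h h2]
          rcases lt_trichotomy (k (x : V)) (k (y : V)) with h | h | h
          · exact Or.inl h
          · exact Or.inr (Or.inl (Subtype.ext (hkinj (haB _ x.2) (haB _ y.2) h)))
          · exact Or.inr (Or.inr h)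
        wf := InvImage.wf _ wellFounded_lt }
    refine csInf_le' ⟨fun x y => k (x : V) < k (y : V), hwo, ?_⟩
    intro x
    have hfin : {y : ↥H.verts | H.coe.Adj x y ∧ k (y : V) < k (x : V)}.Finite := by
      have hbig := hkfin (x : V) (haB _ x.2)
      refine Set.Finite.subset
        (Set.Finite.preimage (Set.injOn_of_injective Subtype.val_injective) hbig) ?_
      rintro y ⟨hadj, hlt⟩
      exact ⟨haB _ y.2, H.adj_sub hadj, hlt⟩
    exact hfin.lt_aleph0
end

section
/- Assume CH. Let X = (κ, E) be a κ-nice graph on κ ≥ ω₂. Then for every countable set x ⊆ κ, the set {β < κ : E^β ∩ x is infinite} is at most countable. -/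
open Cardinal

/-- Assume CH.  If `X` is a `κ`-nice graph on `κ ≥ ω₂`, then for every countable
set `x` of vertices, the set of vertices having infinitely many neighbors in `x`
is at most countable. -/
theorem countable_of_knice {V : Type} [LinearOrder V] [WellFoundedLT V]
    (κ : Cardinal) (hκ : Cardinal.aleph 2 ≤ κ) (hCH : 2 ^ ℵ₀ = Cardinal.aleph 1)
    (hcard : #V = κ) (hseg : ∀ a : V, #{b : V | b < a} < κ)
    (G : SimpleGraph V)
    (hnice1 : colNum G ≤ Cardinal.aleph 1)
    (hnice2 : ∀ H : G.Subgraph, #H.verts = Cardinal.aleph 1 → colNum H.coe ≤ ℵ₀)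
    (hnice3 : ∀ a : V, #{b : V | G.Adj a b ∧ b < a} ≤ ℵ₀)
    (x : Set V) (hx : x.Countable) :
    {b : V | (x ∩ {c : V | G.Adj b c}).Infinite}.Countable := by
  classical
  by_contra hS
  set S : Set V := {b : V | (x ∩ {c : V | G.Adj b c}).Infinite} with hSdef
  -- `S` has cardinality at least ℵ₁
  have hS1 : Cardinal.aleph 1 ≤ #S := by
    rw [← Cardinal.succ_aleph0]
    apply Order.succ_le_of_lt
    by_contra hlt
    push_neg at hlt
    exact hS (Cardinal.mk_le_aleph0_iff.mp hlt |>.to_set)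
  -- a subset `B` of `S` of cardinality exactly ℵ₁
  obtain ⟨p, hp⟩ := Cardinal.le_mk_iff_exists_set.mp hS1
  set B : Set V := Subtype.val '' p with hBdef
  have hBS : B ⊆ S := by rintro b ⟨⟨b, hb⟩, _, rfl⟩; exact hb
  have hBcard : #B = Cardinal.aleph 1 := by
    rw [hBdef, Cardinal.mk_image_eq Subtype.val_injective, hp]
  -- the vertex set of our subgraph
  set W : Set V := x ∪ B with hWdef
  have hxW : x ⊆ W := Set.subset_union_left
  have hBW : B ⊆ W := Set.subset_union_right
  have hWcard : #W = Cardinal.aleph 1 := by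
    apply le_antisymm
    · refine le_trans (Cardinal.mk_union_le x B) ?_
      rw [hBcard]
      calc #x + Cardinal.aleph 1 ≤ ℵ₀ + Cardinal.aleph 1 := by
            exact add_le_add_left (Cardinal.mk_le_aleph0_iff.mpr hx.to_subtype) _
        _ = Cardinal.aleph 1 := by
            exact Cardinal.add_eq_right Cardinal.aleph0_lt_aleph_one.le
              Cardinal.aleph0_lt_aleph_one.le
    · rw [← hBcard]; exact Cardinal.mk_le_mk_of_subset hBW
  -- the induced subgraph on W
  set H : G.Subgraph := (⊤ : G.Subgraph).induce W with hHdef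
  have hHverts : H.verts = W := rfl
  have hHadj : ∀ a b : V, a ∈ W → b ∈ W → G.Adj a b → H.Adj a b := by
    intro a b ha hb hadj
    exact ⟨ha, hb, hadj⟩
  have hcol : colNum H.coe ≤ ℵ₀ := hnice2 H (by rw [hHverts]; exact hWcard)
  -- extract a witnessing well-order with finitely many earlier neighbors
  set colset : Set Cardinal :=
    {κ : Cardinal | ∃ r : H.verts → H.verts → Prop, IsWellOrder H.verts r ∧
      ∀ v : H.verts, #{y : H.verts | H.coe.Adj v y ∧ r y v} < κ} with hcolset
  have hne : colset.Nonempty := by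
    refine ⟨Order.succ (#H.verts), WellOrderingRel, WellOrderingRel.isWellOrder, ?_⟩
    intro v
    exact lt_of_le_of_lt (Cardinal.mk_set_le _) (Order.lt_succ _)
  have hmem : sInf colset ∈ colset := csInf_mem hne
  obtain ⟨r, hwo, hbound⟩ := hmem
  have hfin : ∀ v : H.verts, {y : H.verts | H.coe.Adj v y ∧ r y v}.Finite := by
    intro v
    have : #{y : H.verts | H.coe.Adj v y ∧ r y v} < ℵ₀ :=
      lt_of_lt_of_le (hbound v) hcol
    exact Cardinal.lt_aleph0_iff_set_finite.mp this
  -- the copy of B inside the subtype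
  set S' : Set H.verts := {v : H.verts | (v : V) ∈ B} with hS'def
  -- every element of S' has a neighbor in x coming r-after it
  have hkey : ∀ v ∈ S', ∃ c : H.verts, (c : V) ∈ x ∧ H.coe.Adj c v ∧ r v c := by
    intro v hv
    have hvS : (v : V) ∈ S := hBS hv
    have hinf : (x ∩ {c : V | G.Adj (v : V) c}).Infinite := hvS
    by_contra hno
    push_neg at hno
    -- then all neighbors of v in x would r-precede v, but there are only finitely many
    have hsub : (Subtype.val ⁻¹' (x ∩ {c : V | G.Adj (v : V) c}) : Set H.verts) ⊆
        {y : H.verts | H.coe.Adj v y ∧ r y v} := by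
      rintro y ⟨hyx, hyadj⟩
      have hadj : H.coe.Adj v y := by
        refine SimpleGraph.Subgraph.coe_adj _ _ _ |>.mpr ?_
        exact hHadj _ _ v.2 y.2 hyadj
      refine ⟨hadj, ?_⟩
      rcases (haveI := hwo; trichotomous_of r y v) with h | h | h
      · exact h
      · exact absurd (congrArg Subtype.val h) (hyadj.ne').elim
      · exact absurd h (hno y hyx hadj.symm)
    have hpre : (Subtype.val ⁻¹' (x ∩ {c : V | G.Adj (v : V) c}) : Set H.verts).Infinite := by
      apply Set.Infinite.preimage hinf
      rw [Subtype.range_coe_subtype]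
      intro c hc
      exact hxW hc.1
    exact (hpre.mono hsub) (hfin v)
  -- hence S' is contained in a countable union of finite sets
  have hS'sub : S' ⊆ ⋃ c ∈ {c : H.verts | (c : V) ∈ x},
      {y : H.verts | H.coe.Adj c y ∧ r y c} := by
    intro v hv
    obtain ⟨c, hcx, hcadj, hrc⟩ := hkey v hv
    exact Set.mem_biUnion hcx ⟨hcadj, hrc⟩
  have hxcnt : ({c : H.verts | (c : V) ∈ x}).Countable := by
    have : ({c : H.verts | (c : V) ∈ x}) = Subtype.val ⁻¹' x := rfl
    rw [this]
    exact hx.preimage Subtype.val_injective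
  have hS'cnt : S'.Countable := by
    refine Set.Countable.mono hS'sub ?_
    exact Set.Countable.biUnion hxcnt (fun c _ => (hfin c).countable)
  -- but S' has cardinality ℵ₁, contradiction
  have hS'card : Cardinal.aleph 1 ≤ #S' := by
    have himg : Subtype.val '' S' = B := by
      apply Set.Subset.antisymm
      · rintro b ⟨y, hy, rfl⟩; exact hy
      · intro b hb; exact ⟨⟨b, hBW hb⟩, hb, rfl⟩
    have : #B = #S' := by rw [← himg, Cardinal.mk_image_eq Subtype.val_injective]
    rw [← this, hBcard]
  have : Cardinal.aleph 1 ≤ ℵ₀ :=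
    le_trans hS'card (Cardinal.mk_le_aleph0_iff.mpr hS'cnt.to_subtype)
  exact absurd this (not_le.mpr Cardinal.aleph0_lt_aleph_one)
end

section
/- Let X be a graph and λ an infinite cardinal. Suppose there is a filtration ⟨X_α : α < δ⟩ of the vertex set of X (increasing, continuous, union all of X, each of size < |X|) such that for every α < δ: List(X_α) ≤ λ (as an induced subgraph), and for every vertex x ∉ X_α, |E^x ∩ X_α| < λ. Then List(X) ≤ λ. -/
open Cardinal

lemma listColorable_mono {V : Type} {G : SimpleGraph V} {κ κ' : Cardinal}
    (h : ListColorable G κ) (hle : κ ≤ κ') : ListColorable G κ' := by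
  intro C F hF
  have hsub : ∀ x : V, ∃ s : Set C, s ⊆ F x ∧ #s = κ := by
    intro x
    have : κ ≤ #(F x) := (hF x).symm ▸ hle
    obtain ⟨p, hp⟩ := Cardinal.le_mk_iff_exists_set.mp this
    refine ⟨Subtype.val '' p, ?_, ?_⟩
    · rintro c ⟨⟨c, hc⟩, _, rfl⟩; exact hc
    · rw [Cardinal.mk_image_eq Subtype.val_injective]; exact hp
  choose F0 hF0sub hF0card using hsub
  obtain ⟨f, hf, hm⟩ := h C F0 hF0card
  exact ⟨f, hf, fun x => hF0sub x (hm x)⟩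

lemma listColorable_succ {V : Type} (G : SimpleGraph V) :
    ListColorable G (Order.succ #V) := by
  intro C F hF
  have wo : IsWellOrder V WellOrderingRel := WellOrderingRel.isWellOrder
  have wf : WellFounded (@WellOrderingRel V) := wo.wf
  have key : ∀ (x : V) (ih : ∀ y, WellOrderingRel y x → C),
      (F x \ Set.range (fun p : {y // WellOrderingRel y x} => ih p.1 p.2)).Nonempty := by
    intro x ih
    rw [Set.diff_nonempty]
    intro hsub
    have h1 : #(F x) ≤ #(Set.range (fun p : {y // WellOrderingRel y x} => ih p.1 p.2)) :=
      Cardinal.mk_le_mk_of_subset hsub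
    have h2 := h1.trans (Cardinal.mk_range_le.trans (Cardinal.mk_subtype_le _))
    rw [hF x] at h2
    exact absurd h2 (Order.lt_succ #V).not_ge
  set f : V → C := wf.fix (fun x ih => (key x ih).some) with hfdef
  have hfix : ∀ x, f x = (key x (fun y _ => f y)).some := fun x => wf.fix_eq _ x
  have hmem : ∀ x, f x ∈ F x \ Set.range (fun p : {y // WellOrderingRel y x} => f p.1) := by
    intro x; rw [hfix x]; exact Set.Nonempty.some_mem _
  have hne : ∀ x y, WellOrderingRel y x → f x ≠ f y := by
    intro x y hr heq
    exact (hmem x).2 ⟨⟨y, hr⟩, heq.symm⟩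
  refine ⟨f, ?_, fun x => (hmem x).1⟩
  intro x y hxy
  rcases trichotomous_of WellOrderingRel x y with h | h | h
  · exact (hne y x h).symm
  · exact absurd h hxy.ne
  · exact hne x y h

lemma listColorable_of_listChromatic_le {V : Type} {G : SimpleGraph V} {lam : Cardinal}
    (h : listChromatic G ≤ lam) : ListColorable G lam := by
  have hne : {κ : Cardinal | ListColorable G κ}.Nonempty := ⟨_, listColorable_succ G⟩
  exact listColorable_mono (csInf_mem hne) h

lemma mk_diff_eq_of_lt {C : Type} {s t : Set C} {lam : Cardinal}
    (hlam : ℵ₀ ≤ lam) (hs : #s = lam) (ht : #t < lam) : #(s \ t : Set C) = lam := by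
  refine le_antisymm (hs ▸ Cardinal.mk_le_mk_of_subset Set.diff_subset) ?_
  by_contra hlt
  push_neg at hlt
  have h1 : s ⊆ (s \ t) ∪ (s ∩ t) := by
    intro c hc
    by_cases h : c ∈ t
    · exact Or.inr ⟨hc, h⟩
    · exact Or.inl ⟨hc, h⟩
  have h2 : #s ≤ #((s \ t) ∪ (s ∩ t) : Set C) := Cardinal.mk_le_mk_of_subset h1
  have h3 : #((s \ t) ∪ (s ∩ t) : Set C) ≤ #(s \ t : Set C) + #(s ∩ t : Set C) :=
    Cardinal.mk_union_le _ _
  have h4 : #(s ∩ t : Set C) < lam :=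
    lt_of_le_of_lt (Cardinal.mk_le_mk_of_subset Set.inter_subset_right) ht
  have : #s < lam := lt_of_le_of_lt (h2.trans h3) (Cardinal.add_lt_of_lt hlam hlt h4)
  rw [hs] at this; exact this.false

lemma listColorable_induce_subset {V : Type} {G : SimpleGraph V} {A B : Set V}
    (hBA : B ⊆ A) {κ : Cardinal}
    (h : ListColorable (G.induce A) κ) : ListColorable (G.induce B) κ := by
  intro C F hF
  classical
  let C' := C ⊕ (V × κ.out)
  let F' : ↥A → Set C' := fun a =>
    if hb : a.1 ∈ B then Sum.inl '' F ⟨a.1, hb⟩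
    else Sum.inr '' ((fun c => (a.1, c)) '' Set.univ)
  have hF' : ∀ a, #(F' a) = κ := by
    intro a
    by_cases hb : a.1 ∈ B
    · simp only [F', dif_pos hb]
      rw [Cardinal.mk_image_eq Sum.inl_injective]
      exact hF _
    · simp only [F', dif_neg hb]
      rw [Cardinal.mk_image_eq Sum.inr_injective,
        Cardinal.mk_image_eq (f := fun c => (a.1, c)) (fun c c' h => (Prod.mk.injEq _ _ _ _ ▸ h).2),
        Cardinal.mk_univ, Cardinal.mk_out]
  obtain ⟨g, hg, hgm⟩ := h C' F' hF'
  have hval : ∀ b : ↥B, ∃ c : C, c ∈ F b ∧ g ⟨b.1, hBA b.2⟩ = Sum.inl c := by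
    intro b
    have := hgm ⟨b.1, hBA b.2⟩
    simp only [F', dif_pos b.2] at this
    obtain ⟨c, hc, hceq⟩ := this
    exact ⟨c, hc, hceq.symm⟩
  choose f hf1 hf2 using hval
  refine ⟨f, ?_, hf1⟩
  intro x y hxy heq
  have hadj : (G.induce A).Adj ⟨x.1, hBA x.2⟩ ⟨y.1, hBA y.2⟩ := hxy
  exact hg hadj (by rw [hf2 x, hf2 y, heq])

lemma coloring_step {V C : Type} {G : SimpleGraph V} {lam : Cardinal} (hlam : ℵ₀ ≤ lam)
    (F : V → Set C) (hF : ∀ x, #(F x) = lam)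
    {A B : Set V} (hAB : A ⊆ B) (hcol : listChromatic (G.induce B) ≤ lam)
    (hdegA : ∀ x ∉ A, #{y : V | y ∈ A ∧ G.Adj x y} < lam)
    (m : Set (V × C))
    (h1 : ∀ p ∈ m, p.2 ∈ F p.1) (h2 : ∀ p ∈ m, ∀ q ∈ m, p.1 = q.1 → p.2 = q.2)
    (h3 : ∀ p ∈ m, ∀ q ∈ m, G.Adj p.1 q.1 → p.2 ≠ q.2) (hdom : Prod.fst '' m = A) :
    ∃ m' : Set (V × C), m ⊆ m' ∧ (∀ p ∈ m', p.2 ∈ F p.1) ∧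
      (∀ p ∈ m', ∀ q ∈ m', p.1 = q.1 → p.2 = q.2) ∧
      (∀ p ∈ m', ∀ q ∈ m', G.Adj p.1 q.1 → p.2 ≠ q.2) ∧ Prod.fst '' m' = B := by
  classical
  set D : Set V := B \ A with hD
  have hcolD : ListColorable (G.induce D) lam :=
    listColorable_induce_subset Set.diff_subset (listColorable_of_listChromatic_le hcol)
  set N : ↥D → Set C := fun x => {c | ∃ y, G.Adj x.1 y ∧ (y, c) ∈ m} with hNdef
  have hN : ∀ x : ↥D, #(N x) < lam := by
    intro x
    have hxA : x.1 ∉ A := x.2.2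
    refine lt_of_le_of_lt ?_ (hdegA x.1 hxA)
    have hw : ∀ c : ↥(N x), ∃ y, G.Adj x.1 y ∧ (y, c.1) ∈ m := fun c => c.2
    choose w hw1 hw2 using hw
    have hwm : ∀ c, w c ∈ A := by
      intro c
      rw [← hdom]
      exact ⟨(w c, c.1), hw2 c, rfl⟩
    refine Cardinal.mk_le_of_injective (f := fun c => (⟨w c, hwm c, hw1 c⟩ :
      {y : V | y ∈ A ∧ G.Adj x.1 y})) ?_
    intro c c' hcc
    have hww : w c = w c' := congrArg Subtype.val hcc
    exact Subtype.ext (h2 (w c, c.1) (hw2 c) (w c', c'.1) (hw2 c') (by rw [hww]))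
  set F' : ↥D → Set C := fun x => F x.1 \ N x with hF'def
  obtain ⟨g, hg, hgm⟩ := hcolD C F' (fun x => mk_diff_eq_of_lt hlam (hF x.1) (hN x))
  set mnew : Set (V × C) := {p | ∃ h : p.1 ∈ D, g ⟨p.1, h⟩ = p.2} with hmnew
  refine ⟨m ∪ mnew, Set.subset_union_left, ?_, ?_, ?_, ?_⟩
  · rintro p (hp | ⟨hp, hgp⟩)
    · exact h1 p hp
    · rw [← hgp]; exact (hgm ⟨p.1, hp⟩).1
  · rintro p (hp | ⟨hp, hgp⟩) q (hq | ⟨hq, hgq⟩) hpq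
    · exact h2 p hp q hq hpq
    · exact absurd ((hdom ▸ ⟨p, hp, rfl⟩ : p.1 ∈ A)) (hpq ▸ hq.2)
    · exact absurd ((hdom ▸ ⟨q, hq, rfl⟩ : q.1 ∈ A)) (hpq ▸ hp).2
    · rw [← hgp, ← hgq]
      congr 1
      exact Subtype.ext hpq
  · rintro p (hp | ⟨hp, hgp⟩) q (hq | ⟨hq, hgq⟩) hadj heq
    · exact h3 p hp q hq hadj heq
    · -- p old, q new
      have hmem : p.2 ∈ N ⟨q.1, hq⟩ := ⟨p.1, hadj.symm, by simpa using hp⟩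
      exact (hgm ⟨q.1, hq⟩).2 (by rw [hgq, ← heq]; exact hmem)
    · -- p new, q old
      have hmem : q.2 ∈ N ⟨p.1, hp⟩ := ⟨q.1, hadj, by simpa using hq⟩
      exact (hgm ⟨p.1, hp⟩).2 (by rw [hgp, heq]; exact hmem)
    · have hadj' : (G.induce D).Adj ⟨p.1, hp⟩ ⟨q.1, hq⟩ := hadj
      exact hg hadj' (by rw [hgp, hgq, heq])
  · rw [Set.image_union, hdom]
    have : Prod.fst '' mnew = D := by
      ext v
      constructor
      · rintro ⟨p, ⟨hp, _⟩, rfl⟩; exact hp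
      · intro hv; exact ⟨(v, g ⟨v, hv⟩), ⟨hv, rfl⟩, rfl⟩
    rw [this, hD, Set.union_diff_cancel hAB]

/-- Filtration lemma: if `⟨X_α : α < δ⟩` is a filtration of the vertex set of
`X` such that each induced subgraph `X_α` has list-chromatic number `≤ λ` and
every vertex outside `X_α` has fewer than `λ` neighbors inside `X_α`, then
`List(X) ≤ λ`. -/
theorem listChromatic_le_of_filtration {V : Type} (G : SimpleGraph V)
    (lam : Cardinal) (hlam : ℵ₀ ≤ lam)
    (δ : Ordinal) (hδ : Order.IsSuccLimit δ) (Xf : Ordinal → Set V)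
    (hmono : ∀ α β : Ordinal, α ≤ β → β < δ → Xf α ⊆ Xf β)
    (hcont : ∀ α < δ, Order.IsSuccLimit α → Xf α = ⋃ β : Set.Iio α, Xf ↑β)
    (hsize : ∀ α < δ, #(Xf α) < #V)
    (hunion : ⋃ α : Set.Iio δ, Xf ↑α = Set.univ)
    (hlist : ∀ α < δ, listChromatic (G.induce (Xf α)) ≤ lam)
    (hdeg : ∀ α < δ, ∀ x ∉ Xf α, #{y : V | y ∈ Xf α ∧ G.Adj x y} < lam) :
    listChromatic G ≤ lam := by
  classical
  refine csInf_le' ?_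
  intro C F hF
  -- the poset of good partial colorings with domain some `Xf α` (or everything)
  set T : Set (Set (V × C)) := {s | (∀ p ∈ s, p.2 ∈ F p.1) ∧
    (∀ p ∈ s, ∀ q ∈ s, p.1 = q.1 → p.2 = q.2) ∧
    (∀ p ∈ s, ∀ q ∈ s, G.Adj p.1 q.1 → p.2 ≠ q.2) ∧
    (Prod.fst '' s = Set.univ ∨ ∃ α < δ, Prod.fst '' s = Xf α)} with hT
  -- helper: membership of v in ⋃ over Iio δ
  have hmemU : ∀ v : V, ∃ γ < δ, v ∈ Xf γ := by
    intro v
    have : v ∈ ⋃ α : Set.Iio δ, Xf ↑α := hunion ▸ Set.mem_univ v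
    obtain ⟨_, ⟨⟨γ, hγ⟩, rfl⟩, hv⟩ := this
    exact ⟨γ, hγ, hv⟩
  -- initial element: a good coloring of `Xf 0`
  have hdeg0 : ∀ x ∉ (∅ : Set V), #{y : V | y ∈ (∅ : Set V) ∧ G.Adj x y} < lam := by
    intro x _
    have : {y : V | y ∈ (∅ : Set V) ∧ G.Adj x y} = ∅ := by ext y; simp
    rw [this]
    simpa using lt_of_lt_of_le aleph0_pos hlam
  obtain ⟨s₀, -, hs₁, hs₂, hs₃, hs₄⟩ :=
    coloring_step (G := G) hlam F hF (Set.empty_subset (Xf 0)) (hlist 0 hδ.pos) hdeg0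
      ∅ (by simp) (by simp) (by simp) (by simp)
  have hs₀T : s₀ ∈ T := ⟨hs₁, hs₂, hs₃, Or.inr ⟨0, hδ.pos, hs₄⟩⟩
  -- Zorn's lemma
  have hchainub : ∀ c ⊆ T, IsChain (· ⊆ ·) c → c.Nonempty →
      ∃ ub ∈ T, ∀ s ∈ c, s ⊆ ub := by
    intro c hcT hchain hcne
    refine ⟨⋃₀ c, ⟨?_, ?_, ?_, ?_⟩, fun s hs => Set.subset_sUnion_of_mem hs⟩
    · rintro p ⟨s, hs, hp⟩
      exact (hcT hs).1 p hp
    · rintro p ⟨s, hs, hp⟩ q ⟨t, ht, hq⟩ hpq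
      rcases hchain.total hs ht with hst | hts
      · exact (hcT ht).2.1 p (hst hp) q hq hpq
      · exact (hcT hs).2.1 p hp q (hts hq) hpq
    · rintro p ⟨s, hs, hp⟩ q ⟨t, ht, hq⟩ hadj
      rcases hchain.total hs ht with hst | hts
      · exact (hcT ht).2.2.1 p (hst hp) q hq hadj
      · exact (hcT hs).2.2.1 p hp q (hts hq) hadj
    · -- domain of the union
      rw [Set.image_sUnion, Set.sUnion_image]
      by_cases huniv : ∃ s ∈ c, Prod.fst '' s = Set.univ
      · left
        obtain ⟨s, hs, hsu⟩ := huniv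
        exact Set.eq_univ_of_univ_subset (hsu ▸ Set.subset_biUnion_of_mem hs)
      · push_neg at huniv
        have hdoms : ∀ s ∈ c, ∃ α < δ, Prod.fst '' s = Xf α := by
          intro s hs
          rcases (hcT hs).2.2.2 with h | h
          · exact absurd h (huniv s hs)
          · exact h
        set I : Set Ordinal := {α | α < δ ∧ ∃ s ∈ c, Prod.fst '' s = Xf α} with hI
        have hIne : I.Nonempty := by
          obtain ⟨s, hs⟩ := hcne
          obtain ⟨α, hαδ, hdα⟩ := hdoms s hs
          exact ⟨α, hαδ, s, hs, hdα⟩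
        have hIbdd : BddAbove I := ⟨δ, fun α hα => hα.1.le⟩
        set β := sSup I with hβ
        have hβle : β ≤ δ := csSup_le hIne (fun α hα => hα.1.le)
        have hUI : ⋃ s ∈ c, Prod.fst '' s = ⋃ α ∈ I, Xf α := by
          ext v
          simp only [Set.mem_iUnion]
          constructor
          · rintro ⟨s, hs, hv⟩
            obtain ⟨α, hαδ, hdα⟩ := hdoms s hs
            exact ⟨α, ⟨hαδ, s, hs, hdα⟩, hdα ▸ hv⟩
          · rintro ⟨α, ⟨hαδ, s, hs, hdα⟩, hv⟩
            exact ⟨s, hs, hdα ▸ hv⟩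
        rw [hUI]
        rcases eq_or_lt_of_le hβle with hβδ | hβδ
        · -- the domains are cofinal in δ: the union is everything
          left
          refine Set.eq_univ_of_forall (fun v => ?_)
          obtain ⟨γ, hγδ, hvγ⟩ := hmemU v
          obtain ⟨α, hαI, hγα⟩ := exists_lt_of_lt_csSup hIne (hβδ ▸ hγδ : γ < β)
          simp only [Set.mem_iUnion]
          exact ⟨α, hαI, hmono γ α hγα.le hαI.1 hvγ⟩
        · right
          refine ⟨β, hβδ, ?_⟩
          by_cases hβI : β ∈ I
          · apply Set.Subset.antisymm
            · refine Set.iUnion₂_subset (fun α hα => ?_)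
              exact hmono α β (le_csSup hIbdd hα) hβδ
            · exact Set.subset_biUnion_of_mem hβI
          · -- β is a limit ordinal
            have hβlim : Order.IsSuccLimit β := by
              rcases Ordinal.zero_or_succ_or_isSuccLimit β with h0 | ⟨γ, hγ⟩ | hlim
              · obtain ⟨α, hα⟩ := hIne
                have : α = β := le_antisymm (le_csSup hIbdd hα) (h0 ▸ zero_le (a := α))
                exact absurd (this ▸ hα) hβI
              · have hγβ : γ < β := hγ ▸ Order.lt_succ γ
                obtain ⟨α, hαI, hγα⟩ := exists_lt_of_lt_csSup hIne hγβ
                have : α = β := le_antisymm (le_csSup hIbdd hαI)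
                  (hγ ▸ Order.succ_le_of_lt hγα)
                exact absurd (this ▸ hαI) hβI
              · exact hlim
            rw [hcont β hβδ hβlim]
            apply Set.Subset.antisymm
            · refine Set.iUnion₂_subset (fun α hα v hv => ?_)
              have hαβ : α < β := lt_of_le_of_ne (le_csSup hIbdd hα) (fun h => hβI (h ▸ hα))
              exact Set.mem_iUnion.mpr ⟨⟨α, hαβ⟩, hv⟩
            · intro v hv
              obtain ⟨⟨b, hbβ⟩, hvb⟩ := Set.mem_iUnion.mp hv
              obtain ⟨α, hαI, hbα⟩ := exists_lt_of_lt_csSup hIne hbβ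
              exact Set.mem_biUnion hαI (hmono b α hbα.le hαI.1 hvb)
  obtain ⟨m, -, hmmax⟩ := zorn_subset_nonempty T hchainub s₀ hs₀T
  obtain ⟨hm1, hm2, hm3, hm4⟩ := hmmax.prop
  -- the maximal element colors everything
  have hmuniv : Prod.fst '' m = Set.univ := by
    rcases hm4 with h | ⟨α, hαδ, hdα⟩
    · exact h
    exfalso
    -- find β with Xf β \ Xf α nonempty
    have hXα : Xf α ≠ Set.univ := by
      intro h
      have := hsize α hαδ
      rw [h, Cardinal.mk_univ] at this
      exact this.false
    obtain ⟨v, hvn⟩ : ∃ v : V, v ∉ Xf α := by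
      by_contra h
      push_neg at h
      exact hXα (Set.eq_univ_of_forall h)
    obtain ⟨β, hβδ, hvβ⟩ := hmemU v
    have hαβ : Xf α ⊆ Xf β := by
      rcases le_or_gt β α with h | h
      · exact absurd (hmono β α h hαδ hvβ) hvn
      · exact hmono α β h.le hβδ
    obtain ⟨m', hmm', hm'1, hm'2, hm'3, hm'4⟩ :=
      coloring_step hlam F hF hαβ (hlist β hβδ) (hdα ▸ hdeg α hαδ) m hm1 hm2 hm3 hdα
    have hm'T : m' ∈ T := ⟨hm'1, hm'2, hm'3, Or.inr ⟨β, hβδ, hm'4⟩⟩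
    have hsub : m' ⊆ m := hmmax.2 hm'T hmm'
    have : v ∈ Prod.fst '' m' := hm'4 ▸ hvβ
    obtain ⟨p, hp, hp1⟩ := this
    exact hvn (hdα ▸ ⟨p, hsub hp, hp1⟩)
  -- extract the coloring
  have hex : ∀ v : V, ∃ c : C, (v, c) ∈ m := by
    intro v
    have : v ∈ Prod.fst '' m := hmuniv ▸ Set.mem_univ v
    obtain ⟨p, hp, hp1⟩ := this
    exact ⟨p.2, by rwa [← hp1, Prod.mk.eta]⟩
  choose f hf using hex
  refine ⟨f, ?_, fun v => hm1 (v, f v) (hf v)⟩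
  intro x y hxy
  exact hm3 (x, f x) (hf x) (y, f y) (hf y) hxy
end

section
/- Let κ be a singular cardinal of countable cofinality and λ < κ an infinite cardinal with μ^λ < κ for every μ < κ. Then for every graph X of size κ, if every subgraph of X of size < κ has list-chromatic number ≤ λ, then List(X) ≤ λ. -/
open Cardinal

section Auxiliary

lemma diff_nonempty_of_mk_lt {C : Type} {A U : Set C} (h : #U < #A) : (A \ U).Nonempty := by
  by_contra he
  rw [Set.not_nonempty_iff_eq_empty, Set.diff_eq_empty] at he
  exact absurd (Cardinal.mk_le_mk_of_subset he) (not_le.2 h)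

lemma listColorable_of_mk_lt {V : Type} (G : SimpleGraph V) {κ' : Cardinal}
    (h : #V < κ') : ListColorable G κ' := by
  intro C F hF
  haveI : IsWellOrder V WellOrderingRel := WellOrderingRel.isWellOrder
  set r : V → V → Prop := WellOrderingRel with hr
  have wf : WellFounded r := IsWellFounded.wf
  have key : ∀ (x : V) (p : ∀ y, r y x → C),
      (F x \ Set.range (fun q : {y // r y x} => p q.1 q.2)).Nonempty := by
    intro x p
    apply diff_nonempty_of_mk_lt
    calc #(Set.range (fun q : {y // r y x} => p q.1 q.2)) ≤ #{y // r y x} :=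
        Cardinal.mk_range_le
      _ ≤ #V := Cardinal.mk_subtype_le _
      _ < κ' := h
      _ = #(F x) := (hF x).symm
  let f : V → C := wf.fix (fun x p => (key x p).choose)
  have hfx : ∀ x, f x ∈ F x \ Set.range (fun q : {y // r y x} => f q.1) := by
    intro x
    have := wf.fix_eq (fun x p => (key x p).choose) x
    rw [show f x = wf.fix (fun x p => (key x p).choose) x from rfl, this]
    exact (key x (fun y _ => f y)).choose_spec
  have hne : ∀ x y, r y x → f x ≠ f y := by
    intro x y hryx heq
    exact (hfx x).2 ⟨⟨y, hryx⟩, heq.symm⟩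
  refine ⟨f, ?_, fun x => (hfx x).1⟩
  intro x y hadj heq
  rcases trichotomous_of r x y with hxy | hxy | hxy
  · exact hne y x hxy heq.symm
  · exact hadj.ne hxy
  · exact hne x y hxy heq

/-- The set of `G`-neighbors of `x` inside `S`. -/
def nbrIn {V : Type} (G : SimpleGraph V) (x : V) (S : Set V) : Set V := {y | G.Adj x y ∧ y ∈ S}

/-- Vertices outside `S` with at least `lam` neighbors in `S`. -/
def badSet {V : Type} (G : SimpleGraph V) (lam : Cardinal) (S : Set V) : Set V :=
  {z | z ∉ S ∧ lam ≤ #(nbrIn G z S)}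

/-- One closure step: add all bad vertices over `lam`-sized subsets. -/
def stepSet {V : Type} (G : SimpleGraph V) (lam : Cardinal) (S : Set V) : Set V :=
  S ∪ ⋃ (Y : {Y : Set V // Y ⊆ S ∧ #Y = lam}), badSet G lam Y.1

lemma subset_stepSet {V : Type} {G : SimpleGraph V} {lam : Cardinal} {S : Set V} :
    S ⊆ stepSet G lam S := Set.subset_union_left

lemma mk_fiber_fst {Λ : Type} (a : Λ) : #({p : Λ × Λ | p.1 = a}) = #Λ :=
  Cardinal.eq.2 ⟨⟨fun p => p.1.2, fun b => ⟨(a, b), rfl⟩,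
    fun p => Subtype.ext (Prod.ext_iff.2 ⟨p.2.symm, rfl⟩), fun _ => rfl⟩⟩

lemma mk_subsets_of_card_le {V : Type} {S : Set V} {lam : Cardinal} :
    #{Y : Set V // Y ⊆ S ∧ #Y = lam} ≤ #S ^ lam := by
  classical
  set Λ := Quotient.out lam with hΛdef
  have hmkΛ : #Λ = lam := mk_out lam
  have hex : ∀ Y : {Y : Set V // Y ⊆ S ∧ #Y = lam},
      ∃ φ : Λ → ↥S, Subtype.val '' Set.range φ = Y.1 := by
    rintro ⟨Y, hYS, hY⟩
    obtain ⟨e⟩ : Nonempty (Λ ≃ ↥Y) := Cardinal.eq.1 (by rw [hmkΛ, hY])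
    refine ⟨fun a => ⟨(e a).1, hYS (e a).2⟩, ?_⟩
    ext v
    constructor
    · rintro ⟨w, ⟨a, rfl⟩, rfl⟩
      exact (e a).2
    · intro hv
      exact ⟨⟨v, hYS hv⟩, ⟨e.symm ⟨v, hv⟩, by simp⟩, rfl⟩
  choose φ hφ using hex
  have hinj : Function.Injective φ := by
    intro Y Z h
    apply Subtype.ext
    rw [← hφ Y, ← hφ Z, h]
  calc #{Y : Set V // Y ⊆ S ∧ #Y = lam} ≤ #(Λ → ↥S) := Cardinal.mk_le_of_injective hinj
    _ = #↥S ^ lam := by rw [← Cardinal.power_def, hmkΛ]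

lemma badSet_card_le {V : Type} {G : SimpleGraph V} {lam : Cardinal} (hlam : ℵ₀ ≤ lam)
    (hind : ∀ s : Set V, #s ≤ lam ^ lam → ListColorable ((⊤ : G.Subgraph).induce s).coe lam)
    (Y : Set V) (hY : #Y = lam) : #(badSet G lam Y) ≤ lam ^ lam := by
  classical
  by_contra hbig
  push_neg at hbig
  obtain ⟨Y₁, hY₁sub, hY₁⟩ := le_mk_iff_exists_subset.1 hbig.le
  set Λ := Quotient.out lam with hΛ
  have hmkΛ : #Λ = lam := mk_out lam
  have neΛ : Nonempty Λ := by rw [← mk_ne_zero_iff, hmkΛ]; exact (aleph0_pos.trans_le hlam).ne'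
  obtain ⟨eY⟩ : Nonempty (↥Y ≃ Λ) := Cardinal.eq.1 (by rw [hmkΛ, hY])
  obtain ⟨eG⟩ : Nonempty (↥Y₁ ≃ (Λ → Λ)) := Cardinal.eq.1 (by rw [← power_def, hmkΛ, hY₁])
  let idx : V → Λ := fun y => if h : y ∈ Y then eY ⟨y, h⟩ else Classical.arbitrary Λ
  have idx_mem : ∀ y (h : y ∈ Y), idx y = eY ⟨y, h⟩ := fun y h => dif_pos h
  let y₀ : Λ → V := fun a => (eY.symm a).1
  have hy₀mem : ∀ a, y₀ a ∈ Y := fun a => (eY.symm a).2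
  have y₀_idx : ∀ y (h : y ∈ Y), y₀ (idx y) = y := by
    intro y h; rw [idx_mem _ h]; simp [y₀]
  let gz : V → Λ → Λ := fun z => if h : z ∈ Y₁ then eG ⟨z, h⟩ else id
  have hNex : ∀ z : V, ∃ N : Set V, z ∈ Y₁ → N ⊆ nbrIn G z Y ∧ #N = lam := by
    intro z
    by_cases h : z ∈ Y₁
    · obtain ⟨N, hN1, hN2⟩ := le_mk_iff_exists_subset.1 (hY₁sub h).2
      exact ⟨N, fun _ => ⟨hN1, hN2⟩⟩
    · exact ⟨∅, fun hz => absurd hz h⟩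
  choose Nz hNz using hNex
  let F : V → Set (Λ × Λ) := fun v =>
    if v ∈ Y then {p | p.1 = idx v} else (fun y => (idx y, gz v (idx y))) '' (Nz v)
  set s : Set V := Y ∪ Y₁ with hs
  have hcards : #s ≤ lam ^ lam := by
    have h1 : lam ≤ lam ^ lam := Cardinal.self_le_power _ (le_trans one_le_aleph0 hlam)
    calc #s ≤ #Y + #Y₁ := mk_union_le _ _
      _ = lam + lam ^ lam := by rw [hY, hY₁]
      _ ≤ lam ^ lam + lam ^ lam := by gcongr
      _ = lam ^ lam := by rw [Cardinal.add_eq_self (le_trans hlam h1)]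
  have hsize : ∀ v : ↥((⊤ : G.Subgraph).induce s).verts, #(F v.1) = lam := by
    rintro ⟨v, hv⟩
    by_cases h : v ∈ Y
    · show #(F v) = lam
      simp only [F, if_pos h]
      rw [mk_fiber_fst, hmkΛ]
    · have hv1 : v ∈ Y₁ := hv.resolve_left h
      show #(F v) = lam
      simp only [F, if_neg h]
      rw [Cardinal.mk_image_eq_of_injOn]
      · exact (hNz v hv1).2
      · intro a ha b hb heq
        have haY : a ∈ Y := ((hNz v hv1).1 ha).2
        have hbY : b ∈ Y := ((hNz v hv1).1 hb).2
        have : idx a = idx b := congrArg Prod.fst heq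
        rw [← y₀_idx a haY, ← y₀_idx b hbY, this]
  obtain ⟨f, hgood, hmemF⟩ := hind s hcards (Λ × Λ) (fun v => F v.1) hsize
  · let g : Λ → Λ := fun a => (f ⟨y₀ a, Or.inl (hy₀mem a)⟩).2
    have hfY : ∀ (y) (h : y ∈ Y), f ⟨y, Or.inl h⟩ = (idx y, g (idx y)) := by
      intro y h
      have hm := hmemF ⟨y, Or.inl h⟩
      have hFy : F y = {p | p.1 = idx y} := if_pos h
      simp only [hFy] at hm
      have h2 : g (idx y) = (f ⟨y, Or.inl h⟩).2 := by
        have hv : (⟨y₀ (idx y), Or.inl (hy₀mem (idx y))⟩ :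
            ↥((⊤ : G.Subgraph).induce s).verts) = ⟨y, Or.inl h⟩ :=
          Subtype.ext (y₀_idx y h)
        show (f ⟨y₀ (idx y), Or.inl (hy₀mem (idx y))⟩).2 = _
        rw [hv]
      exact Prod.ext_iff.2 ⟨hm, h2.symm⟩
    let z := (eG.symm g).1
    have hzY₁ : z ∈ Y₁ := (eG.symm g).2
    have hzmem : z ∈ s := Or.inr hzY₁
    have hznY : z ∉ Y := (hY₁sub hzY₁).1
    have hm := hmemF ⟨z, hzmem⟩
    have hFz : F z = (fun y => (idx y, gz z (idx y))) '' (Nz z) := if_neg hznY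
    simp only [hFz] at hm
    obtain ⟨y, hyN, hy⟩ := hm
    have hyY : y ∈ Y := ((hNz z hzY₁).1 hyN).2
    have hadj : G.Adj z y := ((hNz z hzY₁).1 hyN).1
    have hgz : gz z = g := by
      have : (⟨z, hzY₁⟩ : ↥Y₁) = eG.symm g := Subtype.ext rfl
      simp only [gz, dif_pos hzY₁, this, Equiv.apply_symm_apply]
    have hadj' : ((⊤ : G.Subgraph).induce s).coe.Adj ⟨z, hzmem⟩ ⟨y, Or.inl hyY⟩ := by
      rw [SimpleGraph.Subgraph.coe_adj]
      simp only [SimpleGraph.Subgraph.induce_adj, SimpleGraph.Subgraph.top_adj]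
      exact ⟨hzmem, Or.inl hyY, hadj⟩
    apply hgood hadj'
    rw [hfY y hyY, ← hy, hgz]

set_option maxHeartbeats 1000000 in
lemma exists_closed {V : Type} {G : SimpleGraph V} {lam : Cardinal} (hlam : ℵ₀ ≤ lam)
    (hbad : ∀ Y : Set V, #Y = lam → #(badSet G lam Y) ≤ lam ^ lam) (B : Set V) :
    ∃ X : Set V, B ⊆ X ∧ #X ≤ (#B + 2 ^ lam) ^ lam ∧
      ∀ x : V, lam ≤ #(nbrIn G x X) → x ∈ X := by
  classical
  obtain ⟨μ, hμdef⟩ : ∃ μ : Cardinal, μ = (#B + 2 ^ lam) ^ lam := ⟨_, rfl⟩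
  rw [← hμdef]
  have h1lam : (1 : Cardinal) ≤ lam := le_trans one_le_aleph0 hlam
  have hbase : #B + 2 ^ lam ≤ μ := hμdef ▸ Cardinal.self_le_power _ h1lam
  have h2μ : 2 ^ lam ≤ μ := le_trans (le_add_self) hbase
  have hBμ : #↥B ≤ μ := le_trans (self_le_add_right _ _) hbase
  have hμinf : ℵ₀ ≤ μ := le_trans (le_trans hlam (cantor lam).le) h2μ
  have hll : lam ^ lam ≤ μ := by rw [Cardinal.power_self_eq hlam]; exact h2μ
  have hμμ : μ ^ lam = μ := by rw [hμdef, ← Cardinal.power_mul, Cardinal.mul_eq_self hlam]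
  have hslam : ℵ₀ ≤ Order.succ lam := le_trans hlam (Order.le_succ lam)
  have hsucc : Order.succ lam ≤ μ := le_trans (Order.succ_le_iff.2 (cantor lam)) h2μ
  have hstep : ∀ S : Set V, #S ≤ μ → #(stepSet G lam S) ≤ μ := by
    intro S hS
    have hI : #{Y : Set V // Y ⊆ S ∧ #Y = lam} ≤ μ := by
      calc #{Y : Set V // Y ⊆ S ∧ #Y = lam} ≤ #↥S ^ lam := mk_subsets_of_card_le
        _ ≤ μ ^ lam := Cardinal.power_le_power_right hS
        _ = μ := hμμ
    have hb1 : #(⋃ (Y : {Y : Set V // Y ⊆ S ∧ #Y = lam}), badSet G lam Y.1) ≤ μ := by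
      refine le_trans Cardinal.mk_iUnion_le_sum_mk ?_
      have : Cardinal.sum (fun Y : {Y : Set V // Y ⊆ S ∧ #Y = lam} => #(badSet G lam Y.1)) ≤
          Cardinal.sum (fun _ : {Y : Set V // Y ⊆ S ∧ #Y = lam} => lam ^ lam) := by
        apply Cardinal.sum_le_sum
        exact fun Y => hbad Y.1 Y.2.2
      refine le_trans this ?_
      rw [Cardinal.sum_const']
      calc #{Y : Set V // Y ⊆ S ∧ #Y = lam} * (lam ^ lam) ≤ μ * μ := mul_le_mul' hI hll
        _ = μ := Cardinal.mul_eq_self hμinf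
    refine le_trans (Cardinal.mk_union_le _ _) ?_
    refine le_trans (add_le_add hS hb1) ?_
    rw [Cardinal.add_eq_self hμinf]
  set W := (Order.succ lam).ord.ToType with hWdef
  haveI instW : IsWellOrder W (· < ·) := isWellOrder_lt
  have hmkW : #W = Order.succ lam := mk_ord_toType _
  have wf : WellFounded ((· < ·) : W → W → Prop) := IsWellFounded.wf
  set Ftop : W → Set V :=
    wf.fix (fun i ih => B ∪ ⋃ j : {j : W // j < i}, stepSet G lam (ih j.1 j.2)) with hFdef
  have Feq : ∀ i, Ftop i = B ∪ ⋃ j : {j : W // j < i}, stepSet G lam (Ftop j.1) := by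
    intro i
    exact wf.fix_eq _ i
  have FB : ∀ i, B ⊆ Ftop i := by
    intro i
    rw [Feq i]
    exact Set.subset_union_left
  have Fmono : ∀ i j : W, j ≤ i → Ftop j ⊆ Ftop i := by
    intro i j hji
    rcases eq_or_lt_of_le hji with rfl | hji
    · exact subset_rfl
    · rw [Feq i]
      intro x hx
      exact Or.inr (Set.mem_iUnion.2 ⟨⟨j, hji⟩, subset_stepSet hx⟩)
  have Fstep : ∀ i j : W, j < i → stepSet G lam (Ftop j) ⊆ Ftop i := by
    intro i j hji
    rw [Feq i]
    intro x hx
    exact Or.inr (Set.mem_iUnion.2 ⟨⟨j, hji⟩, hx⟩)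
  have Fcard : ∀ i, #(Ftop i) ≤ μ := by
    intro i
    induction i using wf.induction with
    | _ i ih =>
      rw [Feq i]
      have hb1 : #(⋃ j : {j : W // j < i}, stepSet G lam (Ftop j.1)) ≤ μ := by
        refine le_trans Cardinal.mk_iUnion_le_sum_mk ?_
        have hss : Cardinal.sum (fun j : {j : W // j < i} => #(stepSet G lam (Ftop j.1))) ≤
            Cardinal.sum (fun _ : {j : W // j < i} => μ) := by
          apply Cardinal.sum_le_sum
          exact fun j => hstep _ (ih j.1 j.2)
        refine le_trans hss ?_
        rw [Cardinal.sum_const']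
        have hjW : #{j : W // j < i} ≤ μ :=
          le_trans (Cardinal.mk_subtype_le _) (le_trans (le_of_eq hmkW) hsucc)
        calc #{j : W // j < i} * μ ≤ μ * μ := mul_le_mul' hjW le_rfl
          _ = μ := Cardinal.mul_eq_self hμinf
      refine le_trans (Cardinal.mk_union_le _ _) ?_
      refine le_trans (add_le_add hBμ hb1) ?_
      rw [Cardinal.add_eq_self hμinf]
  refine ⟨⋃ i, Ftop i, ?_, ?_, ?_⟩
  · have : Nonempty W := by
      rw [← mk_ne_zero_iff, hmkW]
      exact (lt_of_lt_of_le aleph0_pos hslam).ne'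
    obtain ⟨i⟩ := this
    exact subset_trans (FB i) (Set.subset_iUnion _ i)
  · refine le_trans Cardinal.mk_iUnion_le_sum_mk ?_
    have hss : Cardinal.sum (fun i : W => #(Ftop i)) ≤ Cardinal.sum (fun _ : W => μ) := by
      apply Cardinal.sum_le_sum
      exact Fcard
    refine le_trans hss ?_
    rw [Cardinal.sum_const']
    calc #W * μ ≤ μ * μ := mul_le_mul' (le_trans (le_of_eq hmkW) hsucc) le_rfl
      _ = μ := Cardinal.mul_eq_self hμinf
  · intro x hx
    obtain ⟨Y, hYsub, hYcard⟩ := le_mk_iff_exists_subset.1 hx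
    have hch : ∀ y : ↥Y, ∃ i : W, y.1 ∈ Ftop i := by
      intro y
      exact Set.mem_iUnion.1 (hYsub y.2).2
    choose ind hind2 using hch
    have htype : Ordinal.type ((· < ·) : W → W → Prop) = (Order.succ lam).ord :=
      Ordinal.type_toType _
    have hsup : (⨆ y : ↥Y, (Ordinal.typein ((· < ·) : W → W → Prop)).toRelEmbedding (ind y))
        < Ordinal.type ((· < ·) : W → W → Prop) := by
      rw [htype]
      apply Ordinal.iSup_lt_ord
      · rw [hYcard, (Cardinal.isRegular_succ hlam).cof_eq]
        exact Order.lt_succ lam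
      · intro y
        exact Ordinal.typein_lt_self _
    set i0 : W := (Ordinal.enum ((· < ·) : W → W → Prop)) ⟨_, hsup⟩ with hi0
    have hYF : Y ⊆ Ftop i0 := by
      intro y hy
      have hle : ind ⟨y, hy⟩ ≤ i0 := by
        rw [← not_lt, ← Ordinal.typein_lt_typein ((· < ·) : W → W → Prop), hi0,
          Ordinal.typein_enum]
        exact not_lt.2 (Ordinal.le_iSup _ (⟨y, hy⟩ : ↥Y))
      exact Fmono i0 (ind ⟨y, hy⟩) hle (hind2 ⟨y, hy⟩)
    have hxY : x ∈ badSet G lam Y := by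
      constructor
      · intro hxy
        exact G.irrefl (hYsub hxy).1
      · refine le_trans (le_of_eq hYcard.symm) (Cardinal.mk_le_mk_of_subset ?_)
        intro y hy
        exact ⟨(hYsub hy).1, hy⟩
    have hlim : Order.IsSuccLimit ((Order.succ lam).ord) := Cardinal.isSuccLimit_ord hslam
    have hsucclt : Order.succ ((Ordinal.typein ((· < ·) : W → W → Prop)).toRelEmbedding i0)
        < Ordinal.type ((· < ·) : W → W → Prop) := by
      rw [htype]
      exact hlim.succ_lt (Ordinal.typein_lt_self _)
    set i1 : W := (Ordinal.enum ((· < ·) : W → W → Prop)) ⟨Order.succ ((Ordinal.typein ((· < ·) : W → W → Prop)).toRelEmbedding i0), hsucclt⟩ with hi1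
    have h1 : (Ordinal.typein ((· < ·) : W → W → Prop)).toRelEmbedding i1
        = Order.succ ((Ordinal.typein ((· < ·) : W → W → Prop)).toRelEmbedding i0) := by
      rw [hi1]
      exact Ordinal.typein_enum _ _
    have hi01 : i0 < i1 := by
      rw [← Ordinal.typein_lt_typein ((· < ·) : W → W → Prop), h1]
      exact Order.lt_succ _
    have : x ∈ stepSet G lam (Ftop i0) :=
      Or.inr (Set.mem_iUnion.2 ⟨⟨Y, hYF, hYcard⟩, hxY⟩)
    exact Set.mem_iUnion.2 ⟨i1, Fstep i1 i0 hi01 this⟩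

lemma exists_decomp {V : Type} {κ : Cardinal} (hκ : ℵ₀ ≤ κ) (hcof : κ.ord.cof = ℵ₀)
    (hcard : #V = κ) :
    ∃ B : ℕ → Set V, (∀ n, B n ⊆ B (n + 1)) ∧ (∀ n, #(B n) < κ) ∧ (⋃ n, B n) = Set.univ := by
  classical
  obtain ⟨e⟩ : Nonempty (V ≃ κ.ord.ToType) := Cardinal.eq.1 (by rw [hcard, mk_ord_toType])
  haveI instW : IsWellOrder κ.ord.ToType (· < ·) := isWellOrder_lt
  obtain ⟨S, hSunb, hScard⟩ := Order.exists_cof_eq (α := κ.ord.ToType)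
  have hS : #S = ℵ₀ := by rw [hScard, Ordinal.cof_toType, hcof]
  obtain ⟨es⟩ : Nonempty (ℕ ≃ ↥S) := Cardinal.eq.1 (by rw [hS, mk_nat])
  let t : ℕ → κ.ord.ToType := fun n => (es n).1
  let m : ℕ → κ.ord.ToType := fun n => Nat.rec (t 0) (fun k mk => max mk (t (k + 1))) n
  have hmono : ∀ n, m n ≤ m (n + 1) := fun n => le_max_left _ _
  have htm : ∀ n, t n ≤ m n := by
    intro n
    cases n with
    | zero => exact le_rfl
    | succ k => exact le_max_right _ _
  refine ⟨fun n => e.symm '' Set.Iic (m n), ?_, ?_, ?_⟩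
  · intro n
    exact Set.image_mono (Set.Iic_subset_Iic.2 (hmono n))
  · intro n
    rw [Cardinal.mk_image_eq e.symm.injective]
    have h1 : Set.Iic (m n) ⊆ Set.Iio (m n) ∪ {m n} := by
      intro w hw
      rcases lt_or_eq_of_le (Set.mem_Iic.1 hw) with h | h
      · exact Or.inl h
      · exact Or.inr (by simp [h])
    have h2 : #(Set.Iio (m n)) < κ := by
      have hrfl : #(Set.Iio (m n)) = #{y : κ.ord.ToType // y < m n} := rfl
      rw [hrfl, ← Ordinal.card_typein (r := ((· < ·) : κ.ord.ToType → κ.ord.ToType → Prop))]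
      exact Cardinal.lt_ord.1 (Ordinal.typein_lt_self (m n))
    calc #(Set.Iic (m n)) ≤ #↥(Set.Iio (m n) ∪ ({m n} : Set κ.ord.ToType)) :=
          Cardinal.mk_le_mk_of_subset h1
      _ ≤ #(Set.Iio (m n)) + #({m n} : Set κ.ord.ToType) := Cardinal.mk_union_le _ _
      _ < κ := by
          rw [Cardinal.mk_singleton]
          exact Cardinal.add_lt_of_lt hκ h2 (lt_of_lt_of_le Cardinal.one_lt_aleph0 hκ)
  · ext v
    simp only [Set.mem_iUnion, Set.mem_univ, iff_true]
    obtain ⟨w, hwS, hw⟩ := hSunb (e v)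
    have hwle : e v ≤ w := hw
    refine ⟨es.symm ⟨w, hwS⟩, e v, ?_, by simp⟩
    refine le_trans hwle (le_trans (le_of_eq ?_) (htm _))
    show w = t (es.symm ⟨w, hwS⟩)
    simp [t]

end Auxiliary

/-- Singular compactness for the list-chromatic number under local cardinal
arithmetic: if `κ` is singular of countable cofinality, `λ < κ` is infinite,
`μ^λ < κ` for all `μ < κ`, and every subgraph of `X` of size `< κ` has
list-chromatic number `≤ λ`, then `List(X) ≤ λ`. -/
theorem singular_compactness_list_cof_omega {V : Type} (κ lam : Cardinal)
    (hunc : ℵ₀ < κ) (hcof : κ.ord.cof = ℵ₀)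
    (hlam : ℵ₀ ≤ lam) (hlamκ : lam < κ)
    (hexp : ∀ μ < κ, μ ^ lam < κ)
    (G : SimpleGraph V) (hcard : #V = κ)
    (hsmall : ∀ H : G.Subgraph, #H.verts < κ → listChromatic H.coe ≤ lam) :
    listChromatic G ≤ lam := by
  classical
  have hκinf : ℵ₀ ≤ κ := hunc.le
  have hind : ∀ s : Set V, #s < κ → ListColorable ((⊤ : G.Subgraph).induce s).coe lam := by
    intro s hs
    apply listColorable_of_listChromatic_le
    exact hsmall _ (by rwa [SimpleGraph.Subgraph.induce_verts])
  have hllκ : lam ^ lam < κ := hexp lam hlamκ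
  have h2lam : (2 : Cardinal) ≤ lam :=
    le_trans (le_of_lt (by exact_mod_cast Cardinal.nat_lt_aleph0 2)) hlam
  have h2l : (2 : Cardinal) ^ lam < κ :=
    lt_of_le_of_lt (Cardinal.power_le_power_right h2lam) hllκ
  have hbad : ∀ Y : Set V, #Y = lam → #(badSet G lam Y) ≤ lam ^ lam := by
    intro Y hY
    refine badSet_card_le hlam ?_ Y hY
    intro s hs
    exact hind s (lt_of_le_of_lt hs hllκ)
  obtain ⟨B, hBmono, hBcard, hBunion⟩ := exists_decomp hκinf hcof hcard
  have hclos : ∀ S : Set V, #S < κ →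
      ∃ X : Set V, S ⊆ X ∧ #X < κ ∧ ∀ x, lam ≤ #(nbrIn G x X) → x ∈ X := by
    intro S hS
    obtain ⟨X, h1, h2, h3⟩ := exists_closed hlam hbad S
    exact ⟨X, h1, lt_of_le_of_lt h2 (hexp _ (Cardinal.add_lt_of_lt hκinf hS h2l)), h3⟩
  have hUcard : ∀ (n : ℕ) (p : Set V), #p < κ → #↥(p ∪ B n) < κ := by
    intro n p hp
    exact lt_of_le_of_lt (Cardinal.mk_union_le _ _) (Cardinal.add_lt_of_lt hκinf hp (hBcard n))
  -- the filtration
  let T : (n : ℕ) → {p : Set V // #p < κ ∧ ∀ x, lam ≤ #(nbrIn G x p) → x ∈ p} := fun n =>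
    Nat.rec
      ⟨∅, by
        constructor
        · rw [Cardinal.mk_emptyCollection]
          exact lt_of_lt_of_le aleph0_pos hκinf
        · intro x hx
          exfalso
          have hsub : nbrIn G x (∅ : Set V) ⊆ (∅ : Set V) := fun y hy => hy.2
          have : #(nbrIn G x (∅ : Set V)) = 0 := by
            rw [Cardinal.mk_eq_zero_iff]
            exact ⟨fun y => (hsub y.2).elim⟩
          rw [this] at hx
          exact absurd (le_trans hlam hx) (by simp [Cardinal.aleph0_ne_zero])⟩
      (fun n Tn =>
        ⟨(hclos (Tn.1 ∪ B n) (hUcard n Tn.1 Tn.2.1)).choose,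
          (hclos (Tn.1 ∪ B n) (hUcard n Tn.1 Tn.2.1)).choose_spec.2.1,
          (hclos (Tn.1 ∪ B n) (hUcard n Tn.1 Tn.2.1)).choose_spec.2.2⟩)
      n
  let X : ℕ → Set V := fun n => (T n).1
  have hXcard : ∀ n, #(X n) < κ := fun n => (T n).2.1
  have hXclosed : ∀ n x, lam ≤ #(nbrIn G x (X n)) → x ∈ X n := fun n => (T n).2.2
  have hXstep : ∀ n, X n ∪ B n ⊆ X (n + 1) := fun n =>
    (hclos ((T n).1 ∪ B n) (hUcard n (T n).1 (T n).2.1)).choose_spec.1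
  have hXmono : ∀ n, X n ⊆ X (n + 1) := fun n =>
    subset_trans Set.subset_union_left (hXstep n)
  have hXmono' : ∀ m n : ℕ, m ≤ n → X m ⊆ X n := by
    intro m n hmn
    induction n with
    | zero => rw [Nat.le_zero.1 hmn]
    | succ n ih =>
      rcases Nat.lt_or_ge m (n + 1) with h | h
      · exact subset_trans (ih (Nat.lt_succ_iff.1 h)) (hXmono n)
      · rw [Nat.le_antisymm hmn h]
  have hXuniv : ∀ v : V, ∃ n, v ∈ X n := by
    intro v
    have hv : v ∈ ⋃ n, B n := by rw [hBunion]; trivial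
    obtain ⟨n, hn⟩ := Set.mem_iUnion.1 hv
    exact ⟨n + 1, hXstep n (Or.inr hn)⟩
  -- list colorability of G
  have hcol : ListColorable G lam := by
    intro C F hF
    have hCne : ∀ v : V, ∃ c, c ∈ F v := by
      intro v
      have hne : #(F v) ≠ 0 := by rw [hF v]; exact (aleph0_pos.trans_le hlam).ne'
      rw [Cardinal.mk_ne_zero_iff] at hne
      obtain ⟨⟨c, hc⟩⟩ := hne
      exact ⟨c, hc⟩
    choose h₀ hh₀ using hCne
    -- the extension step
    have hext : ∀ (n : ℕ) (h : V → C),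
        ((∀ x ∈ X n, h x ∈ F x) ∧ ∀ x ∈ X n, ∀ y ∈ X n, G.Adj x y → h x ≠ h y) →
        ∃ h' : V → C,
          ((∀ x ∈ X (n + 1), h' x ∈ F x) ∧
            ∀ x ∈ X (n + 1), ∀ y ∈ X (n + 1), G.Adj x y → h' x ≠ h' y) ∧
          ∀ x ∈ X n, h' x = h x := by
      intro n h hP
      obtain ⟨hmem, hgood⟩ := hP
      have havail : ∀ v : V, ∃ L : Set C,
          v ∈ X (n + 1) \ X n → (L ⊆ F v \ (h '' (nbrIn G v (X n))) ∧ #L = lam) := by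
        intro v
        by_cases hv : v ∈ X (n + 1) \ X n
        · have hused : #↥(h '' (nbrIn G v (X n))) < lam := by
            refine lt_of_le_of_lt Cardinal.mk_image_le ?_
            by_contra hge
            exact hv.2 (hXclosed n v (not_lt.1 hge))
          have hdiff : lam ≤ #↥(F v \ (h '' (nbrIn G v (X n)))) := by
            by_contra hlt
            push_neg at hlt
            have hsub : F v ⊆ (F v \ (h '' (nbrIn G v (X n)))) ∪ (h '' (nbrIn G v (X n))) := by
              intro c hc
              by_cases hcu : c ∈ h '' (nbrIn G v (X n))
              · exact Or.inr hcu
              · exact Or.inl ⟨hc, hcu⟩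
            have : lam ≤ #↥(F v \ (h '' (nbrIn G v (X n)))) + #(h '' (nbrIn G v (X n))) := by
              rw [← hF v]
              exact le_trans (Cardinal.mk_le_mk_of_subset hsub) (Cardinal.mk_union_le _ _)
            exact absurd this (not_le.2 (Cardinal.add_lt_of_lt hlam hlt hused))
          obtain ⟨L, hL1, hL2⟩ := le_mk_iff_exists_subset.1 hdiff
          exact ⟨L, fun _ => ⟨hL1, hL2⟩⟩
        · exact ⟨∅, fun hv' => absurd hv' hv⟩
      choose L hL using havail
      have hYsmall : #↥(X (n + 1) \ X n) < κ :=
        lt_of_le_of_lt (Cardinal.mk_le_mk_of_subset Set.diff_subset) (hXcard (n + 1))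
      obtain ⟨c, hcgood, hcmem⟩ := hind (X (n + 1) \ X n) hYsmall C
        (fun v => L v.1) (fun v => (hL v.1 v.2).2)
      refine ⟨fun v => if hv : v ∈ X (n + 1) \ X n then c ⟨v, hv⟩ else h v, ⟨?_, ?_⟩, ?_⟩
      · intro x hx
        by_cases hxd : x ∈ X (n + 1) \ X n
        · simp only [dif_pos hxd]
          exact ((hL x hxd).1 (hcmem ⟨x, hxd⟩)).1
        · simp only [dif_neg hxd]
          have hxn : x ∈ X n := by
            by_contra hxn
            exact hxd ⟨hx, hxn⟩
          exact hmem x hxn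
      · intro x hx y hy hadj
        by_cases hxd : x ∈ X (n + 1) \ X n <;> by_cases hyd : y ∈ X (n + 1) \ X n
        · simp only [dif_pos hxd, dif_pos hyd]
          refine hcgood ?_
          rw [SimpleGraph.Subgraph.coe_adj]
          simp only [SimpleGraph.Subgraph.induce_adj, SimpleGraph.Subgraph.top_adj]
          exact ⟨hxd, hyd, hadj⟩
        · simp only [dif_pos hxd, dif_neg hyd]
          have hyn : y ∈ X n := by
            by_contra hyn
            exact hyd ⟨hy, hyn⟩
          have hcx := (hL x hxd).1 (hcmem ⟨x, hxd⟩)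
          intro heq
          exact hcx.2 ⟨y, ⟨hadj, hyn⟩, heq.symm⟩
        · simp only [dif_neg hxd, dif_pos hyd]
          have hxn : x ∈ X n := by
            by_contra hxn
            exact hxd ⟨hx, hxn⟩
          have hcy := (hL y hyd).1 (hcmem ⟨y, hyd⟩)
          intro heq
          exact hcy.2 ⟨x, ⟨hadj.symm, hxn⟩, heq⟩
        · simp only [dif_neg hxd, dif_neg hyd]
          have hxn : x ∈ X n := by
            by_contra hxn
            exact hxd ⟨hx, hxn⟩
          have hyn : y ∈ X n := by
            by_contra hyn
            exact hyd ⟨hy, hyn⟩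
          exact hgood x hxn y hyn hadj
      · intro x hx
        have hxd : x ∉ X (n + 1) \ X n := fun hd => hd.2 hx
        simp only [dif_neg hxd]
    -- build the increasing sequence of colorings
    let P : ℕ → (V → C) → Prop := fun n h =>
      (∀ x ∈ X n, h x ∈ F x) ∧ ∀ x ∈ X n, ∀ y ∈ X n, G.Adj x y → h x ≠ h y
    have hP0 : P 0 h₀ := by
      constructor
      · intro x hx
        exact hh₀ x
      · intro x hx y hy hadj
        exfalso
        exact hx
    let g : (n : ℕ) → {h : V → C // P n h} := fun n =>
      Nat.rec ⟨h₀, hP0⟩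
        (fun n gn => ⟨(hext n gn.1 gn.2).choose, (hext n gn.1 gn.2).choose_spec.1⟩) n
    have hagree : ∀ n, ∀ x ∈ X n, (g (n + 1)).1 x = (g n).1 x := fun n =>
      (hext n (g n).1 (g n).2).choose_spec.2
    have hagree2 : ∀ m n : ℕ, n ≤ m → ∀ x ∈ X n, (g m).1 x = (g n).1 x := by
      intro m
      induction m with
      | zero =>
        intro n hn x hx
        rw [Nat.le_zero.1 hn]
      | succ m ih =>
        intro n hn x hx
        rcases Nat.lt_or_ge n (m + 1) with h | h
        · have hnm : n ≤ m := Nat.lt_succ_iff.1 h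
          rw [hagree m x (hXmono' n m hnm hx)]
          exact ih n hnm x hx
        · rw [Nat.le_antisymm hn h]
    refine ⟨fun v => (g (Nat.find (hXuniv v))).1 v, ?_, ?_⟩
    · intro x y hadj
      set n := max (Nat.find (hXuniv x)) (Nat.find (hXuniv y)) with hn
      have hx : x ∈ X n := hXmono' _ _ (le_max_left _ _) (Nat.find_spec (hXuniv x))
      have hy : y ∈ X n := hXmono' _ _ (le_max_right _ _) (Nat.find_spec (hXuniv y))
      have e1 : (g (Nat.find (hXuniv x))).1 x = (g n).1 x :=
        (hagree2 n _ (le_max_left _ _) x (Nat.find_spec (hXuniv x))).symm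
      have e2 : (g (Nat.find (hXuniv y))).1 y = (g n).1 y :=
        (hagree2 n _ (le_max_right _ _) y (Nat.find_spec (hXuniv y))).symm
      show (g (Nat.find (hXuniv x))).1 x ≠ (g (Nat.find (hXuniv y))).1 y
      rw [e1, e2]
      exact (g n).2.2 x hx y hy hadj
    · intro x
      exact (g (Nat.find (hXuniv x))).2.1 x (Nat.find_spec (hXuniv x))
  exact csInf_le' hcol
end

section
/- Reflection of the list-chromatic number at the continuum implies CH: if every graph of size ≤ 2^ω with uncountable list-chromatic number has a subgraph of size ω₁ with uncountable list-chromatic number, then 2^ω = ω₁. -/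
open Cardinal

namespace ReflListAux

open Set Function

/-- Pick, by strong recursion, an element of `L m` distinct from all
previously picked elements. -/
noncomputable def pick {C : Type} (L : ℕ → Set C) (hL : ∀ n, (L n).Infinite) : ℕ → C
  | m => (((hL m).diff (Set.finite_range (fun k : Fin m => pick L hL k))).nonempty).some

lemma pick_spec {C : Type} (L : ℕ → Set C) (hL : ∀ n, (L n).Infinite) (m : ℕ) :
    pick L hL m ∈ L m \ Set.range (fun k : Fin m => pick L hL k) := by
  rw [pick]
  exact Set.Nonempty.some_mem _

lemma pick_mem {C : Type} (L : ℕ → Set C) (hL : ∀ n, (L n).Infinite) (m : ℕ) :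
    pick L hL m ∈ L m := (pick_spec L hL m).1

lemma pick_ne {C : Type} (L : ℕ → Set C) (hL : ∀ n, (L n).Infinite) {a b : ℕ} (h : a < b) :
    pick L hL b ≠ pick L hL a := by
  intro he
  exact (pick_spec L hL b).2 ⟨⟨a, h⟩, he.symm⟩

lemma pick_inj {C : Type} (L : ℕ → Set C) (hL : ∀ n, (L n).Infinite) :
    Function.Injective (pick L hL) := by
  intro a b h
  rcases lt_trichotomy a b with hab | hab | hab
  · exact absurd h.symm (pick_ne L hL hab)
  · exact hab
  · exact absurd h (pick_ne L hL hab)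

/-- An equivalence between finite binary strings and `ℕ`. -/
noncomputable def lbe : List Bool ≃ ℕ :=
  @Denumerable.eqv (List Bool) (nonempty_denumerable (List Bool)).some

/-- The first `n` values of `x` as a binary string. -/
def branch (x : ℕ → Bool) (n : ℕ) : List Bool := List.ofFn (fun i : Fin n => x i)

lemma branch_inj {x x' : ℕ → Bool} {n n' : ℕ} (h : branch x n = branch x' n') :
    n = n' ∧ ∀ i < n, x i = x' i := by
  have hlen : n = n' := by
    have := congrArg List.length h
    simpa [branch] using this
  subst hlen
  refine ⟨rfl, fun i hi => ?_⟩
  have := List.ofFn_injective h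
  exact congrFun this ⟨i, hi⟩

variable {C : Type} (L : ℕ → Set C) (hL : ∀ n, (L n).Infinite)

/-- The "tree coloring": for each branch `x` of the binary tree, a choice of
colors `tcol L hL x n ∈ L n`, so that distinct branches share only finitely
many colors. -/
noncomputable def tcol (x : ℕ → Bool) (n : ℕ) : C :=
  pick (fun m => L (lbe.symm m).length) (fun _ => hL _) (lbe (branch x n))

lemma tcol_mem (x : ℕ → Bool) (n : ℕ) : tcol L hL x n ∈ L n := by
  have := pick_mem (fun m => L (lbe.symm m).length) (fun _ => hL _) (lbe (branch x n))
  simpa [tcol, branch, Equiv.symm_apply_apply] using this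

lemma tcol_branch_eq {x x' : ℕ → Bool} {n n' : ℕ}
    (h : tcol L hL x n = tcol L hL x' n') : branch x n = branch x' n' :=
  lbe.injective (pick_inj _ _ h)

lemma tcol_almost_disjoint {x x' : ℕ → Bool} (h : x ≠ x') :
    (Set.range (tcol L hL x) ∩ Set.range (tcol L hL x')).Finite := by
  obtain ⟨m, hm⟩ : ∃ m, x m ≠ x' m := by
    by_contra hc
    push_neg at hc
    exact h (funext hc)
  apply Set.Finite.subset ((Set.finite_Iic m).image (tcol L hL x))
  rintro c ⟨⟨n, rfl⟩, ⟨n', hn'⟩⟩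
  obtain ⟨rfl, hag⟩ := branch_inj (tcol_branch_eq L hL hn'.symm)
  have hnm : n ≤ m := by
    by_contra h'
    exact hm (hag m (lt_of_not_ge h'))
  exact ⟨n, hnm, rfl⟩

/-- The witness graph `K_{ω, 2^ω}`. -/
abbrev KG : SimpleGraph (ℕ ⊕ (ℕ → ℕ)) := completeBipartiteGraph ℕ (ℕ → ℕ)

lemma not_listColorable {κ : Cardinal} (hκ : κ ≤ ℵ₀) : ¬ ListColorable KG κ := by
  intro hlc
  obtain ⟨S, hS⟩ : ∃ S : Set ℕ, #S = κ :=
    Cardinal.le_mk_iff_exists_set.mp (by rwa [Cardinal.mk_nat])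
  set F : ℕ ⊕ (ℕ → ℕ) → Set (ℕ × ℕ) := fun v =>
    match v with
    | .inl n => (fun s => (n, s)) '' S
    | .inr g => (fun s => (s, g s)) '' S with hF
  have hcard : ∀ v, #(F v) = κ := by
    rintro (n | g)
    · rw [hF]
      rw [Cardinal.mk_image_eq (f := fun s => ((n, s) : ℕ × ℕ))
        (fun a b hab => by simpa using hab)]
      exact hS
    · rw [hF]
      rw [Cardinal.mk_image_eq (f := fun s => ((s, g s) : ℕ × ℕ))
        (fun a b hab => by simpa using (congrArg Prod.fst hab))]
      exact hS
  obtain ⟨f, hgood, hmem⟩ := hlc (ℕ × ℕ) F hcard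
  set hfun : ℕ → ℕ := fun n => (f (.inl n)).2 with hhfun
  have hfl : ∀ n, f (.inl n) = (n, hfun n) := by
    intro n
    obtain ⟨s, _, hs2⟩ := hmem (.inl n)
    simp only [hhfun, ← hs2]
  obtain ⟨s, _, hs2⟩ := hmem (.inr hfun)
  have heq : f (.inl s) = f (.inr hfun) := by
    rw [hfl s, ← hs2]
  have hadj : KG.Adj (.inl s) (.inr hfun) := by simp
  exact hgood hadj heq

lemma listColorable_succ : ListColorable KG (Order.succ (2 ^ ℵ₀)) := by
  intro C F hF
  have hpos : (0 : Cardinal) < Order.succ (2 ^ ℵ₀) :=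
    lt_of_le_of_lt zero_le (Order.lt_succ _)
  have hne : ∀ v, (F v).Nonempty := by
    intro v
    rw [← Set.nonempty_coe_sort, ← Cardinal.mk_ne_zero_iff, hF]
    exact hpos.ne'
  set r : (ℕ → ℕ) → C := fun g => (hne (.inr g)).some with hr
  have harrow : #(ℕ → ℕ) = 2 ^ ℵ₀ := by
    rw [← Cardinal.power_def, Cardinal.mk_nat, Cardinal.power_self_eq le_rfl]
  have hleft : ∀ n : ℕ, (F (.inl n) \ Set.range r).Nonempty := by
    intro n
    rw [Set.diff_nonempty]
    intro hsub
    have h1 : #(F (.inl n)) ≤ #(Set.range r) := Cardinal.mk_le_mk_of_subset hsub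
    have h2 : #(Set.range r) ≤ 2 ^ ℵ₀ := (Cardinal.mk_range_le).trans_eq harrow
    rw [hF] at h1
    exact absurd (h1.trans h2) (not_le.mpr (Order.lt_succ _))
  refine ⟨Sum.elim (fun n => (hleft n).some) r, ?_, ?_⟩
  · rintro (n | g) (n' | g') hadj heq <;>
      simp only [Sum.elim_inl, Sum.elim_inr] at heq <;> simp at hadj
    · exact ((hleft n).some_mem).2 ⟨g', heq.symm⟩
    · exact ((hleft n').some_mem).2 ⟨g, heq⟩
  · rintro (n | g)
    · exact ((hleft n).some_mem).1
    · exact (hne (.inr g)).some_mem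

lemma subgraph_listColorable (H : KG.Subgraph)
    (hsmall : #{g : ℕ → ℕ | Sum.inr g ∈ H.verts} < 2 ^ ℵ₀) (hvne : H.verts.Nonempty) :
    ListColorable H.coe ℵ₀ := by
  classical
  intro C F hF
  have hFinf : ∀ v, (F v).Infinite := by
    intro v
    rw [← Set.infinite_coe_iff, Cardinal.infinite_iff, hF]
  have hCinf : Infinite C := by
    have := (hFinf ⟨hvne.some, hvne.some_mem⟩).mono (Set.subset_univ _)
    exact Set.infinite_univ_iff.mp this
  set L : ℕ → Set C := fun n =>
    if h : Sum.inl n ∈ H.verts then F ⟨Sum.inl n, h⟩ else Set.univ with hLdef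
  have hL : ∀ n, (L n).Infinite := by
    intro n
    rw [hLdef]
    dsimp only
    split
    · exact hFinf _
    · exact Set.infinite_univ
  -- find a branch that does not cover the list of any right vertex of `H`
  have hxex : ∃ x : ℕ → Bool, ∀ (g : ℕ → ℕ) (hg : Sum.inr g ∈ H.verts),
      ¬ F ⟨Sum.inr g, hg⟩ ⊆ Set.range (tcol L hL x) := by
    by_contra hc
    push_neg at hc
    set A := {g : ℕ → ℕ | Sum.inr g ∈ H.verts} with hA
    set k : (ℕ → Bool) → ↥A := fun x => ⟨(hc x).choose, (hc x).choose_spec.choose⟩ with hk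
    have hkinj : Function.Injective k := by
      intro x x' hkk
      by_contra hxx
      have h1 : F ⟨Sum.inr (hc x).choose, (hc x).choose_spec.choose⟩ ⊆
          Set.range (tcol L hL x) := (hc x).choose_spec.choose_spec
      have h2 : F ⟨Sum.inr (hc x').choose, (hc x').choose_spec.choose⟩ ⊆
          Set.range (tcol L hL x') := (hc x').choose_spec.choose_spec
      have hgg : (hc x).choose = (hc x').choose := congrArg Subtype.val hkk
      have hveq : (⟨Sum.inr (hc x).choose, (hc x).choose_spec.choose⟩ : ↥H.verts)
          = ⟨Sum.inr (hc x').choose, (hc x').choose_spec.choose⟩ :=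
        Subtype.ext (congrArg Sum.inr hgg)
      rw [hveq] at h1
      have hfin := (tcol_almost_disjoint L hL hxx).subset (Set.subset_inter h1 h2)
      exact hFinf _ hfin
    have hle : (2 : Cardinal) ^ ℵ₀ ≤ #A := by
      have := Cardinal.mk_le_of_injective hkinj
      rwa [← Cardinal.power_def, Cardinal.mk_bool, Cardinal.mk_nat] at this
    exact absurd hsmall (not_lt.mpr hle)
  obtain ⟨x, hx⟩ := hxex
  have hright : ∀ (g : ℕ → ℕ) (hg : Sum.inr g ∈ H.verts),
      (F ⟨Sum.inr g, hg⟩ \ Set.range (tcol L hL x)).Nonempty := by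
    intro g hg
    rw [Set.diff_nonempty]
    exact hx g hg
  refine ⟨fun v => match v with
    | ⟨.inl n, _⟩ => tcol L hL x n
    | ⟨.inr g, hg⟩ => (hright g hg).some, ?_, ?_⟩
  · rintro ⟨u, hu⟩ ⟨w, hw⟩ hadj heq
    have hG : KG.Adj u w := H.adj_sub hadj
    rcases u with n | g <;> rcases w with n' | g'
    · simp at hG
    · have heq' : tcol L hL x n = (hright g' hw).some := heq
      exact ((hright g' hw).some_mem).2 ⟨n, heq'⟩
    · have heq' : (hright g hu).some = tcol L hL x n' := heq
      exact ((hright g hu).some_mem).2 ⟨n', heq'.symm⟩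
    · simp at hG
  · rintro ⟨u, hu⟩
    rcases u with n | g
    · show tcol L hL x n ∈ F ⟨Sum.inl n, hu⟩
      have h0 : tcol L hL x n ∈
          (if h : Sum.inl n ∈ H.verts then F ⟨Sum.inl n, h⟩ else Set.univ) :=
        tcol_mem L hL x n
      rwa [dif_pos hu] at h0
    · show (hright g hu).some ∈ F ⟨Sum.inr g, hu⟩
      exact ((hright g hu).some_mem).1

end ReflListAux

/-- `Refl(List, 2^ω)` implies CH: if every graph of size `≤ 2^ω` with
uncountable list-chromatic number has a subgraph of size `ω₁` with uncountable
list-chromatic number, then `2^ω = ω₁`. -/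
theorem continuum_eq_aleph_one_of_refl_list
    (hrefl : ∀ (V : Type) (G : SimpleGraph V), #V ≤ 2 ^ ℵ₀ →
      ℵ₀ < listChromatic G →
      ∃ H : G.Subgraph, #H.verts = Cardinal.aleph 1 ∧ ℵ₀ < listChromatic H.coe) :
    2 ^ ℵ₀ = Cardinal.aleph 1 := by
  have h0 : (2 : Cardinal.{0}) ^ (ℵ₀ : Cardinal.{0}) = Cardinal.aleph 1 := by
    by_contra hch
    have h1 : Cardinal.aleph 1 < 2 ^ ℵ₀ := by
      refine lt_of_le_of_ne ?_ (Ne.symm hch)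
      rw [Cardinal.two_power_aleph0]
      exact Cardinal.aleph_one_le_continuum
    have harrow : #(ℕ → ℕ) = 2 ^ ℵ₀ := by
      rw [← Cardinal.power_def, Cardinal.mk_nat, Cardinal.power_self_eq le_rfl]
    have hVcard : #(ℕ ⊕ (ℕ → ℕ)) ≤ 2 ^ ℵ₀ := by
      rw [Cardinal.mk_sum, Cardinal.mk_nat, harrow]
      simp only [Cardinal.lift_id]
      rw [Cardinal.add_eq_right (le_of_lt (Cardinal.cantor ℵ₀)) (le_of_lt (Cardinal.cantor ℵ₀))]
    have hlc : ℵ₀ < listChromatic ReflListAux.KG := by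
      have hmem : listChromatic ReflListAux.KG ∈ {κ : Cardinal | ListColorable ReflListAux.KG κ} :=
        csInf_mem ⟨_, ReflListAux.listColorable_succ⟩
      by_contra hle
      exact ReflListAux.not_listColorable (not_lt.mp hle) hmem
    obtain ⟨H, hHcard, hHlist⟩ := hrefl _ ReflListAux.KG hVcard hlc
    have hsmall : #{g : ℕ → ℕ | Sum.inr g ∈ H.verts} < 2 ^ ℵ₀ := by
      have hinj : Function.Injective
          (fun g : {g : ℕ → ℕ | Sum.inr g ∈ H.verts} => (⟨Sum.inr g.1, g.2⟩ : H.verts)) := by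
        intro a b hab
        have := congrArg Subtype.val hab
        simp only [Sum.inr.injEq] at this
        exact Subtype.ext this
      have h2 : #{g : ℕ → ℕ | Sum.inr g ∈ H.verts} ≤ Cardinal.aleph 1 :=
        hHcard ▸ Cardinal.mk_le_of_injective hinj
      exact lt_of_le_of_lt h2 h1
    have hvne : H.verts.Nonempty := by
      rw [← Set.nonempty_coe_sort, ← Cardinal.mk_ne_zero_iff, hHcard]
      exact (Cardinal.aleph_pos 1).ne'
    have hlow : listChromatic H.coe ≤ ℵ₀ :=
      csInf_le' (ReflListAux.subgraph_listColorable H hsmall hvne)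
    exact absurd hlow (not_le.mpr hHlist)
  have hlift := congrArg Cardinal.lift h0
  rwa [Cardinal.lift_power, Cardinal.lift_ofNat, Cardinal.lift_aleph0,
    Cardinal.lift_aleph, Ordinal.lift_one] at hlift
end
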